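/- arXiv:2104.01314 — 6 statements merged into one kernel-verified Lean document; each statement's English description precedes it below -/
import Mathlib

section
/- Let (x⋆, y⋆) be a saddle point of L, i.e. L(x⋆, y) ≤ L(x⋆, y⋆) ≤ L(x, y⋆) for all x ∈ dom f and y ∈ dom g*. Then for any β > 0, x̄ ∈ dom f, ẏ, ỹ ∈ dom g*, and any x̃ with −Kᵀỹ ∈ ∂f(x̃) having Fenchel equality f*(−Kᵀỹ) = ⟨−Kᵀỹ, x̃⟩ − f(x̃) (i.e. x̃ ∈ ∂f*(−Kᵀỹ)), one has D(ỹ) − D(y⋆) ≤ F_β(x̄, ẏ) − L(x̃, ỹ) + (β/2)‖y⋆ − ẏ‖². -/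
open RealInnerProductSpace Set

/-- If `(x⋆, y⋆)` is a saddle point of the Lagrangian
`L(x, y) = f(x) + ⟪Kx, y⟫ - g*(y)`, then for any `β > 0`, `x̄ ∈ dom f`,
`ẏ, ỹ ∈ dom g*`, and any `x̃ ∈ ∂f*(-Kᵀỹ)` (expressed via Fenchel's equality
`f*(-Kᵀỹ) = ⟪-Kᵀỹ, x̃⟫ - f(x̃)`), the dual objective `D(y) = f*(-Kᵀy) + g*(y)`
satisfies `D(ỹ) - D(y⋆) ≤ F_β(x̄, ẏ) - L(x̃, ỹ) + (β/2)‖y⋆ - ẏ‖²`. -/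
theorem stmt1 {p n : ℕ}
    (f : EuclideanSpace ℝ (Fin p) → ℝ) (Sf : Set (EuclideanSpace ℝ (Fin p)))
    (gstar : EuclideanSpace ℝ (Fin n) → ℝ) (Sg : Set (EuclideanSpace ℝ (Fin n)))
    (K : EuclideanSpace ℝ (Fin p) →L[ℝ] EuclideanSpace ℝ (Fin n))
    (hSf : Convex ℝ Sf) (hSg : Convex ℝ Sg)
    (hSfc : IsClosed Sf) (hSgc : IsClosed Sg)
    (hf : ConvexOn ℝ Sf f) (hgstar : ConvexOn ℝ Sg gstar)
    -- the Fenchel conjugate `f*` of `f`, defined on `Sfstar ⊆ dom f*`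
    (fstar : EuclideanSpace ℝ (Fin p) → ℝ) (Sfstar : Set (EuclideanSpace ℝ (Fin p)))
    (hfstar : ∀ w ∈ Sfstar, IsLUB {r : ℝ | ∃ x ∈ Sf, r = ⟪w, x⟫ - f x} (fstar w))
    -- a saddle point `(x⋆, y⋆)` of the Lagrangian
    (xs : EuclideanSpace ℝ (Fin p)) (ys : EuclideanSpace ℝ (Fin n))
    (hxs : xs ∈ Sf) (hys : ys ∈ Sg)
    (hsaddle : ∀ x ∈ Sf, ∀ y ∈ Sg,
      f xs + ⟪K xs, y⟫ - gstar y ≤ f xs + ⟪K xs, ys⟫ - gstar ys ∧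
      f xs + ⟪K xs, ys⟫ - gstar ys ≤ f x + ⟪K x, ys⟫ - gstar ys)
    (β : ℝ) (hβ : 0 < β)
    (ydot : EuclideanSpace ℝ (Fin n))
    (xbar : EuclideanSpace ℝ (Fin p)) (hxbar : xbar ∈ Sf)
    (ytil : EuclideanSpace ℝ (Fin n)) (hytil : ytil ∈ Sg)
    (xtil : EuclideanSpace ℝ (Fin p)) (hxtil : xtil ∈ Sf)
    (hmemtil : -((ContinuousLinearMap.adjoint K) ytil) ∈ Sfstar)
    (hmems : -((ContinuousLinearMap.adjoint K) ys) ∈ Sfstar)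
    -- Fenchel's equality, i.e. `x̃ ∈ ∂f*(-Kᵀỹ)`
    (hFenchel : fstar (-((ContinuousLinearMap.adjoint K) ytil)) =
      ⟪-((ContinuousLinearMap.adjoint K) ytil), xtil⟫ - f xtil)
    -- the value `g_β(Kx̄, ẏ)` of the smoothed function
    (gβ : ℝ)
    (hgβ : IsGreatest
      {r : ℝ | ∃ z ∈ Sg, r = ⟪K xbar, z⟫ - gstar z - β / 2 * ‖z - ydot‖ ^ 2} gβ) :
    (fstar (-((ContinuousLinearMap.adjoint K) ytil)) + gstar ytil) -
      (fstar (-((ContinuousLinearMap.adjoint K) ys)) + gstar ys) ≤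
      (f xbar + gβ) - (f xtil + ⟪K xtil, ytil⟫ - gstar ytil) +
        β / 2 * ‖ys - ydot‖ ^ 2 := by
  have hadj : ∀ (y : EuclideanSpace ℝ (Fin n)) (x : EuclideanSpace ℝ (Fin p)),
      ⟪-((ContinuousLinearMap.adjoint K) y), x⟫ = -⟪K x, y⟫ := by
    intro y x
    rw [inner_neg_left, ContinuousLinearMap.adjoint_inner_left, real_inner_comm]
  -- fstar(-Kᵀys) ≥ ⟪-Kᵀys, xs⟫ - f xs
  have h1 : ⟪-((ContinuousLinearMap.adjoint K) ys), xs⟫ - f xs ≤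
      fstar (-((ContinuousLinearMap.adjoint K) ys)) :=
    (hfstar _ hmems).1 ⟨xs, hxs, rfl⟩
  -- gβ ≥ value at ys
  have h2 : ⟪K xbar, ys⟫ - gstar ys - β / 2 * ‖ys - ydot‖ ^ 2 ≤ gβ :=
    hgβ.2 ⟨ys, hys, rfl⟩
  have h3 := (hsaddle xbar hxbar ys hys).2
  rw [hFenchel, hadj ytil xtil]
  have h1' := h1
  rw [hadj ys xs] at h1'
  linarith
end

section
/- Let f be μ_f-strongly convex (μ_f ≥ 0) and g* be μ_{g*}-strongly convex (μ_{g*} ≥ 0), and let (x^k, x̂^k, y^k, ỹ^k) be produced by the ASGARD+ iteration with parameters updated by β_k := β_{k−1}/(1+τ_k), L_k := ‖K‖²/(β_k + μ_{g*}), m_{k+1} := (L_{k+1}+μ_f)/(L_k+μ_f), η_{k+1} := (1−τ_k)τ_k/(τ_k² + m_{k+1}τ_{k+1}), where τ_k, τ_{k+1} ∈ (0,1] satisfy the two conditions: (L_{k−1}+μ_f)(1−τ_k)τ_{k−1}² + μ_f(1−τ_k)τ_k ≥ L_k τ_k² and (L_{k−1}+μ_f)(L_k+μ_f)τ_k τ_{k−1}²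 + (L_k+μ_f)² τ_k² ≥ (L_{k−1}+μ_f) L_k τ_{k−1}². Define the Lyapunov function V_k(x) := F_{β_{k−1}}(x^k, ẏ) − L(x, ỹ^k) + ((L_{k−1}+μ_f)τ_{k−1}²/2)‖(1/τ_{k−1})[x^k − (1−τ_{k−1})x^{k−1}] − x‖². Then for every x ∈ dom f, V_{k+1}(x) ≤ (1 − τ_k) V_k(x). -/
open RealInnerProductSpace Set Filter Topology


variable {E : Type*} [NormedAddCommGroup E] [InnerProductSpace ℝ E]

lemma comb_normsq (x y : E) {a b : ℝ} (hab : a + b = 1) :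
    ‖a • x + b • y‖ ^ 2 = a * ‖x‖ ^ 2 + b * ‖y‖ ^ 2 - a * b * ‖x - y‖ ^ 2 := by
  have hb : b = 1 - a := by linarith
  subst hb
  rw [← real_inner_self_eq_norm_sq, ← real_inner_self_eq_norm_sq,
    ← real_inner_self_eq_norm_sq, ← real_inner_self_eq_norm_sq]
  simp only [inner_add_left, inner_add_right, inner_sub_left, inner_sub_right,
    real_inner_smul_left, real_inner_smul_right]
  rw [real_inner_comm y x]
  ring

lemma comb_sub (x y v : E) {a b : ℝ} (hab : a + b = 1) :
    a • x + b • y - v = a • (x - v) + b • (y - v) := by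
  have h : a • (x - v) + b • (y - v) = a • x + b • y - (a + b) • v := by module
  rw [h, hab, one_smul]

lemma comb_normsq_shift (x y v : E) {a b : ℝ} (hab : a + b = 1) :
    ‖a • x + b • y - v‖ ^ 2 = a * ‖x - v‖ ^ 2 + b * ‖y - v‖ ^ 2 - a * b * ‖x - y‖ ^ 2 := by
  rw [comb_sub x y v hab, comb_normsq (x - v) (y - v) hab, sub_sub_sub_cancel_right]

lemma comb_ineq {S : Set E} {F : E → ℝ} {μ : ℝ}
    (hF : ConvexOn ℝ S (fun z => F z - μ / 2 * ‖z‖ ^ 2)) {x y : E}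
    (hx : x ∈ S) (hy : y ∈ S) {a b : ℝ} (ha : 0 ≤ a) (hb : 0 ≤ b) (hab : a + b = 1) :
    F (a • x + b • y) ≤ a * F x + b * F y - μ / 2 * (a * b) * ‖x - y‖ ^ 2 := by
  have h := hF.2 hx hy ha hb hab
  simp only [smul_eq_mul] at h
  rw [comb_normsq x y hab] at h
  nlinarith [h]

lemma strong_min {S : Set E} (hS : Convex ℝ S) {φ : E → ℝ} {σ : ℝ}
    (hcomb : ∀ x ∈ S, ∀ y ∈ S, ∀ a b : ℝ, 0 ≤ a → 0 ≤ b → a + b = 1 →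
      φ (a • x + b • y) ≤ a * φ x + b * φ y - σ / 2 * (a * b) * ‖x - y‖ ^ 2)
    {w : E} (hw : w ∈ S) (hmin : ∀ z ∈ S, φ w ≤ φ z) {z : E} (hz : z ∈ S) :
    φ w + σ / 2 * ‖z - w‖ ^ 2 ≤ φ z := by
  have key : ∀ t : ℝ, 0 < t → t < 1 → φ w + σ / 2 * (1 - t) * ‖w - z‖ ^ 2 ≤ φ z := by
    intro t ht0 ht1
    have h1 := hcomb w hw z hz (1 - t) t (by linarith) ht0.le (by ring)
    have hmem : (1 - t) • w + t • z ∈ S := hS hw hz (by linarith) ht0.le (by ring)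
    have h2 := hmin _ hmem
    nlinarith [h1, h2]
  have hlim : Tendsto (fun t : ℝ => φ w + σ / 2 * (1 - t) * ‖w - z‖ ^ 2) (𝓝[>] (0:ℝ))
      (𝓝 (φ w + σ / 2 * ‖w - z‖ ^ 2)) := by
    have hc : Continuous (fun t : ℝ => φ w + σ / 2 * (1 - t) * ‖w - z‖ ^ 2) := by continuity
    have h0 := hc.tendsto 0
    have he : φ w + σ / 2 * ((1:ℝ) - 0) * ‖w - z‖ ^ 2 = φ w + σ / 2 * ‖w - z‖ ^ 2 := by ring
    rw [he] at h0
    exact h0.mono_left nhdsWithin_le_nhds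
  have hev : ∀ᶠ t in 𝓝[>] (0:ℝ), φ w + σ / 2 * (1 - t) * ‖w - z‖ ^ 2 ≤ φ z := by
    filter_upwards [Ioo_mem_nhdsGT_of_mem (by constructor <;> norm_num : (0:ℝ) ∈ Ico (0:ℝ) 1)]
      with t ht
    exact key t ht.1 ht.2
  have hfin := le_of_tendsto hlim hev
  have : ‖z - w‖ = ‖w - z‖ := norm_sub_rev _ _
  rw [this]
  exact hfin

lemma quadVec (a b cc : ℝ) (ha : 0 ≤ a) (hb : b ^ 2 ≤ a * cc) (hc : 0 ≤ cc) (c d : E) :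
    0 ≤ a * ‖d‖ ^ 2 + 2 * b * ⟪c, d⟫ + cc * ‖c‖ ^ 2 := by
  rcases eq_or_lt_of_le ha with h | h
  · have hb0 : b = 0 := by nlinarith [sq_nonneg b]
    rw [← h, hb0]
    have := sq_nonneg ‖c‖
    nlinarith [mul_nonneg hc (sq_nonneg ‖c‖)]
  · have key : a * (a * ‖d‖ ^ 2 + 2 * b * ⟪c, d⟫ + cc * ‖c‖ ^ 2)
        = ‖a • d + b • c‖ ^ 2 + (a * cc - b ^ 2) * ‖c‖ ^ 2 := by
      rw [← real_inner_self_eq_norm_sq, ← real_inner_self_eq_norm_sq,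
        ← real_inner_self_eq_norm_sq]
      simp only [inner_add_left, inner_add_right, real_inner_smul_left, real_inner_smul_right]
      rw [real_inner_comm d c]
      ring
    nlinarith [key, sq_nonneg ‖a • d + b • c‖, mul_nonneg (sub_nonneg.mpr hb) (sq_nonneg ‖c‖)]

lemma young_smooth {σ L1 X : ℝ} (hσ : 0 < σ) (v w : E)
    (hv : ‖v‖ ^ 2 ≤ L1 * σ * X) :
    ⟪v, w⟫ - σ / 2 * ‖w‖ ^ 2 ≤ L1 / 2 * X := by
  have h1 := real_inner_le_norm v w
  nlinarith [sq_nonneg (‖v‖ - σ * ‖w‖), mul_pos hσ hσ]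

set_option maxHeartbeats 1000000 in
lemma momentum {τ0 τ1 μf L0 L1 ηv s : ℝ}
    (ht0 : 0 < τ0) (ht0' : τ0 ≤ 1) (ht1 : 0 < τ1) (ht1' : τ1 ≤ 1)
    (hμf : 0 ≤ μf) (hL0 : 0 ≤ L0) (hL1 : 0 ≤ L1)
    (hηv : ηv = (1 - τ0) * τ0 / (τ0 ^ 2 + ((L1 + μf) / (L0 + μf)) * τ1))
    (hs : s = τ1 * (1 - τ0) - ηv * τ0)
    (hc1 : (L0 + μf) * (1 - τ1) * τ0 ^ 2 + μf * (1 - τ1) * τ1 ≥ L1 * τ1 ^ 2)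
    (hc2 : (L0 + μf) * (L1 + μf) * τ1 * τ0 ^ 2 + (L1 + μf) ^ 2 * τ1 ^ 2 ≥ (L0 + μf) * L1 * τ0 ^ 2)
    (c d : E) :
    L1 * ‖s • c - τ1 • d‖ ^ 2 ≤
      μf * (τ1 * (1 - τ1)) * ‖d - (1 - τ0) • c‖ ^ 2 + (1 - τ1) * (L0 + μf) * τ0 ^ 2 * ‖d‖ ^ 2 := by
  have e1 : ‖s • c - τ1 • d‖ ^ 2 = s ^ 2 * ‖c‖ ^ 2 - 2 * (s * τ1) * ⟪c, d⟫ + τ1 ^ 2 * ‖d‖ ^ 2 := by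
    rw [← real_inner_self_eq_norm_sq, ← real_inner_self_eq_norm_sq, ← real_inner_self_eq_norm_sq]
    simp only [inner_sub_left, inner_sub_right, real_inner_smul_left, real_inner_smul_right]
    rw [real_inner_comm d c]
    ring
  have e2 : ‖d - (1 - τ0) • c‖ ^ 2
      = ‖d‖ ^ 2 - 2 * (1 - τ0) * ⟪c, d⟫ + (1 - τ0) ^ 2 * ‖c‖ ^ 2 := by
    rw [← real_inner_self_eq_norm_sq, ← real_inner_self_eq_norm_sq, ← real_inner_self_eq_norm_sq]
    simp only [inner_sub_left, inner_sub_right, real_inner_smul_left, real_inner_smul_right]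
    rw [real_inner_comm d c]
    ring
  rcases eq_or_lt_of_le (by positivity : (0:ℝ) ≤ L0 + μf) with hP | hP
  · -- degenerate case: L0 + μf = 0
    have hμf0 : μf = 0 := by linarith [hμf, hL0]
    have hL00 : L0 = 0 := by linarith [hμf, hL0]
    subst hμf0
    subst hL00
    have hL10 : L1 = 0 := by
      have hL1le : L1 ≤ 0 := by nlinarith [hc1, pow_pos ht1 2]
      linarith
    rw [hL10]
    nlinarith [sq_nonneg ‖d - (1 - τ0) • c‖, sq_nonneg ‖d‖, sq_nonneg τ0]
  · -- main case
    obtain ⟨A, hAdef⟩ : ∃ A : ℝ, A = (L0 + μf) * (1 - τ1) * τ0 ^ 2 + μf * (1 - τ1) * τ1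
        - L1 * τ1 ^ 2 := ⟨_, rfl⟩
    obtain ⟨S2, hS2def⟩ : ∃ S2 : ℝ, S2 = (L0 + μf) * (L1 + μf) * τ1 * τ0 ^ 2
        + (L1 + μf) ^ 2 * τ1 ^ 2 - (L0 + μf) * L1 * τ0 ^ 2 := ⟨_, rfl⟩
    obtain ⟨N, hNdef⟩ : ∃ N : ℝ, N = (L1 + μf) * τ1 ^ 2 - (L0 + μf) * τ0 ^ 2 * (1 - τ1) :=
      ⟨_, rfl⟩
    obtain ⟨Ee, hEdef⟩ : ∃ Ee : ℝ, Ee = (L0 + μf) * τ0 ^ 2 + (L1 + μf) * τ1 := ⟨_, rfl⟩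
    have hEpos : 0 < Ee := by
      have h1 : 0 < (L0 + μf) * τ0 ^ 2 := by positivity
      have h2 : 0 ≤ (L1 + μf) * τ1 := by positivity
      rw [hEdef]; linarith
    have hA : 0 ≤ A := by rw [hAdef]; linarith
    have hS2 : 0 ≤ S2 := by rw [hS2def]; linarith
    have hden : τ0 ^ 2 + (L1 + μf) / (L0 + μf) * τ1 = Ee / (L0 + μf) := by
      rw [hEdef]; field_simp
    have hsE : s * Ee = (1 - τ0) * N := by
      rw [hs, hηv, hden, hNdef, hEdef]
      have hEne : (L0 + μf) * τ0 ^ 2 + (L1 + μf) * τ1 ≠ 0 := by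
        rw [hEdef] at hEpos; exact ne_of_gt hEpos
      field_simp
      ring
    obtain ⟨B, hBdef⟩ : ∃ B : ℝ, B = L1 * s * τ1 - μf * τ1 * (1 - τ1) * (1 - τ0) := ⟨_, rfl⟩
    obtain ⟨Cc, hCdef⟩ : ∃ Cc : ℝ, Cc = μf * τ1 * (1 - τ1) * (1 - τ0) ^ 2 - L1 * s ^ 2 := ⟨_, rfl⟩
    obtain ⟨B', hB'def⟩ : ∃ B' : ℝ, B' = L1 * τ1 * N - μf * τ1 * (1 - τ1) * Ee := ⟨_, rfl⟩
    obtain ⟨C', hC'def⟩ : ∃ C' : ℝ, C' = μf * τ1 * (1 - τ1) * Ee ^ 2 - L1 * N ^ 2 := ⟨_, rfl⟩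
    have hBE : B * Ee = (1 - τ0) * B' := by
      rw [hBdef, hB'def]; linear_combination (L1 * τ1) * hsE
    have hCE : Cc * Ee ^ 2 = (1 - τ0) ^ 2 * C' := by
      rw [hCdef, hC'def]; linear_combination (-L1 * (s * Ee + (1 - τ0) * N)) * hsE
    have hC'id : C' = A * S2 + L1 * μf * τ1 * (L0 + μf) * τ0 ^ 2 := by
      rw [hC'def, hAdef, hS2def, hNdef, hEdef]; ring
    have hACB' : A * C' - B' ^ 2 = (L0 + μf) * τ0 ^ 2 * (1 - τ1) * (A * S2) := by
      rw [hC'def, hB'def, hAdef, hS2def, hNdef, hEdef]; ring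
    have hC'nn : 0 ≤ C' := by
      rw [hC'id]
      have := mul_nonneg hA hS2
      have h2 : 0 ≤ L1 * μf * τ1 * (L0 + μf) * τ0 ^ 2 := by positivity
      linarith
    have hE2 : 0 < Ee ^ 2 := by positivity
    have hCc : 0 ≤ Cc := by
      have h0 : 0 ≤ Cc * Ee ^ 2 := by rw [hCE]; exact mul_nonneg (sq_nonneg _) hC'nn
      exact (mul_nonneg_iff_of_pos_right hE2).mp h0
    have hB2 : B ^ 2 ≤ A * Cc := by
      have key : (A * Cc - B ^ 2) * Ee ^ 2
          = (1 - τ0) ^ 2 * ((L0 + μf) * τ0 ^ 2 * (1 - τ1) * (A * S2)) := by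
        have h1 : B ^ 2 * Ee ^ 2 = (1 - τ0) ^ 2 * B' ^ 2 := by
          linear_combination (B * Ee + (1 - τ0) * B') * hBE
        linear_combination A * hCE - h1 + (1 - τ0) ^ 2 * hACB'
      have hrhs : 0 ≤ (1 - τ0) ^ 2 * ((L0 + μf) * τ0 ^ 2 * (1 - τ1) * (A * S2)) := by
        have h1 : 0 ≤ (L0 + μf) * τ0 ^ 2 * (1 - τ1) := by
          have : 0 ≤ (1 - τ1) := by linarith
          positivity
        have h2 := mul_nonneg hA hS2
        positivity
      have h3 : 0 ≤ (A * Cc - B ^ 2) * Ee ^ 2 := key ▸ hrhs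
      have h4 := (mul_nonneg_iff_of_pos_right hE2).mp h3
      linarith
    have hq := quadVec A B Cc hA hB2 hCc c d
    rw [e1, e2]
    have hiden : μf * (τ1 * (1 - τ1)) * (‖d‖ ^ 2 - 2 * (1 - τ0) * ⟪c, d⟫ + (1 - τ0) ^ 2 * ‖c‖ ^ 2)
        + (1 - τ1) * (L0 + μf) * τ0 ^ 2 * ‖d‖ ^ 2
        - L1 * (s ^ 2 * ‖c‖ ^ 2 - 2 * (s * τ1) * ⟪c, d⟫ + τ1 ^ 2 * ‖d‖ ^ 2)
        = A * ‖d‖ ^ 2 + 2 * B * ⟪c, d⟫ + Cc * ‖c‖ ^ 2 := by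
      rw [hAdef, hBdef, hCdef]; ring
    linarith [hq, hiden]


set_option maxHeartbeats 2000000 in
/-- Lemma 3 of the paper: recursive estimate of the Lyapunov function.
For the ASGARD+ iterates with parameter updates
`β_k = β_{k-1}/(1+τ_k)`, `L_k = ‖K‖²/(β_k + μ_{g*})`,
`η_{k+1} = (1-τ_k)τ_k/(τ_k² + m_{k+1}τ_{k+1})` with `m_{k+1} = (L_{k+1}+μ_f)/(L_k+μ_f)`,
if the two conditions of (eq:param_cond) hold at index `k ≥ 1`, then the Lyapunov
function `V_k(x) = F_{β_{k-1}}(x^k, ẏ) - L(x, ỹ^k)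
  + ((L_{k-1}+μ_f)τ_{k-1}²/2)‖(1/τ_{k-1})[x^k - (1-τ_{k-1})x^{k-1}] - x‖²`
satisfies `V_{k+1}(x) ≤ (1 - τ_k) V_k(x)` for every `x ∈ dom f`. -/
theorem stmt3 {p n : ℕ}
    (f : EuclideanSpace ℝ (Fin p) → ℝ) (Sf : Set (EuclideanSpace ℝ (Fin p)))
    (gstar : EuclideanSpace ℝ (Fin n) → ℝ) (Sg : Set (EuclideanSpace ℝ (Fin n)))
    (K : EuclideanSpace ℝ (Fin p) →L[ℝ] EuclideanSpace ℝ (Fin n))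
    (hSf : Convex ℝ Sf) (hSg : Convex ℝ Sg)
    (hSfc : IsClosed Sf) (hSgc : IsClosed Sg)
    (μf μg : ℝ) (hμf : 0 ≤ μf) (hμg : 0 ≤ μg)
    (hf : ConvexOn ℝ Sf (fun x => f x - μf / 2 * ‖x‖ ^ 2))
    (hgstar : ConvexOn ℝ Sg (fun y => gstar y - μg / 2 * ‖y‖ ^ 2))
    (ydot : EuclideanSpace ℝ (Fin n))
    -- the smoothed values `g_β(u, ẏ)`
    (gb : ℝ → EuclideanSpace ℝ (Fin n) → ℝ)
    (hgb : ∀ b : ℝ, 0 < b → ∀ u,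
      IsGreatest {r : ℝ | ∃ z ∈ Sg, r = ⟪u, z⟫ - gstar z - b / 2 * ‖z - ydot‖ ^ 2} (gb b u))
    -- parameters
    (τ β L η : ℕ → ℝ)
    (hτ : ∀ j, τ j ∈ Ioc (0 : ℝ) 1)
    (hβ0 : 0 < β 0)
    (hβ : ∀ j, β (j + 1) = β j / (1 + τ (j + 1)))
    (hL : ∀ j, L j = ‖K‖ ^ 2 / (β j + μg))
    (hη : ∀ j, η (j + 1) =
      (1 - τ j) * τ j / ((τ j) ^ 2 + ((L (j + 1) + μf) / (L j + μf)) * τ (j + 1)))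
    -- the iterates
    (x xhat : ℕ → EuclideanSpace ℝ (Fin p)) (yseq ytil : ℕ → EuclideanSpace ℝ (Fin n))
    (hx0 : x 0 ∈ Sf) (hxhat0 : xhat 0 = x 0) (hytil0 : ytil 0 ∈ Sg)
    (hyup : ∀ j, yseq (j + 1) ∈ Sg ∧
      IsMaxOn (fun z => ⟪K (xhat j), z⟫ - gstar z - β j / 2 * ‖z - ydot‖ ^ 2) Sg
        (yseq (j + 1)))
    (hxup : ∀ j, x (j + 1) ∈ Sf ∧
      IsMinOn (fun z => f z + ⟪(ContinuousLinearMap.adjoint K) (yseq (j + 1)), z⟫ +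
        L j / 2 * ‖z - xhat j‖ ^ 2) Sf (x (j + 1)))
    (hxhat : ∀ j, xhat (j + 1) = x (j + 1) + η (j + 1) • (x (j + 1) - x j))
    (hytil : ∀ j, ytil (j + 1) = (1 - τ j) • ytil j + τ j • yseq (j + 1))
    -- the index `k ≥ 1` and the two conditions (eq:param_cond)
    (k : ℕ) (hk : 1 ≤ k)
    (hcond1 : (L (k - 1) + μf) * (1 - τ k) * (τ (k - 1)) ^ 2 + μf * (1 - τ k) * τ k ≥
      L k * (τ k) ^ 2)
    (hcond2 : (L (k - 1) + μf) * (L k + μf) * τ k * (τ (k - 1)) ^ 2 +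
      (L k + μf) ^ 2 * (τ k) ^ 2 ≥ (L (k - 1) + μf) * L k * (τ (k - 1)) ^ 2) :
    ∀ xx ∈ Sf,
      f (x (k + 1)) + gb (β k) (K (x (k + 1)))
        - (f xx + ⟪K xx, ytil (k + 1)⟫ - gstar (ytil (k + 1)))
        + (L k + μf) * (τ k) ^ 2 / 2 *
          ‖(1 / τ k) • (x (k + 1) - (1 - τ k) • x k) - xx‖ ^ 2
      ≤ (1 - τ k) *
        (f (x k) + gb (β (k - 1)) (K (x k))
          - (f xx + ⟪K xx, ytil k⟫ - gstar (ytil k))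
          + (L (k - 1) + μf) * (τ (k - 1)) ^ 2 / 2 *
            ‖(1 / τ (k - 1)) • (x k - (1 - τ (k - 1)) • x (k - 1)) - xx‖ ^ 2) := by
  intro xx hxx
  -- basic positivity facts
  have hβpos : ∀ j, 0 < β j := by
    intro j
    induction j with
    | zero => exact hβ0
    | succ m ih =>
      rw [hβ m]
      have h1 := (hτ (m + 1)).1
      positivity
  have hβμ : ∀ j, 0 < β j + μg := fun j => by linarith [hβpos j]
  have hLnn : ∀ j, 0 ≤ L j := by
    intro j
    rw [hL j]
    exact div_nonneg (sq_nonneg _) (hβμ j).le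
  have hLK : ∀ j, L j * (β j + μg) = ‖K‖ ^ 2 := by
    intro j
    rw [hL j, div_mul_cancel₀]
    exact ne_of_gt (hβμ j)
  have hytmem : ∀ j, ytil j ∈ Sg := by
    intro j
    induction j with
    | zero => exact hytil0
    | succ m ih =>
      rw [hytil m]
      exact hSg ih (hyup m).1 (by linarith [(hτ m).2]) (hτ m).1.le (by ring)
  have hk1 : k - 1 + 1 = k := Nat.succ_pred_eq_of_pos hk
  have hτ0 := hτ (k - 1)
  have hτ1 := hτ k
  have ht0ne : τ (k - 1) ≠ 0 := ne_of_gt hτ0.1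
  have ht1ne : τ k ≠ 0 := ne_of_gt hτ1.1
  have hxkSf : x k ∈ Sf := by have := (hxup (k - 1)).1; rwa [hk1] at this
  have hxpSf : x (k + 1) ∈ Sf := (hxup k).1
  have hypSg : yseq (k + 1) ∈ Sg := (hyup k).1
  have hβk : β k * (1 + τ k) = β (k - 1) := by
    have h := hβ (k - 1)
    rw [hk1] at h
    rw [h]
    have : (1 : ℝ) + τ k ≠ 0 := by linarith [hτ1.1]
    field_simp
  have hxhk : xhat k = x k + η k • (x k - x (k - 1)) := by
    have h := hxhat (k - 1); rwa [hk1] at h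
  have hηk : η k = (1 - τ (k - 1)) * τ (k - 1) /
      ((τ (k - 1)) ^ 2 + ((L k + μf) / (L (k - 1) + μf)) * τ k) := by
    have h := hη (k - 1); rwa [hk1] at h
  -- the combination point
  obtain ⟨zc, hzc⟩ : ∃ zc, zc = (1 - τ k) • x k + τ k • xx := ⟨_, rfl⟩
  have hzcSf : zc ∈ Sf := by
    rw [hzc]
    exact hSf hxkSf hxx (by linarith [hτ1.2]) hτ1.1.le (by ring)
  obtain ⟨c, hc⟩ : ∃ c, c = (1 / τ (k - 1)) • (x k - x (k - 1)) := ⟨_, rfl⟩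
  obtain ⟨d, hd⟩ : ∃ d, d = (1 / τ (k - 1)) • (x k - (1 - τ (k - 1)) • x (k - 1)) - xx :=
    ⟨_, rfl⟩
  -- dual-side strong concavity
  have hcombg : ∀ u ∈ Sg, ∀ v ∈ Sg, ∀ a b : ℝ, 0 ≤ a → 0 ≤ b → a + b = 1 →
      (fun y => gstar y + β k / 2 * ‖y - ydot‖ ^ 2 - ⟪K (xhat k), y⟫) (a • u + b • v) ≤
        a * (fun y => gstar y + β k / 2 * ‖y - ydot‖ ^ 2 - ⟪K (xhat k), y⟫) u
        + b * (fun y => gstar y + β k / 2 * ‖y - ydot‖ ^ 2 - ⟪K (xhat k), y⟫) v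
        - (β k + μg) / 2 * (a * b) * ‖u - v‖ ^ 2 := by
    intro u hu v hv a b ha hb hab
    have h1 := comb_ineq hgstar hu hv ha hb hab
    have h2 : ⟪K (xhat k), a • u + b • v⟫
        = a * ⟪K (xhat k), u⟫ + b * ⟪K (xhat k), v⟫ := by
      rw [inner_add_right, real_inner_smul_right, real_inner_smul_right]
    have h3 : β k / 2 * ‖a • u + b • v - ydot‖ ^ 2
        = β k / 2 * (a * ‖u - ydot‖ ^ 2 + b * ‖v - ydot‖ ^ 2 - a * b * ‖u - v‖ ^ 2) := by
      rw [comb_normsq_shift u v ydot hab]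
    simp only []
    linarith [h1, h2, h3]
  have hming : ∀ z ∈ Sg,
      (fun y => gstar y + β k / 2 * ‖y - ydot‖ ^ 2 - ⟪K (xhat k), y⟫) (yseq (k + 1)) ≤
      (fun y => gstar y + β k / 2 * ‖y - ydot‖ ^ 2 - ⟪K (xhat k), y⟫) z := by
    intro z hz
    have h := (isMaxOn_iff.mp (hyup k).2) z hz
    simp only [] at h ⊢
    linarith [h]
  -- the key upper bound on the new smoothed value
  have h65 : gb (β k) (K (x (k + 1))) ≤ ⟪K (x (k + 1)), yseq (k + 1)⟫ - gstar (yseq (k + 1))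
      - β k / 2 * ‖yseq (k + 1) - ydot‖ ^ 2 + L k / 2 * ‖x (k + 1) - xhat k‖ ^ 2 := by
    obtain ⟨y', hy'S, hy'⟩ := (hgb (β k) (hβpos k) (K (x (k + 1)))).1
    have hsm := strong_min (φ := fun y => gstar y + β k / 2 * ‖y - ydot‖ ^ 2
      - ⟪K (xhat k), y⟫) hSg hcombg hypSg hming hy'S
    have hKb : ‖K (x (k + 1)) - K (xhat k)‖ ^ 2
        ≤ L k * (β k + μg) * ‖x (k + 1) - xhat k‖ ^ 2 := by
      have e : K (x (k + 1)) - K (xhat k) = K (x (k + 1) - xhat k) := (map_sub K _ _).symm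
      rw [e]
      have h := K.le_opNorm (x (k + 1) - xhat k)
      calc ‖K (x (k + 1) - xhat k)‖ ^ 2 ≤ (‖K‖ * ‖x (k + 1) - xhat k‖) ^ 2 :=
            pow_le_pow_left₀ (norm_nonneg _) h 2
        _ = L k * (β k + μg) * ‖x (k + 1) - xhat k‖ ^ 2 := by rw [mul_pow, ← hLK k]
    have hyoung := young_smooth (hβμ k) (K (x (k + 1)) - K (xhat k)) (y' - yseq (k + 1)) hKb
    have e1 : ⟪K (x (k + 1)), y'⟫
        = ⟪K (x (k + 1)) - K (xhat k), y' - yseq (k + 1)⟫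
          + ⟪K (x (k + 1)) - K (xhat k), yseq (k + 1)⟫ + ⟪K (xhat k), y'⟫ := by
      simp only [inner_sub_left, inner_sub_right]
      ring
    have e2 : ⟪K (x (k + 1)) - K (xhat k), yseq (k + 1)⟫
        = ⟪K (x (k + 1)), yseq (k + 1)⟫ - ⟪K (xhat k), yseq (k + 1)⟫ := by
      rw [inner_sub_left]
    linarith [hy', hsm, hyoung, e1, e2]
  -- primal strong convexity of the x-update objective
  have hcombx : ∀ u ∈ Sf, ∀ v ∈ Sf, ∀ a b : ℝ, 0 ≤ a → 0 ≤ b → a + b = 1 →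
      (fun z => f z + ⟪(ContinuousLinearMap.adjoint K) (yseq (k + 1)), z⟫ +
        L k / 2 * ‖z - xhat k‖ ^ 2) (a • u + b • v) ≤
        a * (fun z => f z + ⟪(ContinuousLinearMap.adjoint K) (yseq (k + 1)), z⟫ +
          L k / 2 * ‖z - xhat k‖ ^ 2) u
        + b * (fun z => f z + ⟪(ContinuousLinearMap.adjoint K) (yseq (k + 1)), z⟫ +
          L k / 2 * ‖z - xhat k‖ ^ 2) v
        - (L k + μf) / 2 * (a * b) * ‖u - v‖ ^ 2 := by
    intro u hu v hv a b ha hb hab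
    have h1 := comb_ineq hf hu hv ha hb hab
    have h2 : ⟪(ContinuousLinearMap.adjoint K) (yseq (k + 1)), a • u + b • v⟫
        = a * ⟪(ContinuousLinearMap.adjoint K) (yseq (k + 1)), u⟫
          + b * ⟪(ContinuousLinearMap.adjoint K) (yseq (k + 1)), v⟫ := by
      rw [inner_add_right, real_inner_smul_right, real_inner_smul_right]
    have h3 : L k / 2 * ‖a • u + b • v - xhat k‖ ^ 2
        = L k / 2 * (a * ‖u - xhat k‖ ^ 2 + b * ‖v - xhat k‖ ^ 2 - a * b * ‖u - v‖ ^ 2) := by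
      rw [comb_normsq_shift u v (xhat k) hab]
    simp only []
    linarith [h1, h2, h3]
  have hminx : ∀ z ∈ Sf,
      (fun z => f z + ⟪(ContinuousLinearMap.adjoint K) (yseq (k + 1)), z⟫ +
        L k / 2 * ‖z - xhat k‖ ^ 2) (x (k + 1)) ≤
      (fun z => f z + ⟪(ContinuousLinearMap.adjoint K) (yseq (k + 1)), z⟫ +
        L k / 2 * ‖z - xhat k‖ ^ 2) z :=
    fun z hz => (isMinOn_iff.mp (hxup k).2) z hz
  have h7z := strong_min (φ := fun z => f z +
      ⟪(ContinuousLinearMap.adjoint K) (yseq (k + 1)), z⟫ + L k / 2 * ‖z - xhat k‖ ^ 2)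
      hSf hcombx hxpSf hminx hzcSf
  have hadj : ∀ w : EuclideanSpace ℝ (Fin p),
      ⟪(ContinuousLinearMap.adjoint K) (yseq (k + 1)), w⟫ = ⟪K w, yseq (k + 1)⟫ := by
    intro w
    rw [ContinuousLinearMap.adjoint_inner_left]
    exact real_inner_comm _ _
  rw [hadj, hadj] at h7z
  -- expansions of bilinear terms
  have hKz : ⟪K zc, yseq (k + 1)⟫
      = (1 - τ k) * ⟪K (x k), yseq (k + 1)⟫ + τ k * ⟪K xx, yseq (k + 1)⟫ := by
    rw [hzc, map_add, map_smul, map_smul, inner_add_left, real_inner_smul_left,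
      real_inner_smul_left]
  have hKyt : ⟪K xx, ytil (k + 1)⟫
      = (1 - τ k) * ⟪K xx, ytil k⟫ + τ k * ⟪K xx, yseq (k + 1)⟫ := by
    rw [hytil k, inner_add_right, real_inner_smul_right, real_inner_smul_right]
  -- convexity steps
  have h8 : f zc ≤ (1 - τ k) * f (x k) + τ k * f xx
      - μf / 2 * ((1 - τ k) * τ k) * ‖x k - xx‖ ^ 2 := by
    have h := comb_ineq (a := 1 - τ k) (b := τ k) hf hxkSf hxx (by linarith [hτ1.2]) hτ1.1.le (by ring)
    rw [← hzc] at h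
    exact h
  have h9 : gstar (ytil (k + 1)) ≤ (1 - τ k) * gstar (ytil k) + τ k * gstar (yseq (k + 1)) := by
    have h := comb_ineq (a := 1 - τ k) (b := τ k) hgstar (hytmem k) hypSg (by linarith [hτ1.2]) hτ1.1.le (by ring)
    rw [← hytil k] at h
    have hnn : 0 ≤ μg / 2 * ((1 - τ k) * τ k) * ‖ytil k - yseq (k + 1)‖ ^ 2 := by
      have h1 : (0:ℝ) ≤ 1 - τ k := by linarith [hτ1.2]
      have h2 : (0:ℝ) ≤ (1 - τ k) * τ k := mul_nonneg h1 hτ1.1.le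
      positivity
    linarith [h, hnn]
  -- lower bound on the old smoothed value
  have h10 : ⟪K (x k), yseq (k + 1)⟫ - gstar (yseq (k + 1))
      - β (k - 1) / 2 * ‖yseq (k + 1) - ydot‖ ^ 2 ≤ gb (β (k - 1)) (K (x k)) :=
    (hgb (β (k - 1)) (hβpos (k - 1)) (K (x k))).2 ⟨yseq (k + 1), hypSg, rfl⟩
  have h10' := mul_le_mul_of_nonneg_left h10 (show (0:ℝ) ≤ 1 - τ k by linarith [hτ1.2])
  -- the β-term bookkeeping
  have heq : (1 - τ k) * β (k - 1) = β k - β k * (τ k) ^ 2 := by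
    linear_combination (τ k - 1) * hβk
  have hbb : (1 - τ k) * (β (k - 1) / 2) * ‖yseq (k + 1) - ydot‖ ^ 2
      - β k / 2 * ‖yseq (k + 1) - ydot‖ ^ 2 ≤ 0 := by
    have heq2 : (1 - τ k) * β (k - 1) * ‖yseq (k + 1) - ydot‖ ^ 2
        = (β k - β k * (τ k) ^ 2) * ‖yseq (k + 1) - ydot‖ ^ 2 := by rw [heq]
    have hnn : 0 ≤ β k * (τ k) ^ 2 * ‖yseq (k + 1) - ydot‖ ^ 2 := by
      have := (hβpos k).le
      positivity
    nlinarith [heq2, hnn]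
  -- momentum step
  have hvec1 : zc - xhat k = (τ k * (1 - τ (k - 1)) - η k * τ (k - 1)) • c - τ k • d := by
    rw [hzc, hxhk, hc, hd]
    match_scalars <;> field_simp <;> ring
  have hvec2 : x k - xx = d - (1 - τ (k - 1)) • c := by
    rw [hc, hd]
    match_scalars <;> field_simp <;> ring
  have h12 := momentum hτ0.1 hτ0.2 hτ1.1 hτ1.2 hμf (hLnn (k - 1)) (hLnn k) hηk rfl
    hcond1 hcond2 c d
  rw [← hvec1, ← hvec2] at h12
  -- the Lyapunov quadratic cancellation
  have hvc : zc - x (k + 1)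
      = (-(τ k)) • ((1 / τ k) • (x (k + 1) - (1 - τ k) • x k) - xx) := by
    rw [hzc]
    match_scalars <;> field_simp <;> ring
  have hcancel : (L k + μf) * (τ k) ^ 2 / 2 *
      ‖(1 / τ k) • (x (k + 1) - (1 - τ k) • x k) - xx‖ ^ 2
      = (L k + μf) / 2 * ‖zc - x (k + 1)‖ ^ 2 := by
    rw [hvc, norm_smul, mul_pow, Real.norm_eq_abs, sq_abs]
    ring
  -- put everything together
  rw [← hd]
  linarith [h65, h7z, hKz, hKyt, h8, h9, h10', hbb, h12, hcancel]
end

section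
/- Assume f and g* are merely convex (μ_f = μ_{g*} = 0) and a saddle point of L exists. Run ASGARD+ with τ₀ := 1, and for k ≥ 0 let τ_{k+1} be the unique root in (0,1) of τ³ + τ² + τ_k² τ − τ_k² = 0, β_{k+1} := β_k/(1+τ_{k+1}), L_k := ‖K‖²/β_k, m_{k+1} := L_{k+1}/L_k, η_{k+1} := (1−τ_k)τ_k/(τ_k² + m_{k+1}τ_{k+1}). Then for all k ≥ 1, the gap function satisfies G_{X×Y}(x^k, ỹ^k) ≤ (‖K‖²/(2β₀k)) · sup_{x∈X}‖x⁰ − x‖² + (β₀/(k+1)) · sup_{y∈Y}‖y − ẏ‖². -/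
open RealInnerProductSpace Set

section asgardAux

variable {E : Type*} [NormedAddCommGroup E] [InnerProductSpace ℝ E]

lemma comb_norm (u v : E) (t : ℝ) :
    ‖(1-t)•u + t•v‖^2 = (1-t)*‖u‖^2 + t*‖v‖^2 - t*(1-t)*‖v-u‖^2 := by
  have h1 : ‖(1-t)•u + t•v‖^2 = ⟪(1-t)•u + t•v, (1-t)•u + t•v⟫ :=
    (real_inner_self_eq_norm_sq _).symm
  have h2 : ‖v - u‖^2 = ⟪v - u, v - u⟫ := (real_inner_self_eq_norm_sq _).symm
  have h3 : ‖u‖^2 = ⟪u, u⟫ := (real_inner_self_eq_norm_sq _).symm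
  have h4 : ‖v‖^2 = ⟪v, v⟫ := (real_inner_self_eq_norm_sq _).symm
  rw [h1, h2, h3, h4]
  simp only [inner_add_add_self, inner_sub_sub_self, real_inner_smul_left,
    real_inner_smul_right, real_inner_comm u v]
  ring

lemma prox_min {S : Set E} (hS : Convex ℝ S) {f : E → ℝ} (hf : ConvexOn ℝ S f)
    (a w : E) {L : ℝ} (hL : 0 ≤ L) {m : E} (hm : m ∈ S)
    (hmin : ∀ v ∈ S, f m + ⟪a, m⟫ + L/2*‖m - w‖^2 ≤ f v + ⟪a, v⟫ + L/2*‖v - w‖^2) :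
    ∀ v ∈ S, f m + ⟪a, m⟫ + L/2*‖m - w‖^2 + L/2*‖v - m‖^2 ≤
      f v + ⟪a, v⟫ + L/2*‖v - w‖^2 := by
  intro v hv
  have key : ∀ t : ℝ, 0 < t → t ≤ 1 →
      f m + ⟪a, m⟫ + L/2*‖m - w‖^2 + L/2*‖v - m‖^2 ≤
        f v + ⟪a, v⟫ + L/2*‖v - w‖^2 + t * (L/2*‖v - m‖^2) := by
    intro t ht ht1
    have hmem : (1-t)•m + t•v ∈ S := hS hm hv (by linarith) ht.le (by ring)
    have hcf : f ((1-t)•m + t•v) ≤ (1-t) * f m + t * f v :=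
      hf.2 hm hv (by linarith) ht.le (by ring)
    have hinner : ⟪a, (1-t)•m + t•v⟫ = (1-t)*⟪a, m⟫ + t*⟪a, v⟫ := by
      rw [inner_add_right, real_inner_smul_right, real_inner_smul_right]
    have hnorm : ‖((1-t)•m + t•v) - w‖^2
        = (1-t)*‖m-w‖^2 + t*‖v-w‖^2 - t*(1-t)*‖v-m‖^2 := by
      have : ((1-t)•m + t•v) - w = (1-t)•(m-w) + t•(v-w) := by
        rw [smul_sub, smul_sub]
        have : (1-t)•m + t•v - w = (1-t)•m + t•v - ((1-t)•w + t•w) := by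
          rw [← add_smul]; norm_num
        rw [this]; abel
      rw [this, comb_norm]
      congr 2
      abel
    have hle := hmin _ hmem
    rw [hinner, hnorm] at hle
    have H : t * (f m + ⟪a, m⟫ + L/2*‖m - w‖^2 + (1-t) * (L/2*‖v - m‖^2)) ≤
        t * (f v + ⟪a, v⟫ + L/2*‖v - w‖^2) := by nlinarith [hcf]
    have := le_of_mul_le_mul_left H ht
    nlinarith [this]
  apply le_of_forall_pos_le_add
  intro ε hε
  set C := L/2*‖v - m‖^2 with hC
  have hC0 : 0 ≤ C := by positivity
  have ht0 : 0 < min 1 (ε/(C+1)) := lt_min one_pos (by positivity)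
  have := key _ ht0 (min_le_left _ _)
  have h2 : min 1 (ε/(C+1)) * C ≤ ε := by
    calc min 1 (ε/(C+1)) * C ≤ (ε/(C+1)) * C :=
      mul_le_mul_of_nonneg_right (min_le_right _ _) hC0
    _ ≤ ε := by rw [div_mul_eq_mul_div, div_le_iff₀ (by positivity)]; nlinarith
  linarith

lemma absorb {F : Type*} [NormedAddCommGroup F] [InnerProductSpace ℝ F]
    (K : E →L[ℝ] F) (d : E) (w : F) {β : ℝ} (hβ : 0 < β) :
    ⟪K d, w⟫ ≤ (‖K‖^2/β)/2*‖d‖^2 + β/2*‖w‖^2 := by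
  have h1 : ⟪K d, w⟫ ≤ ‖K d‖*‖w‖ := real_inner_le_norm _ _
  have h2 : ‖K d‖*‖w‖ ≤ (‖K‖*‖d‖)*‖w‖ :=
    mul_le_mul_of_nonneg_right (K.le_opNorm d) (norm_nonneg _)
  have h3 : (‖K‖*‖d‖)*‖w‖ ≤ (‖K‖^2/β)/2*‖d‖^2 + β/2*‖w‖^2 := by
    rw [← sub_nonneg]
    have key : (‖K‖^2/β)/2*‖d‖^2 + β/2*‖w‖^2 - (‖K‖*‖d‖)*‖w‖
        = (‖K‖*‖d‖ - β*‖w‖)^2/(2*β) := by field_simp; ring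
    rw [key]; positivity
  linarith

/-- auxiliary sequence `z` of ASGARD+ -/
noncomputable def zaux (x xhat : ℕ → E) (τ : ℕ → ℝ) : ℕ → E
  | 0 => x 0
  | (k+1) => zaux x xhat τ k + (τ k)⁻¹ • (x (k+1) - xhat k)

end asgardAux


set_option maxHeartbeats 4000000 in
/-- Theorem 1(a): gap-function bound of ASGARD+ in the general convex
case `μ_f = μ_{g*} = 0`. For all `k ≥ 1`,
`G_{X×Y}(x^k, ỹ^k) ≤ (‖K‖²/(2β₀k)) sup_{x∈X}‖x⁰-x‖² + (β₀/(k+1)) sup_{y∈Y}‖y-ẏ‖²`,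
stated equivalently as the bound on `L(x^k, ỹ) - L(x̃, ỹ^k)` for all `x̃ ∈ X, ỹ ∈ Y`. -/
theorem stmt4 {p n : ℕ}
    (f : EuclideanSpace ℝ (Fin p) → ℝ) (Sf : Set (EuclideanSpace ℝ (Fin p)))
    (gstar : EuclideanSpace ℝ (Fin n) → ℝ) (Sg : Set (EuclideanSpace ℝ (Fin n)))
    (K : EuclideanSpace ℝ (Fin p) →L[ℝ] EuclideanSpace ℝ (Fin n))
    (hSf : Convex ℝ Sf) (hSg : Convex ℝ Sg)
    (hSfc : IsClosed Sf) (hSgc : IsClosed Sg)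
    (hf : ConvexOn ℝ Sf f) (hgstar : ConvexOn ℝ Sg gstar)
    -- a saddle point of the Lagrangian exists
    (xs : EuclideanSpace ℝ (Fin p)) (ys : EuclideanSpace ℝ (Fin n))
    (hxs : xs ∈ Sf) (hys : ys ∈ Sg)
    (hsaddle : ∀ x ∈ Sf, ∀ y ∈ Sg,
      f xs + ⟪K xs, y⟫ - gstar y ≤ f xs + ⟪K xs, ys⟫ - gstar ys ∧
      f xs + ⟪K xs, ys⟫ - gstar ys ≤ f x + ⟪K x, ys⟫ - gstar ys)
    -- the sets defining the gap function, containing the saddle point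
    (X : Set (EuclideanSpace ℝ (Fin p))) (Y : Set (EuclideanSpace ℝ (Fin n)))
    (hXSf : X ⊆ Sf) (hYSg : Y ⊆ Sg)
    (hXc : Convex ℝ X) (hYc : Convex ℝ Y) (hXcl : IsClosed X) (hYcl : IsClosed Y)
    (hxsX : xs ∈ X) (hysY : ys ∈ Y)
    -- parameters of ASGARD+
    (τ β L η : ℕ → ℝ)
    (hτ0 : τ 0 = 1)
    (hτ : ∀ k, τ (k + 1) ∈ Ioo (0 : ℝ) 1 ∧
      (τ (k + 1)) ^ 3 + (τ (k + 1)) ^ 2 + (τ k) ^ 2 * τ (k + 1) - (τ k) ^ 2 = 0)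
    (hβ0 : 0 < β 0)
    (hβ : ∀ k, β (k + 1) = β k / (1 + τ (k + 1)))
    (hL : ∀ k, L k = ‖K‖ ^ 2 / β k)
    (hη : ∀ k, η (k + 1) = (1 - τ k) * τ k / ((τ k) ^ 2 + (L (k + 1) / L k) * τ (k + 1)))
    -- the iterates of ASGARD+
    (ydot : EuclideanSpace ℝ (Fin n))
    (x xhat : ℕ → EuclideanSpace ℝ (Fin p)) (yseq ytil : ℕ → EuclideanSpace ℝ (Fin n))
    (hx0 : x 0 ∈ Sf) (hxhat0 : xhat 0 = x 0) (hytil0 : ytil 0 ∈ Sg)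
    (hyup : ∀ k, yseq (k + 1) ∈ Sg ∧
      IsMaxOn (fun z => ⟪K (xhat k), z⟫ - gstar z - β k / 2 * ‖z - ydot‖ ^ 2) Sg
        (yseq (k + 1)))
    (hxup : ∀ k, x (k + 1) ∈ Sf ∧
      IsMinOn (fun z => f z + ⟪(ContinuousLinearMap.adjoint K) (yseq (k + 1)), z⟫ +
        L k / 2 * ‖z - xhat k‖ ^ 2) Sf (x (k + 1)))
    (hxhat : ∀ k, xhat (k + 1) = x (k + 1) + η (k + 1) • (x (k + 1) - x k))
    (hytil : ∀ k, ytil (k + 1) = (1 - τ k) • ytil k + τ k • yseq (k + 1))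
    -- the suprema appearing in the bound are finite
    (hXb : BddAbove ((fun x' => ‖x 0 - x'‖ ^ 2) '' X))
    (hYb : BddAbove ((fun y' => ‖y' - ydot‖ ^ 2) '' Y)) :
    ∀ k : ℕ, 1 ≤ k → ∀ xt ∈ X, ∀ yt ∈ Y,
      (f (x k) + ⟪K (x k), yt⟫ - gstar yt) - (f xt + ⟪K xt, ytil k⟫ - gstar (ytil k)) ≤
        ‖K‖ ^ 2 / (2 * β 0 * (k : ℝ)) * sSup ((fun x' => ‖x 0 - x'‖ ^ 2) '' X) +
        β 0 / ((k : ℝ) + 1) * sSup ((fun y' => ‖y' - ydot‖ ^ 2) '' Y) := by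
  -- ## scalar sequence facts
  have hτpos : ∀ k, 0 < τ k := by
    intro k; cases k with
    | zero => rw [hτ0]; norm_num
    | succ k => exact (hτ k).1.1
  have hτle1 : ∀ k, τ k ≤ 1 := by
    intro k; cases k with
    | zero => rw [hτ0]
    | succ k => exact (hτ k).1.2.le
  have hstar : ∀ k, (τ (k+1))^2*(1+τ (k+1)) = (τ k)^2*(1-τ (k+1)) := by
    intro k; have := (hτ k).2; nlinarith [this]
  have hβpos : ∀ k, 0 < β k := by
    intro k; induction k with
    | zero => exact hβ0
    | succ k ih => rw [hβ k]; exact div_pos ih (by nlinarith [hτpos (k+1)])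
  have hC3 : ∀ k : ℕ, 1 ≤ τ k * ((k:ℝ)+1) := by
    intro k; induction k with
    | zero => rw [hτ0]; norm_num
    | succ k ih =>
      by_contra hcon
      push_neg at hcon
      set a : ℝ := (k:ℝ) with ha
      set s := τ (k+1) with hs
      set r := τ k with hr
      have hk : (0:ℝ) ≤ a := Nat.cast_nonneg k
      have h1 : s^2*(1+s) = r^2*(1-s) := hstar k
      have hτk : 0 < r := hτpos k
      have hτk1 : 0 < s := hτpos (k+1)
      have hA : s*(a+2) < 1 := by
        have : (((k:ℕ)+1 : ℕ) : ℝ) = a + 1 := by push_cast; ring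
        rw [this] at hcon; linarith
      have hB : 1 ≤ r*(a+1) := ih
      have hs1 : s < 1 := by nlinarith
      have hsa : 0 < s*(a+2) := by positivity
      have m1 : s^2*(a+2)^2 < 1 := by nlinarith [mul_lt_mul'' hA hA hsa.le hsa.le]
      have m2 : s^3*(a+2)^3 < 1 := by nlinarith [mul_lt_mul'' m1 hA (by positivity) hsa.le]
      have m3 : a+1 < (1-s)*(a+2) := by nlinarith
      have m4 : 1 ≤ r^2*(a+1)^2 := by nlinarith
      have h1' : s^2*(1+s)*((a+1)^2*(a+2)^3) = r^2*(1-s)*((a+1)^2*(a+2)^3) := by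
        rw [h1]
      have t1 : s^2*(a+2)^2*((a+2)*(a+1)^2) < 1*((a+2)*(a+1)^2) :=
        mul_lt_mul_of_pos_right m1 (by positivity)
      have t2 : s^3*(a+2)^3*((a+1)^2) < 1*((a+1)^2) :=
        mul_lt_mul_of_pos_right m2 (by positivity)
      have lhs_lt : s^2*(1+s)*((a+1)^2*(a+2)^3) < (a+3)*(a+1)^2 := by
        have e : s^2*(1+s)*((a+1)^2*(a+2)^3)
            = s^2*(a+2)^2*((a+2)*(a+1)^2) + s^3*(a+2)^3*((a+1)^2) := by ring
        rw [e]; linarith [t1, t2]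
      have u1 : 1*(a+1) ≤ (r^2*(a+1)^2) * ((1-s)*(a+2)) :=
        mul_le_mul m4 m3.le (by linarith) (by positivity)
      have u2 : (a+1)*(a+2)^2 ≤ (r^2*(a+1)^2) * ((1-s)*(a+2)) * (a+2)^2 := by
        have := mul_le_mul_of_nonneg_right u1 (show (0:ℝ) ≤ (a+2)^2 by positivity)
        linarith [this]
      have t5 : (a+1)*(a+2)^2 ≤ r^2*(1-s)*((a+1)^2*(a+2)^3) := by
        have e : r^2*(1-s)*((a+1)^2*(a+2)^3)
            = (r^2*(a+1)^2) * ((1-s)*(a+2)) * (a+2)^2 := by ring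
        rw [e]; exact u2
      linarith [lhs_lt, t5, h1', hk]
  have hτ1pos : ∀ k, 0 < 1 + τ (k+1) := fun k => by nlinarith [hτpos (k+1)]
  have hC1 : ∀ k : ℕ, (τ k)^2*((k:ℝ)+1)*β 0 ≤ β k := by
    intro k; induction k with
    | zero => rw [hτ0]; norm_num
    | succ k ih =>
      rw [hβ k]
      rw [le_div_iff₀ (hτ1pos k)]
      set a : ℝ := (k:ℝ) with ha
      have hcast : (((k:ℕ)+1 : ℕ) : ℝ) = a + 1 := by push_cast; ring
      rw [hcast]
      set s := τ (k+1) with hs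
      set r := τ k with hr
      have h1 : s^2*(1+s) = r^2*(1-s) := hstar k
      have hC3' : 1 ≤ s*(a+2) := by
        have := hC3 (k+1); rw [hcast] at this; linarith
      have hk : (0:ℝ) ≤ a := Nat.cast_nonneg k
      have m3 : (1-s)*(a+2) ≤ a+1 := by nlinarith
      have : s^2*(1+s)*(a+2) ≤ r^2*(a+1) := by nlinarith [sq_nonneg r]
      calc s^2*(a+1+1)*β 0*(1+s) = s^2*(1+s)*(a+2)*β 0 := by ring
        _ ≤ r^2*(a+1)*β 0 := by nlinarith [hβ0]
        _ ≤ β k := by have := ih; nlinarith [hβ0]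
  have hC2 : ∀ k : ℕ, β k*((k:ℝ)+2) ≤ 2*β 0 := by
    intro k; induction k with
    | zero => norm_num; linarith
    | succ k ih =>
      rw [hβ k, div_mul_eq_mul_div, div_le_iff₀ (hτ1pos k)]
      set a : ℝ := (k:ℝ) with ha
      have hcast : (((k:ℕ)+1 : ℕ) : ℝ) = a + 1 := by push_cast; ring
      rw [hcast]
      have hC3' : 1 ≤ τ (k+1)*(a+2) := by
        have := hC3 (k+1); rw [hcast] at this; linarith
      have hβk := hβpos k
      set s := τ (k+1) with hs
      have hspos : 0 < s := hτpos (k+1)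
      have hk : (0:ℝ) ≤ a := Nat.cast_nonneg k
      have v1 : β k*(a+2)*(1+s) ≤ 2*β 0*(1+s) :=
        mul_le_mul_of_nonneg_right ih (by linarith)
      have v2 : β k*1 ≤ β k*(s*(a+2)) := mul_le_mul_of_nonneg_left hC3' hβk.le
      nlinarith [v1, v2]
  have hLnn : ∀ k, 0 ≤ L k := by
    intro k; rw [hL k]; exact div_nonneg (by positivity) (hβpos k).le
  -- ## memberships
  have hxS : ∀ k, x k ∈ Sf := by
    intro k; cases k with
    | zero => exact hx0
    | succ k => exact (hxup k).1
  have hyS : ∀ k, yseq (k+1) ∈ Sg := fun k => (hyup k).1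
  have hytS : ∀ k, ytil k ∈ Sg := by
    intro k; induction k with
    | zero => exact hytil0
    | succ k ih =>
      rw [hytil k]
      exact hSg ih (hyS k) (by linarith [hτle1 k]) (hτpos k).le (by ring)
  -- ## variational inequalities
  have hF1 : ∀ k, ∀ w ∈ Sg,
      ⟪K (xhat k), w⟫ - gstar w - β k/2*‖w - ydot‖^2 + β k/2*‖w - yseq (k+1)‖^2 ≤
        ⟪K (xhat k), yseq (k+1)⟫ - gstar (yseq (k+1)) - β k/2*‖yseq (k+1) - ydot‖^2 := by
    intro k w hw
    have hmax := (hyup k).2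
    have hmin0 : ∀ v ∈ Sg, gstar (yseq (k+1)) + ⟪-(K (xhat k)), yseq (k+1)⟫ +
        β k/2*‖yseq (k+1) - ydot‖^2 ≤ gstar v + ⟪-(K (xhat k)), v⟫ + β k/2*‖v - ydot‖^2 := by
      intro v hv
      have h := isMaxOn_iff.mp hmax v hv
      simp only [inner_neg_left]
      linarith [h]
    have := prox_min hSg hgstar (-(K (xhat k))) ydot (hβpos k).le (hyup k).1 hmin0 w hw
    simp only [inner_neg_left] at this
    linarith [this]
  have hF2 : ∀ k, ∀ v ∈ Sf,
      f (x (k+1)) + ⟪K (x (k+1)), yseq (k+1)⟫ + L k/2*‖x (k+1) - xhat k‖^2 +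
        L k/2*‖v - x (k+1)‖^2 ≤ f v + ⟪K v, yseq (k+1)⟫ + L k/2*‖v - xhat k‖^2 := by
    intro k v hv
    have hmin := (hxup k).2
    have hadj : ∀ u : EuclideanSpace ℝ (Fin p),
        ⟪(ContinuousLinearMap.adjoint K) (yseq (k+1)), u⟫ = ⟪K u, yseq (k+1)⟫ := by
      intro u
      rw [ContinuousLinearMap.adjoint_inner_left, real_inner_comm]
    have hmin0 : ∀ v' ∈ Sf, f (x (k+1)) + ⟪(ContinuousLinearMap.adjoint K) (yseq (k+1)), x (k+1)⟫ +
        L k/2*‖x (k+1) - xhat k‖^2 ≤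
        f v' + ⟪(ContinuousLinearMap.adjoint K) (yseq (k+1)), v'⟫ + L k/2*‖v' - xhat k‖^2 := by
      intro v' hv'
      exact isMinOn_iff.mp hmin v' hv'
    have := prox_min hSf hf ((ContinuousLinearMap.adjoint K) (yseq (k+1))) (xhat k)
      (hLnn k) (hxup k).1 hmin0 v hv
    rw [hadj, hadj] at this
    linarith [this]
  -- ## L growth identity
  have hmL : ∀ i, L (i+1) = (1 + τ (i+1)) * L i := by
    intro i
    rw [hL (i+1), hL i, hβ i]
    rw [div_div_eq_mul_div, mul_comm, mul_div_assoc]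
  -- ## invariant for the auxiliary sequence z
  have hzsucc : ∀ k, zaux x xhat τ (k+1)
      = zaux x xhat τ k + (τ k)⁻¹ • (x (k+1) - xhat k) := fun k => rfl
  have hz0 : zaux x xhat τ 0 = x 0 := rfl
  have hinv : ‖K‖ ≠ 0 → ∀ i, xhat i = (1 - τ i)•(x i) + (τ i)•(zaux x xhat τ i) := by
    intro hK
    have hKpos : 0 < ‖K‖ := lt_of_le_of_ne (norm_nonneg K) (Ne.symm hK)
    have hLpos : ∀ i, 0 < L i := fun i => by
      rw [hL i]; exact div_pos (by positivity) (hβpos i)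
    have hηval : ∀ i, η (i+1) = τ (i+1) * (1 - τ i) / τ i := by
      intro i
      have hLrat : L (i+1) / L i = 1 + τ (i+1) := by
        rw [hmL i]; exact mul_div_cancel_right₀ _ (ne_of_gt (hLpos i))
      rw [hη i, hLrat]
      have hd1 : (τ i)^2 + (1 + τ (i+1)) * τ (i+1) ≠ 0 := by
        have := hτpos i; have := hτpos (i+1); positivity
      have hd2 : τ i ≠ 0 := ne_of_gt (hτpos i)
      rw [div_eq_div_iff hd1 hd2]
      linear_combination (τ i - 1) * (hτ i).2
    intro i
    induction i with
    | zero =>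
      rw [hxhat0, hτ0, hz0]
      simp
    | succ i ih =>
      have hτi : τ i ≠ 0 := ne_of_gt (hτpos i)
      rw [hxhat i, hηval i, hzsucc i, ih]
      match_scalars <;> field_simp <;> ring
  -- ## intro of the main quantifiers
  intro k0 hk0 xt hxt yt hyt
  obtain ⟨j0, rfl⟩ : ∃ j, k0 = j + 1 := ⟨k0 - 1, (Nat.succ_pred_eq_of_pos hk0).symm⟩
  -- ## potentials
  set A' : ℕ → ℝ := fun j => f (x (j+1)) + ⟪K (x (j+1)), yseq (j+1)⟫ - gstar (yseq (j+1))
      - β j/2*‖yseq (j+1) - ydot‖^2 + L j/2*‖x (j+1) - xhat j‖^2 with hA'def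
  set B' : ℕ → ℝ := fun j => A' j - (f xt + ⟪K xt, ytil (j+1)⟫ - gstar (ytil (j+1))) with hB'def
  set W : ℕ → ℝ := fun j => B' j + (L j*(τ j)^2)/2*‖xt - zaux x xhat τ (j+1)‖^2 with hWdef
  -- ## gap bound at each iterate
  have hGap : ∀ j, (f (x (j+1)) + ⟪K (x (j+1)), yt⟫ - gstar yt)
      - (f xt + ⟪K xt, ytil (j+1)⟫ - gstar (ytil (j+1))) ≤ B' j + β j/2*‖yt - ydot‖^2 := by
    intro j
    have hQ := hF1 j yt (hYSg hyt)
    have habs := absorb K (x (j+1) - xhat j) (yt - yseq (j+1)) (hβpos j)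
    rw [← hL j] at habs
    have hlin1 : ⟪K (x (j+1)), yt⟫ = ⟪K (xhat j), yt⟫
        + ⟪K (x (j+1) - xhat j), yt - yseq (j+1)⟫ + ⟪K (x (j+1) - xhat j), yseq (j+1)⟫ := by
      simp only [map_sub, inner_sub_left, inner_sub_right]; ring
    have hlin2 : ⟪K (x (j+1)), yseq (j+1)⟫ = ⟪K (xhat j), yseq (j+1)⟫
        + ⟪K (x (j+1) - xhat j), yseq (j+1)⟫ := by
      simp only [map_sub, inner_sub_left]; ring
    simp only [hB'def, hA'def]
    linarith [hQ, habs, hlin1, hlin2]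
  -- ## base case
  have hR0 : W 0 ≤ L 0/2 * ‖xt - x 0‖^2 := by
    have h2 := hF2 0 xt (hXSf hxt)
    rw [hxhat0] at h2
    have hyt1 : ytil 1 = yseq 1 := by
      rw [hytil 0, hτ0]; simp
    have hz1 : zaux x xhat τ 1 = x 1 := by
      rw [hzsucc 0, hτ0, hxhat0, hz0]; simp
    have hnn : (0:ℝ) ≤ β 0/2*‖yseq 1 - ydot‖^2 := by positivity
    simp only [hWdef, hB'def, hA'def, hyt1, hz1, hτ0, hxhat0]
    ring_nf
    ring_nf at h2
    linarith [h2, hnn]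
  -- ## main recursion
  have hRec : ∀ j, W (j+1) ≤ (1 - τ (j+1)) * W j := by
    intro j
    have h1τ : (0:ℝ) ≤ 1 - τ (j+1) := by linarith [hτle1 (j+1)]
    have hτ'pos := hτpos (j+1)
    have hxj1S := hxS (j+1)
    have hbarS : (1 - τ (j+1))•(x (j+1)) + (τ (j+1))•xt ∈ Sf :=
      hSf hxj1S (hXSf hxt) h1τ hτ'pos.le (by ring)
    have ha := hF2 (j+1) _ hbarS
    have hb : f ((1 - τ (j+1))•(x (j+1)) + (τ (j+1))•xt)
        ≤ (1-τ (j+1))*f (x (j+1)) + τ (j+1)*f xt :=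
      hf.2 hxj1S (hXSf hxt) h1τ hτ'pos.le (by ring)
    have hc : ⟪K ((1 - τ (j+1))•(x (j+1)) + (τ (j+1))•xt), yseq (j+2)⟫
        = (1-τ (j+1))*⟪K (x (j+1)), yseq (j+2)⟫ + τ (j+1)*⟪K xt, yseq (j+2)⟫ := by
      rw [map_add, map_smul, map_smul, inner_add_left, real_inner_smul_left,
        real_inner_smul_left]
    have hd1 := hF1 j (yseq (j+2)) (hyS (j+1))
    have habs2 := absorb K (x (j+1) - xhat j) (yseq (j+2) - yseq (j+1)) (hβpos j)
    rw [← hL j] at habs2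
    have hlin3 : ⟪K (x (j+1)), yseq (j+2)⟫ = ⟪K (xhat j), yseq (j+2)⟫
        + ⟪K (x (j+1) - xhat j), yseq (j+2) - yseq (j+1)⟫
        + ⟪K (x (j+1) - xhat j), yseq (j+1)⟫ := by
      simp only [map_sub, inner_sub_left, inner_sub_right]; ring
    have hlin4 : ⟪K (x (j+1)), yseq (j+1)⟫ = ⟪K (xhat j), yseq (j+1)⟫
        + ⟪K (x (j+1) - xhat j), yseq (j+1)⟫ := by
      simp only [map_sub, inner_sub_left]; ring
    have hd : ⟪K (x (j+1)), yseq (j+2)⟫ - gstar (yseq (j+2)) - β j/2*‖yseq (j+2) - ydot‖^2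
        ≤ (⟪K (x (j+1)), yseq (j+1)⟫ - gstar (yseq (j+1)) - β j/2*‖yseq (j+1) - ydot‖^2)
          + L j/2*‖x (j+1) - xhat j‖^2 := by
      linarith [hd1, habs2, hlin3, hlin4]
    have hβd : β j = (1 + τ (j+1)) * β (j+1) := by
      rw [hβ j]
      field_simp
    -- concavity of the Lagrangian in y along the ytil update
    have hytm : ytil (j+2) = (1-τ (j+1))•ytil (j+1) + τ (j+1)•yseq (j+2) := hytil (j+1)
    have hgc : gstar (ytil (j+2)) ≤ (1-τ (j+1))*gstar (ytil (j+1)) + τ (j+1)*gstar (yseq (j+2)) := by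
      rw [hytm]
      exact hgstar.2 (hytS (j+1)) (hyS (j+1)) h1τ hτ'pos.le (by ring)
    have hic : ⟪K xt, ytil (j+2)⟫ = (1-τ (j+1))*⟪K xt, ytil (j+1)⟫
        + τ (j+1)*⟪K xt, yseq (j+2)⟫ := by
      rw [hytm, inner_add_right, real_inner_smul_right, real_inner_smul_right]
    -- scaled facts for linarith
    have hd' := mul_le_mul_of_nonneg_left hd h1τ
    have hβd2 : β j * ‖yseq (j+2) - ydot‖^2 = (1+τ (j+1))*β (j+1)*‖yseq (j+2) - ydot‖^2 := by
      rw [hβd]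
    have hβd3 : τ (j+1) * (β j * ‖yseq (j+2) - ydot‖^2)
        = τ (j+1) * ((1+τ (j+1))*β (j+1)*‖yseq (j+2) - ydot‖^2) := by
      rw [hβd2]
    have hXnn : (0:ℝ) ≤ (τ (j+1))^2*β (j+1)*‖yseq (j+2) - ydot‖^2 := by
      have := hβpos (j+1); positivity
    have hd'' := mul_le_mul_of_nonneg_left hd hτ'pos.le
    have hBrec : B' (j+1) ≤ (1-τ (j+1))*B' j
        + L (j+1)/2*(‖((1 - τ (j+1))•(x (j+1)) + (τ (j+1))•xt) - xhat (j+1)‖^2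
          - ‖((1 - τ (j+1))•(x (j+1)) + (τ (j+1))•xt) - x (j+2)‖^2) := by
      simp only [hB'def, hA'def]
      nlinarith [ha, hb, hc, hd', hβd2, hβd3, hXnn, hgc, hic]
    by_cases hK0 : ‖K‖ = 0
    · have hL0 : ∀ i, L i = 0 := fun i => by rw [hL i, hK0]; norm_num
      have hWj1 : W (j+1) = B' (j+1) := by
        simp only [hWdef]; rw [hL0 (j+1)]; ring
      have hWj : W j = B' j := by
        simp only [hWdef]; rw [hL0 j]; ring
      rw [hWj1, hWj]
      have := hL0 (j+1)
      rw [this] at hBrec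
      have h00 : (0:ℝ)/2*(‖((1 - τ (j+1))•(x (j+1)) + (τ (j+1))•xt) - xhat (j+1)‖^2
          - ‖((1 - τ (j+1))•(x (j+1)) + (τ (j+1))•xt) - x (j+2)‖^2) = 0 := by ring
      rw [h00, add_zero] at hBrec
      exact hBrec
    · have hzin := hinv hK0
      have e1 : ((1 - τ (j+1))•(x (j+1)) + (τ (j+1))•xt) - xhat (j+1)
          = τ (j+1)•(xt - zaux x xhat τ (j+1)) := by
        rw [hzin (j+1)]; module
      have e2 : ((1 - τ (j+1))•(x (j+1)) + (τ (j+1))•xt) - x (j+2)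
          = τ (j+1)•(xt - zaux x xhat τ (j+2)) := by
        have hτ' : τ (j+1) ≠ 0 := ne_of_gt hτ'pos
        rw [hzsucc (j+1), hzin (j+1)]
        match_scalars <;> field_simp <;> ring
      have n1 : ‖((1 - τ (j+1))•(x (j+1)) + (τ (j+1))•xt) - xhat (j+1)‖^2
          = (τ (j+1))^2*‖xt - zaux x xhat τ (j+1)‖^2 := by
        rw [e1, norm_smul, mul_pow, Real.norm_eq_abs, sq_abs]
      have n2 : ‖((1 - τ (j+1))•(x (j+1)) + (τ (j+1))•xt) - x (j+2)‖^2
          = (τ (j+1))^2*‖xt - zaux x xhat τ (j+2)‖^2 := by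
        rw [e2, norm_smul, mul_pow, Real.norm_eq_abs, sq_abs]
      rw [n1, n2] at hBrec
      have hcrel : L (j+1)*(τ (j+1))^2 = (1 - τ (j+1))*(L j*(τ j)^2) := by
        rw [hmL j]
        linear_combination L j * hstar j
      have hc1 : L (j+1)*(τ (j+1))^2*‖xt - zaux x xhat τ (j+1)‖^2
          = (1-τ (j+1))*(L j*(τ j)^2)*‖xt - zaux x xhat τ (j+1)‖^2 := by rw [hcrel]
      have hc2 : L (j+1)*(τ (j+1))^2*‖xt - zaux x xhat τ (j+2)‖^2
          = (1-τ (j+1))*(L j*(τ j)^2)*‖xt - zaux x xhat τ (j+2)‖^2 := by rw [hcrel]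
      simp only [hWdef]
      linarith [hBrec, hc1, hc2]
  -- ## unrolling the recursion
  have hprod : ∀ j, W j ≤ (∏ i ∈ Finset.range j, (1 - τ (i+1))) * (L 0/2*‖xt - x 0‖^2) := by
    intro j; induction j with
    | zero => simpa using hR0
    | succ j ih =>
      rw [Finset.prod_range_succ]
      calc W (j+1) ≤ (1 - τ (j+1)) * W j := hRec j
        _ ≤ (1 - τ (j+1)) * ((∏ i ∈ Finset.range j, (1 - τ (i+1))) * (L 0/2*‖xt - x 0‖^2)) :=
            mul_le_mul_of_nonneg_left ih (by linarith [hτle1 (j+1)])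
        _ = _ := by ring
  have hpβ : ∀ j, (∏ i ∈ Finset.range j, (1 - τ (i+1))) * β j = (τ j)^2 * β 0 := by
    intro j; induction j with
    | zero => simp [hτ0]
    | succ j ih =>
      have h1 : 1 + τ (j+1) ≠ 0 := ne_of_gt (hτ1pos j)
      rw [Finset.prod_range_succ, hβ j, ← mul_div_assoc, div_eq_iff h1]
      linear_combination (1 - τ (j+1)) * ih - β 0 * hstar j
  -- ## final assembly
  have hBW : B' j0 ≤ W j0 := by
    have hq : (0:ℝ) ≤ (L j0*(τ j0)^2)/2*‖xt - zaux x xhat τ (j0+1)‖^2 := by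
      have := hLnn j0; positivity
    simp only [hWdef]; linarith [hq]
  have hgap := hGap j0
  have hWb := hprod j0
  set Dx := sSup ((fun x' => ‖x 0 - x'‖^2) '' X) with hDxdef
  set Dy := sSup ((fun y' => ‖y' - ydot‖^2) '' Y) with hDydef
  have hDx : ‖x 0 - xt‖^2 ≤ Dx := le_csSup hXb ⟨xt, hxt, rfl⟩
  have hDy : ‖yt - ydot‖^2 ≤ Dy := le_csSup hYb ⟨yt, hyt, rfl⟩
  have hDxnn : 0 ≤ Dx := le_trans (by positivity) hDx
  have hDynn : 0 ≤ Dy := le_trans (by positivity) hDy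
  have hrev : ‖xt - x 0‖ = ‖x 0 - xt‖ := norm_sub_rev _ _
  have hPnn : 0 ≤ ∏ i ∈ Finset.range j0, (1 - τ (i+1)) :=
    Finset.prod_nonneg fun i _ => by linarith [hτle1 (i+1)]
  have hPval : (∏ i ∈ Finset.range j0, (1 - τ (i+1))) = (τ j0)^2 * β 0 / β j0 :=
    eq_div_iff (ne_of_gt (hβpos j0)) |>.mpr (hpβ j0)
  have hPL : (∏ i ∈ Finset.range j0, (1 - τ (i+1))) * (L 0/2)
      ≤ ‖K‖^2/(2*β 0*((j0:ℝ)+1)) := by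
    have e : (∏ i ∈ Finset.range j0, (1 - τ (i+1))) * (L 0/2)
        = ‖K‖^2*(τ j0)^2/(2*β j0) := by
      rw [hPval, hL 0]
      field_simp [ne_of_gt hβ0, ne_of_gt (hβpos j0)]
    rw [e, div_le_div_iff₀ (by have := hβpos j0; linarith : (0:ℝ) < 2*β j0)
      (mul_pos (mul_pos two_pos hβ0) (by positivity : (0:ℝ) < (j0:ℝ)+1))]
    linarith [mul_le_mul_of_nonneg_left (hC1 j0) (by positivity : (0:ℝ) ≤ 2*‖K‖^2)]
  have T1 : (∏ i ∈ Finset.range j0, (1 - τ (i+1))) * (L 0/2*‖xt - x 0‖^2)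
      ≤ ‖K‖^2/(2*β 0*((j0:ℝ)+1)) * Dx := by
    have e : (∏ i ∈ Finset.range j0, (1 - τ (i+1))) * (L 0/2*‖xt - x 0‖^2)
        = ((∏ i ∈ Finset.range j0, (1 - τ (i+1))) * (L 0/2)) * ‖xt - x 0‖^2 := by ring
    rw [e, hrev]
    exact mul_le_mul hPL hDx (by positivity) (by positivity)
  have hco : β j0/2 ≤ β 0/((j0:ℝ)+1+1) := by
    rw [div_le_div_iff₀ (by norm_num) (by positivity)]
    linarith [hC2 j0]
  have T2 : β j0/2*‖yt - ydot‖^2 ≤ β 0/((j0:ℝ)+1+1) * Dy :=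
    mul_le_mul hco hDy (by positivity) (by positivity)
  push_cast
  have s2 : B' j0 ≤ ‖K‖^2/(2*β 0*((j0:ℝ)+1)) * Dx := le_trans hBW (le_trans hWb T1)
  refine le_trans hgap ?_
  linarith [s2, T2]
end

section
/- Assume f and g* are merely convex (μ_f = μ_{g*} = 0), a saddle point (x⋆, y⋆) of L exists, and g is M_g-Lipschitz continuous on dom g. Run ASGARD+ with τ₀ := 1, and for k ≥ 0 let τ_{k+1} be the unique root in (0,1) of τ³ + τ² + τ_k² τ − τ_k² = 0, β_{k+1} := β_k/(1+τ_{k+1}), L_k := ‖K‖²/β_k, m_{k+1} := L_{k+1}/L_k, η_{k+1} := (1−τ_k)τ_k/(τ_k² + m_{k+1}τ_{k+1}). Then for all k ≥ 1, F(x^k) − F⋆ ≤ (‖K‖²/(2β₀k))‖x⁰ − x⋆‖² + (β₀/(k+1))(‖ẏ‖ + M_g)². -/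
open RealInnerProductSpace Set

section asgardAux
variable {E : Type*} [NormedAddCommGroup E] [InnerProductSpace ℝ E]

lemma asgard_combo_norm_sq (u v : E) (t : ℝ) :
    ‖(1-t)•u + t•v‖^2 = (1-t)*‖u‖^2 + t*‖v‖^2 - t*(1-t)*‖u-v‖^2 := by
  have h : ∀ w : E, ‖w‖^2 = ⟪w,w⟫ := fun w => (real_inner_self_eq_norm_sq w).symm
  simp only [h, inner_add_left, inner_add_right, inner_sub_left, inner_sub_right,
    real_inner_smul_left, real_inner_smul_right]
  rw [real_inner_comm v u]
  ring

lemma asgard_convexOn_inner (S : Set E) (hS : Convex ℝ S) (v : E) :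
    ConvexOn ℝ S (fun w => ⟪v,w⟫) :=
  ⟨hS, fun x _ y _ a b _ _ _ => by
    simp only [smul_eq_mul]
    rw [inner_add_right, real_inner_smul_right, real_inner_smul_right]⟩

lemma asgard_three_point (S : Set E) (hS : Convex ℝ S) (φ : E → ℝ) (hφ : ConvexOn ℝ S φ)
    (c : ℝ) (hc : 0 ≤ c) (a m : E) (hm : m ∈ S)
    (hmin : IsMinOn (fun z => φ z + c/2*‖z-a‖^2) S m) :
    ∀ z ∈ S, φ m + c/2*‖m-a‖^2 + c/2*‖z-m‖^2 ≤ φ z + c/2*‖z-a‖^2 := by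
  intro z hz
  refine le_of_forall_pos_le_add (fun ε hε => ?_)
  set M : ℝ := ‖z-m‖^2 with hM
  have hMnn : 0 ≤ M := sq_nonneg _
  have hden : (0:ℝ) < c/2*M+1 := by positivity
  set t : ℝ := min 1 (ε/(c/2*M+1)) with ht
  have ht0 : 0 < t := lt_min one_pos (div_pos hε hden)
  have ht1 : t ≤ 1 := min_le_left _ _
  have hmem : (1-t)•m + t•z ∈ S := hS hm hz (by linarith) ht0.le (by ring)
  have h1 := (isMinOn_iff.mp hmin) _ hmem
  have h2 := hφ.2 hm hz (by linarith : (0:ℝ) ≤ 1-t) ht0.le (by ring)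
  simp only [smul_eq_mul] at h2
  have h3 : ((1-t)•m + t•z) - a = (1-t)•(m-a) + t•(z-a) := by module
  rw [h3, asgard_combo_norm_sq] at h1
  have h4 : (m-a)-(z-a) = m - z := by module
  rw [h4] at h1
  have hmz : ‖m - z‖^2 = M := by rw [hM, norm_sub_rev]
  rw [hmz] at h1
  have H : φ m + c/2*‖m-a‖^2 ≤ (1-t)*φ m + t*φ z
      + c/2*((1-t)*‖m-a‖^2 + t*‖z-a‖^2 - t*(1-t)*M) := by linarith
  have H2 : t * ((φ m + c/2*‖m-a‖^2) - ((φ z + c/2*‖z-a‖^2) - c/2*(1-t)*M)) ≤ 0 := by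
    nlinarith [H]
  have H3 : φ m + c/2*‖m-a‖^2 ≤ (φ z + c/2*‖z-a‖^2) - c/2*(1-t)*M := by
    nlinarith [H2, ht0]
  have H4 : t*(c/2*M) ≤ ε := by
    have h5 : t ≤ ε/(c/2*M+1) := min_le_right _ _
    have h6 : t*(c/2*M) ≤ (ε/(c/2*M+1))*(c/2*M) :=
      mul_le_mul_of_nonneg_right h5 (by positivity)
    have h7 : (ε/(c/2*M+1))*(c/2*M) ≤ ε := by
      rw [div_mul_eq_mul_div, div_le_iff₀ hden]; nlinarith
    linarith
  nlinarith [H3, H4]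

end asgardAux

set_option maxHeartbeats 4000000 in
/-- Theorem 1(b): primal objective residual bound of ASGARD+ in the
general convex case `μ_f = μ_{g*} = 0`, with `g` being `M_g`-Lipschitz continuous.
For all `k ≥ 1`, `F(x^k) - F⋆ ≤ (‖K‖²/(2β₀k))‖x⁰-x⋆‖² + (β₀/(k+1))(‖ẏ‖+M_g)²`. -/
theorem stmt5 {p n : ℕ}
    (f : EuclideanSpace ℝ (Fin p) → ℝ) (Sf : Set (EuclideanSpace ℝ (Fin p)))
    (g : EuclideanSpace ℝ (Fin n) → ℝ)
    (gstar : EuclideanSpace ℝ (Fin n) → ℝ) (Sg : Set (EuclideanSpace ℝ (Fin n)))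
    (K : EuclideanSpace ℝ (Fin p) →L[ℝ] EuclideanSpace ℝ (Fin n))
    (hSf : Convex ℝ Sf) (hSg : Convex ℝ Sg)
    (hSfc : IsClosed Sf) (hSgc : IsClosed Sg)
    (hf : ConvexOn ℝ Sf f) (hg : ConvexOn ℝ univ g) (hgstar : ConvexOn ℝ Sg gstar)
    -- `g*` is the Fenchel conjugate of `g` (on its domain `Sg`)
    (hconj : ∀ y ∈ Sg, IsLUB {r : ℝ | ∃ u, r = ⟪y, u⟫ - g u} (gstar y))
    -- every subgradient of `g` belongs to `dom g* = Sg`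
    (hsub : ∀ u v : EuclideanSpace ℝ (Fin n),
      (∀ w, g u + ⟪v, w - u⟫ ≤ g w) → v ∈ Sg)
    -- `g` is `M_g`-Lipschitz continuous
    (Mg : ℝ) (hMg : 0 ≤ Mg)
    (hgLip : ∀ u v : EuclideanSpace ℝ (Fin n), |g u - g v| ≤ Mg * ‖u - v‖)
    -- a saddle point of the Lagrangian exists
    (xs : EuclideanSpace ℝ (Fin p)) (ys : EuclideanSpace ℝ (Fin n))
    (hxs : xs ∈ Sf) (hys : ys ∈ Sg)
    (hsaddle : ∀ x ∈ Sf, ∀ y ∈ Sg,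
      f xs + ⟪K xs, y⟫ - gstar y ≤ f xs + ⟪K xs, ys⟫ - gstar ys ∧
      f xs + ⟪K xs, ys⟫ - gstar ys ≤ f x + ⟪K x, ys⟫ - gstar ys)
    -- parameters of ASGARD+
    (τ β L η : ℕ → ℝ)
    (hτ0 : τ 0 = 1)
    (hτ : ∀ k, τ (k + 1) ∈ Ioo (0 : ℝ) 1 ∧
      (τ (k + 1)) ^ 3 + (τ (k + 1)) ^ 2 + (τ k) ^ 2 * τ (k + 1) - (τ k) ^ 2 = 0)
    (hβ0 : 0 < β 0)
    (hβ : ∀ k, β (k + 1) = β k / (1 + τ (k + 1)))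
    (hL : ∀ k, L k = ‖K‖ ^ 2 / β k)
    (hη : ∀ k, η (k + 1) = (1 - τ k) * τ k / ((τ k) ^ 2 + (L (k + 1) / L k) * τ (k + 1)))
    -- the iterates of ASGARD+
    (ydot : EuclideanSpace ℝ (Fin n))
    (x xhat : ℕ → EuclideanSpace ℝ (Fin p)) (yseq ytil : ℕ → EuclideanSpace ℝ (Fin n))
    (hx0 : x 0 ∈ Sf) (hxhat0 : xhat 0 = x 0) (hytil0 : ytil 0 ∈ Sg)
    (hyup : ∀ k, yseq (k + 1) ∈ Sg ∧
      IsMaxOn (fun z => ⟪K (xhat k), z⟫ - gstar z - β k / 2 * ‖z - ydot‖ ^ 2) Sg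
        (yseq (k + 1)))
    (hxup : ∀ k, x (k + 1) ∈ Sf ∧
      IsMinOn (fun z => f z + ⟪(ContinuousLinearMap.adjoint K) (yseq (k + 1)), z⟫ +
        L k / 2 * ‖z - xhat k‖ ^ 2) Sf (x (k + 1)))
    (hxhat : ∀ k, xhat (k + 1) = x (k + 1) + η (k + 1) • (x (k + 1) - x k))
    (hytil : ∀ k, ytil (k + 1) = (1 - τ k) • ytil k + τ k • yseq (k + 1)) :
    ∀ k : ℕ, 1 ≤ k →
      (f (x k) + g (K (x k))) - (f xs + ⟪K xs, ys⟫ - gstar ys) ≤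
        ‖K‖ ^ 2 / (2 * β 0 * (k : ℝ)) * ‖x 0 - xs‖ ^ 2 +
        β 0 / ((k : ℝ) + 1) * (‖ydot‖ + Mg) ^ 2 := by
  -- ## Scalar parameter facts
  have hτpos : ∀ k, 0 < τ k := by
    intro k; cases k with
    | zero => rw [hτ0]; norm_num
    | succ j => exact (hτ j).1.1
  have hτle : ∀ k, τ k ≤ 1 := by
    intro k; cases k with
    | zero => rw [hτ0]
    | succ j => exact (hτ j).1.2.le
  have hβpos : ∀ k, 0 < β k := by
    intro k; induction k with
    | zero => exact hβ0
    | succ j ih => rw [hβ j]; exact div_pos ih (by linarith [hτpos (j+1)])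
  have hcub : ∀ k, (τ (k+1))^2*(1+τ (k+1)) = (τ k)^2*(1-τ (k+1)) := by
    intro k; linear_combination (hτ k).2
  have hτlb : ∀ k : ℕ, 1 ≤ τ k * ((k:ℝ)+1) := by
    intro k; induction k with
    | zero => rw [hτ0]; norm_num
    | succ j ih =>
      by_contra hcon
      push_neg at hcon
      set N : ℝ := (j:ℝ) with hN
      have hNnn : (0:ℝ) ≤ N := Nat.cast_nonneg j
      set t : ℝ := τ (j+1)
      set s : ℝ := τ j
      have hc : t^2*(1+t) = s^2*(1-t) := hcub j
      have ht0 : 0 < t := hτpos (j+1)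
      have ht1 : t < 1 := (hτ j).1.2
      have hs0 : 0 < s := hτpos j
      have hs1 : s ≤ 1 := hτle j
      have hsN : 1 ≤ s * (N+1) := ih
      have htN : t * (N+2) < 1 := by
        push_cast at hcon; linarith
      have hN2 : (0:ℝ) < N+2 := by positivity
      have hp : 0 < t*(N+2) := mul_pos ht0 hN2
      have q2 : (t*(N+2))^2 < 1 := pow_lt_one₀ hp.le htN (by norm_num)
      have q3 : (t*(N+2))^3 < 1 := pow_lt_one₀ hp.le htN (by norm_num)
      have e1 : t^2*(N+2)^2 < 1 := by nlinarith [q2]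
      have e2 : t^3*(N+2)^3 < 1 := by nlinarith [q3]
      have e3 : t^2*(1+t)*(N+2)^3 < N+3 := by nlinarith
      have e4 : 1 ≤ s^2*(N+1)^2 := by nlinarith
      have e5 : N+1 ≤ s^2*(1-t)*(N+1)^2*(N+2) := by nlinarith
      have e6s : (N+3)*(N+1)^2 < (N+1)*(N+2)^2 := by nlinarith
      have hX1 : t^2*(1+t)*((N+1)^2*(N+2)^3) ≤ (N+3)*(N+1)^2 := by
        have h := mul_lt_mul_of_pos_right e3 (show (0:ℝ) < (N+1)^2 by positivity)
        linarith [h]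
      have hX2 : (N+1)*(N+2)^2 ≤ s^2*(1-t)*((N+1)^2*(N+2)^3) := by
        have h := mul_le_mul_of_nonneg_right e5 (sq_nonneg (N+2))
        linarith [h]
      rw [← hc] at hX2
      linarith [hX1, e6s, hX2]
  have hβub : ∀ k : ℕ, β k * ((k:ℝ)+2) ≤ 2 * β 0 := by
    intro k; induction k with
    | zero => push_cast; linarith
    | succ j ih =>
      set N : ℝ := (j:ℝ) with hN
      set t : ℝ := τ (j+1)
      have ht0 : 0 < t := hτpos (j+1)
      have htN : 1 ≤ t * (N+2) := by
        have := hτlb (j+1); push_cast at this ⊢; linarith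
      have hN2 : (0:ℝ) < N + 2 := by positivity
      have h1 : β j * (N+2) ≤ (2*β 0*t)*(N+2) := by
        calc β j * (N+2) ≤ 2*β 0 := ih
        _ ≤ 2*β 0*(t*(N+2)) := le_mul_of_one_le_right (by linarith) htN
        _ = (2*β 0*t)*(N+2) := by ring
      have h2 : β j ≤ 2*β 0*t := le_of_mul_le_mul_right h1 hN2
      rw [hβ j, div_mul_eq_mul_div, div_le_iff₀ (by linarith : (0:ℝ) < 1 + t)]
      push_cast
      nlinarith [ih]
  have hcge : ∀ k : ℕ, β 0 * ((k:ℝ)+1) * (τ k)^2 ≤ β k := by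
    intro k; induction k with
    | zero => rw [hτ0]; norm_num
    | succ j ih =>
      set N : ℝ := (j:ℝ) with hN
      set t : ℝ := τ (j+1)
      set s : ℝ := τ j
      have ht0 : 0 < t := hτpos (j+1)
      have htN : 1 ≤ t * (N+2) := by
        have := hτlb (j+1); push_cast at this ⊢; linarith
      have hc : t^2*(1+t) = s^2*(1-t) := hcub j
      rw [hβ j, le_div_iff₀ (by linarith : (0:ℝ) < 1 + t)]
      push_cast
      have hbs : 0 ≤ β 0 * s^2 := by positivity
      have hc2 : β 0*(N+2)*(t^2*(1+t)) = β 0*(N+2)*(s^2*(1-t)) := by rw [hc]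
      have h3 := mul_le_mul_of_nonneg_left htN hbs
      linarith [ih, hc2, h3]
  have hLnn : ∀ k, 0 ≤ L k := by
    intro k; rw [hL k]
    exact div_nonneg (sq_nonneg _) (hβpos k).le
  -- ## The smoothed function `Gf` and its properties
  set D : ℝ := ‖ydot‖ + Mg with hD
  set Fs : ℝ := f xs + ⟪K xs, ys⟫ - gstar ys with hFs
  set Gf : ℝ → EuclideanSpace ℝ (Fin n) → ℝ :=
    fun b u => sSup ((fun z => ⟪u,z⟫ - gstar z - b/2*‖z - ydot‖^2) '' Sg) with hGf
  have hSgne : Sg.Nonempty := ⟨ytil 0, hytil0⟩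
  have hFY : ∀ z ∈ Sg, ∀ u, ⟪z,u⟫ - g u ≤ gstar z := fun z hz u => (hconj z hz).1 ⟨u, rfl⟩
  have hub : ∀ b : ℝ, 0 ≤ b → ∀ u r,
      r ∈ ((fun z => ⟪u,z⟫ - gstar z - b/2*‖z - ydot‖^2) '' Sg) → r ≤ g u := by
    rintro b hb u r ⟨z, hz, rfl⟩
    have h1 := hFY z hz u
    have h2 : ⟪u,z⟫ = ⟪z,u⟫ := real_inner_comm z u
    have h3 : 0 ≤ b/2*‖z - ydot‖^2 := by positivity
    dsimp only
    linarith
  have hbdd : ∀ b : ℝ, 0 ≤ b → ∀ u,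
      BddAbove ((fun z => ⟪u,z⟫ - gstar z - b/2*‖z - ydot‖^2) '' Sg) :=
    fun b hb u => ⟨g u, fun r hr => hub b hb u r hr⟩
  have hGge : ∀ b : ℝ, 0 ≤ b → ∀ u, ∀ z ∈ Sg,
      ⟪u,z⟫ - gstar z - b/2*‖z - ydot‖^2 ≤ Gf b u :=
    fun b hb u z hz => le_csSup (hbdd b hb u) (mem_image_of_mem _ hz)
  have hSgball : ∀ z ∈ Sg, ‖z‖ ≤ Mg := by
    intro z hz
    by_contra hcon
    push_neg at hcon
    have hub0 : ∀ u, ⟪z,u⟫ - g u ≤ gstar z := fun u => (hconj z hz).1 ⟨u, rfl⟩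
    have h0 : -g 0 ≤ gstar z := by
      have := hub0 0
      simpa [inner_zero_right] using this
    have hden : 0 < ‖z‖*(‖z‖-Mg) := mul_pos (lt_of_le_of_lt hMg hcon) (by linarith)
    set t : ℝ := (gstar z + g 0 + 1)/(‖z‖*(‖z‖-Mg)) with htdef
    have ht : 0 < t := div_pos (by linarith) hden
    have h1 := hub0 (t•z)
    have h2 : ⟪z, t•z⟫ = t*‖z‖^2 := by
      rw [real_inner_smul_right, real_inner_self_eq_norm_sq]
    have h3 : g (t•z) ≤ g 0 + Mg*(t*‖z‖) := by
      have h4 := (abs_le.mp (hgLip (t•z) 0)).2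
      have h5 : ‖t•z - 0‖ = t*‖z‖ := by
        rw [sub_zero, norm_smul, Real.norm_eq_abs, abs_of_pos ht]
      rw [h5] at h4; linarith
    have ht2 : t*(‖z‖*(‖z‖-Mg)) = gstar z + g 0 + 1 :=
      div_mul_cancel₀ _ (ne_of_gt hden)
    rw [h2] at h1
    nlinarith [h1, h3, ht2]
  have hdist : ∀ z ∈ Sg, ‖z - ydot‖^2 ≤ D^2 := by
    intro z hz
    have h1 : ‖z - ydot‖ ≤ D := by
      calc ‖z - ydot‖ ≤ ‖z‖ + ‖ydot‖ := norm_sub_le z ydot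
      _ ≤ D := by rw [hD]; linarith [hSgball z hz]
    have h2 : (0:ℝ) ≤ ‖z - ydot‖ := norm_nonneg _
    nlinarith
  have hgG : ∀ b : ℝ, 0 ≤ b → ∀ u, g u ≤ Gf b u + b/2*D^2 := by
    intro b hb u
    refine le_of_forall_pos_le_add (fun ε hε => ?_)
    have hgcont : Continuous g := by
      have hLw : LipschitzWith (Real.toNNReal Mg) g := by
        refine LipschitzWith.of_dist_le_mul (fun a b' => ?_)
        rw [Real.dist_eq, dist_eq_norm]
        calc |g a - g b'| ≤ Mg * ‖a - b'‖ := hgLip a b'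
        _ = (Real.toNNReal Mg) * ‖a - b'‖ := by rw [Real.coe_toNNReal Mg hMg]
      exact hLw.continuous
    set c : ℝ := (4*Mg^2+1)/ε with hc
    have hcpos : 0 < c := div_pos (by positivity) hε
    set R : ℝ := 2*Mg/c + 1 with hR
    have hRpos : 0 < R := by positivity
    have hobj : Continuous (fun w => g w + c/2*‖w - u‖^2) :=
      hgcont.add (continuous_const.mul (((continuous_id.sub continuous_const).norm).pow 2))
    obtain ⟨w, hwmem, hwmin⟩ := (isCompact_closedBall u R).exists_isMinOn
      ⟨u, Metric.mem_closedBall_self hRpos.le⟩ hobj.continuousOn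
    have hwu : g w + c/2*‖w - u‖^2 ≤ g u := by
      have := (isMinOn_iff.mp hwmin) u (Metric.mem_closedBall_self hRpos.le)
      simpa using this
    have hs : ‖w - u‖ ≤ 2*Mg/c := by
      have h1 : g u - g w ≤ Mg*‖w - u‖ := by
        have := (abs_le.mp (hgLip u w)).2
        rw [norm_sub_rev] at this; linarith
      rw [le_div_iff₀ hcpos]
      nlinarith [norm_nonneg (w - u)]
    have hglob : ∀ w', g w + c/2*‖w - u‖^2 ≤ g w' + c/2*‖w' - u‖^2 := by
      intro w'
      by_cases hw' : w' ∈ Metric.closedBall u R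
      · exact (isMinOn_iff.mp hwmin) w' hw'
      · have hfar : R < ‖w' - u‖ := by
          have := Metric.mem_closedBall.not.mp hw'
          rw [dist_eq_norm] at this; linarith [not_le.mp this]
        have h1 : g u - g w' ≤ Mg*‖w' - u‖ := by
          have := (abs_le.mp (hgLip u w')).2
          rw [norm_sub_rev] at this; linarith
        have hcs : c*‖w' - u‖ > 2*Mg + c := by
          have h2 := mul_lt_mul_of_pos_left hfar hcpos
          have h3 : c*R = 2*Mg + c := by
            rw [hR]; field_simp
          linarith
        have hspos : 0 < ‖w' - u‖ := lt_trans hRpos hfar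
        nlinarith [hwu, h1, hcs, hspos]
    have hminOn : IsMinOn (fun w' => g w' + c/2*‖w' - u‖^2) univ w :=
      isMinOn_iff.mpr (fun w' _ => hglob w')
    have htp := asgard_three_point univ convex_univ g hg c hcpos.le u w (mem_univ w) hminOn
    set v : EuclideanSpace ℝ (Fin n) := c•(u-w) with hv
    have hsubgrad : ∀ w', g w + ⟪v, w' - w⟫ ≤ g w' := by
      intro w'
      have h := htp w' (mem_univ _)
      have hexp : ‖w' - u‖^2 = ‖w' - w‖^2 + 2*⟪w' - w, w - u⟫ + ‖w - u‖^2 := by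
        have hsplit : w' - u = (w' - w) + (w - u) := by module
        rw [hsplit, norm_add_sq_real]
      have hvin : ⟪v, w' - w⟫ = -(c*⟪w' - w, w - u⟫) := by
        rw [hv]
        rw [real_inner_smul_left]
        have : u - w = -(w - u) := by module
        rw [this, inner_neg_left, real_inner_comm]
        ring
      rw [hvin]
      nlinarith [h, hexp]
    have hvSg : v ∈ Sg := hsub w v hsubgrad
    have hvMg : ‖v‖ ≤ Mg := by
      have h := hsubgrad (w + v)
      have h1 : (w + v) - w = v := by module
      rw [h1, real_inner_self_eq_norm_sq] at h
      have h2 := (abs_le.mp (hgLip (w+v) w)).2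
      have h3 : ‖(w+v) - w‖ = ‖v‖ := by rw [h1]
      rw [h3] at h2
      nlinarith [norm_nonneg v]
    have hgsv : gstar v ≤ ⟪v,w⟫ - g w := by
      refine (hconj v hvSg).2 ?_
      rintro r ⟨u', rfl⟩
      have h := hsubgrad u'
      have h1 : ⟪v, u' - w⟫ = ⟪v,u'⟫ - ⟪v,w⟫ := inner_sub_right v u' w
      linarith
    have h1 : g u ≤ g w + Mg*‖u - w‖ := by
      have := (abs_le.mp (hgLip u w)).2; linarith
    have h2 : ⟪v,w⟫ ≤ ⟪v,u⟫ + Mg*‖w - u‖ := by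
      have hcs : ⟪v, w - u⟫ ≤ ‖v‖*‖w - u‖ := real_inner_le_norm v (w - u)
      have h3 : ⟪v, w - u⟫ = ⟪v,w⟫ - ⟪v,u⟫ := inner_sub_right v w u
      have h4 : ‖v‖*‖w - u‖ ≤ Mg*‖w - u‖ :=
        mul_le_mul_of_nonneg_right hvMg (norm_nonneg _)
      linarith
    have h3 : ⟪u,v⟫ - gstar v - b/2*‖v - ydot‖^2 ≤ Gf b u := hGge b hb u v hvSg
    have h4 : b/2*‖v - ydot‖^2 ≤ b/2*D^2 :=
      mul_le_mul_of_nonneg_left (hdist v hvSg) (by linarith)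
    have h5 : 2*Mg*‖w - u‖ ≤ 4*Mg^2/c := by
      have := mul_le_mul_of_nonneg_left hs (by linarith : (0:ℝ) ≤ 2*Mg)
      calc 2*Mg*‖w - u‖ ≤ 2*Mg*(2*Mg/c) := this
      _ = 4*Mg^2/c := by ring
    have h6 : 4*Mg^2/c ≤ ε := by
      rw [hc]
      rw [div_div_eq_mul_div, div_le_iff₀ (by positivity : (0:ℝ) < 4*Mg^2+1)]
      nlinarith [hε, sq_nonneg Mg]
    have h7 : ⟪u,v⟫ = ⟪v,u⟫ := real_inner_comm v u
    have h8 : ‖u - w‖ = ‖w - u‖ := norm_sub_rev u w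
    rw [h8] at h1
    rw [h7] at h3
    linarith
  -- ## Smoothness upper bound of `Gf (β k)` obtained from the `y`-update
  have hGsm : ∀ (k : ℕ) (u : EuclideanSpace ℝ (Fin n)),
      Gf (β k) u ≤ ⟪K (xhat k), yseq (k+1)⟫ - gstar (yseq (k+1))
        - β k/2*‖yseq (k+1) - ydot‖^2
        + ⟪yseq (k+1), u - K (xhat k)⟫ + 1/(2*β k)*‖u - K (xhat k)‖^2 := by
    intro k u
    have hymin : IsMinOn (fun w => (gstar w + ⟪-(K (xhat k)), w⟫) + β k/2*‖w - ydot‖^2)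
        Sg (yseq (k+1)) := by
      refine isMinOn_iff.mpr (fun w hw => ?_)
      have h := (isMaxOn_iff.mp (hyup k).2) w hw
      rw [inner_neg_left, inner_neg_left]
      linarith
    have hφy : ConvexOn ℝ Sg (fun w => gstar w + ⟪-(K (xhat k)), w⟫) :=
      hgstar.add (asgard_convexOn_inner Sg hSg _)
    have hy3 := asgard_three_point Sg hSg _ hφy (β k) (hβpos k).le ydot (yseq (k+1))
      (hyup k).1 hymin
    refine csSup_le (hSgne.image _) ?_
    rintro r ⟨zz, hzz, rfl⟩
    dsimp only
    have h1 := hy3 zz hzz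
    simp only [inner_neg_left] at h1
    have h2 : ⟪u,zz⟫ = ⟪K (xhat k), zz⟫ + ⟪u - K (xhat k), zz⟫ := by
      rw [← inner_add_left]
      congr 1
      module
    have h3 : ⟪u - K (xhat k), zz⟫
        = ⟪u - K (xhat k), yseq (k+1)⟫ + ⟪u - K (xhat k), zz - yseq (k+1)⟫ := by
      rw [← inner_add_right]
      congr 1
      module
    have h4 : ⟪u - K (xhat k), zz - yseq (k+1)⟫
        ≤ ‖u - K (xhat k)‖*‖zz - yseq (k+1)‖ := real_inner_le_norm _ _
    have h5 : ‖u - K (xhat k)‖*‖zz - yseq (k+1)‖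
        ≤ β k/2*‖zz - yseq (k+1)‖^2 + 1/(2*β k)*‖u - K (xhat k)‖^2 := by
      have hbk := hβpos k
      have he : 1/(2*β k)*‖u - K (xhat k)‖^2*(2*β k) = ‖u - K (xhat k)‖^2 := by
        field_simp
      nlinarith [sq_nonneg (β k*‖zz - yseq (k+1)‖ - ‖u - K (xhat k)‖), hbk, he]
    have h7 : ⟪yseq (k+1), u - K (xhat k)⟫ = ⟪u - K (xhat k), yseq (k+1)⟫ :=
      real_inner_comm _ _
    have h8 : ⟪K (xhat k), yseq (k+1)⟫ = ⟪yseq (k+1), K (xhat k)⟫ := real_inner_comm _ _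
    -- combine
    rw [h2, h3]
    rw [h8] at h1 ⊢
    rw [h7]
    linarith [h1, h4, h5]
  -- ## The one-iteration inequality
  have key0 : ∀ k : ℕ,
      f (x (k+1)) + Gf (β k) (K (x (k+1))) - Fs ≤
        (1 - τ k) * (f (x k) + Gf (β (k-1)) (K (x k)) - Fs)
        + L k/2 * (‖((1-τ k)•(x k) + τ k•xs) - xhat k‖^2
            - ‖((1-τ k)•(x k) + τ k•xs) - x (k+1)‖^2) := by
    intro k
    have hxkSf : x k ∈ Sf := by
      cases k with
      | zero => exact hx0
      | succ j => exact (hxup j).1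
    have hzSf : (1-τ k)•(x k) + τ k•xs ∈ Sf :=
      hSf hxkSf hxs (by linarith [hτle k]) (hτpos k).le (by ring)
    set zc := (1-τ k)•(x k) + τ k•xs with hzc
    set yp := yseq (k+1) with hyp
    set xp := x (k+1) with hxp
    -- (iii)
    have h3G : Gf (β k) (K xp) ≤ ⟪yp, K xp⟫ - gstar yp - β k/2*‖yp - ydot‖^2
        + L k/2*‖xp - xhat k‖^2 := by
      have h := hGsm k (K xp)
      have hKsub : K xp - K (xhat k) = K (xp - xhat k) := (map_sub K xp (xhat k)).symm
      have hKn : ‖K (xp - xhat k)‖ ≤ ‖K‖*‖xp - xhat k‖ := K.le_opNorm _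
      have hKsq : ‖K (xp - xhat k)‖^2 ≤ ‖K‖^2*‖xp - xhat k‖^2 := by
        nlinarith [hKn, norm_nonneg (K (xp - xhat k)),
          mul_nonneg (norm_nonneg (K : EuclideanSpace ℝ (Fin p) →L[ℝ] EuclideanSpace ℝ (Fin n))) (norm_nonneg (xp - xhat k))]
      have hKq : 1/(2*β k)*‖K xp - K (xhat k)‖^2 ≤ L k/2*‖xp - xhat k‖^2 := by
        rw [hKsub, hL k]
        have := mul_le_mul_of_nonneg_left hKsq
          (le_of_lt (div_pos one_pos (by linarith [hβpos k] : (0:ℝ) < 2*β k)))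
        calc 1/(2*β k)*‖K (xp - xhat k)‖^2 ≤ 1/(2*β k)*(‖K‖^2*‖xp - xhat k‖^2) := this
        _ = ‖K‖^2/β k/2*‖xp - xhat k‖^2 := by ring
      have hsubr : ⟪yp, K xp - K (xhat k)⟫ = ⟪yp, K xp⟫ - ⟪yp, K (xhat k)⟫ :=
        inner_sub_right _ _ _
      have hcm : ⟪K (xhat k), yp⟫ = ⟪yp, K (xhat k)⟫ := real_inner_comm _ _
      linarith [h, hKq]
    -- (iv)
    have hφx : ConvexOn ℝ Sf (fun w => f w + ⟪(ContinuousLinearMap.adjoint K) yp, w⟫) :=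
      hf.add (asgard_convexOn_inner Sf hSf _)
    have hxmin' : IsMinOn
        (fun w => (f w + ⟪(ContinuousLinearMap.adjoint K) yp, w⟫) + L k/2*‖w - xhat k‖^2)
        Sf xp := by
      have h := (hxup k).2
      exact h
    have h4x := asgard_three_point Sf hSf _ hφx (L k) (hLnn k) (xhat k) xp (hxup k).1
      hxmin' zc hzSf
    simp only [ContinuousLinearMap.adjoint_inner_left] at h4x
    -- (v)
    have h5a : f zc ≤ (1-τ k)*f (x k) + τ k*f xs := by
      have h := hf.2 hxkSf hxs (by linarith [hτle k] : (0:ℝ) ≤ 1-τ k) (hτpos k).le (by ring)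
      simpa [smul_eq_mul] using h
    have h5b : ⟪yp, K zc⟫ = (1-τ k)*⟪yp, K (x k)⟫ + τ k*⟪yp, K xs⟫ := by
      rw [hzc, map_add, map_smul, map_smul, inner_add_right,
        real_inner_smul_right, real_inner_smul_right]
    -- (vi)
    have h6 : f xs + ⟪yp, K xs⟫ - gstar yp ≤ Fs := by
      have h := (hsaddle xs hxs yp (hyup k).1).1
      have hcm : ⟪K xs, yp⟫ = ⟪yp, K xs⟫ := real_inner_comm _ _
      rw [hFs]; linarith
    -- (vii)
    have hbr : (1-τ k)*(⟪yp, K (x k)⟫ - gstar yp - β k/2*‖yp - ydot‖^2)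
        ≤ (1-τ k)*(Gf (β (k-1)) (K (x k))) + (1-τ k)*(τ k*β k/2*‖yp - ydot‖^2) := by
      cases k with
      | zero => simp [hτ0]
      | succ j =>
        have h1 := hGge (β j) (hβpos j).le (K (x (j+1))) yp (hyup (j+1)).1
        have h1ne : (1:ℝ)+τ (j+1) ≠ 0 := by
          have := hτpos (j+1); intro hcon; linarith
        have h2 : β j = (1+τ (j+1))*β (j+1) := by
          rw [hβ j, mul_comm, div_mul_cancel₀ _ h1ne]
        have h2P : β j/2*‖yp - ydot‖^2 = (1+τ (j+1))*β (j+1)/2*‖yp - ydot‖^2 := by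
          rw [h2]
        have hcm : ⟪K (x (j+1)), yp⟫ = ⟪yp, K (x (j+1))⟫ := real_inner_comm _ _
        rw [hcm] at h1
        have hnn : (0:ℝ) ≤ 1 - τ (j+1) := by linarith [hτle (j+1)]
        have : ⟪yp, K (x (j+1))⟫ - gstar yp - β (j+1)/2*‖yp - ydot‖^2
            ≤ Gf (β ((j+1)-1)) (K (x (j+1))) + τ (j+1)*β (j+1)/2*‖yp - ydot‖^2 := by
          have hidx : (j+1)-1 = j := rfl
          rw [hidx]
          linarith [h1, h2P]
        have := mul_le_mul_of_nonneg_left this hnn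
        linarith [this]
    have hsad2 : τ k*(f xs + ⟪yp, K xs⟫ - gstar yp - β k/2*‖yp - ydot‖^2)
        ≤ τ k*(Fs - β k/2*‖yp - ydot‖^2) :=
      mul_le_mul_of_nonneg_left (by linarith [h6]) (hτpos k).le
    have hdrop : (1-τ k)*(τ k*β k/2*‖yp - ydot‖^2) ≤ τ k*(β k/2*‖yp - ydot‖^2) := by
      nlinarith [mul_nonneg (mul_nonneg (mul_nonneg (hτpos k).le (hτpos k).le) (hβpos k).le)
        (sq_nonneg ‖yp - ydot‖)]
    linarith [h3G, h4x, h5a, h5b, hbr, hsad2, hdrop]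
  -- ## Finish
  intro k hk
  obtain ⟨j, rfl⟩ : ∃ j, k = j + 1 := ⟨k-1, (Nat.succ_pred_eq_of_pos hk).symm⟩
  have hβb : β j/2*D^2 ≤ β 0/(((j:ℝ)+1)+1)*D^2 := by
    refine mul_le_mul_of_nonneg_right ?_ (sq_nonneg D)
    rw [div_le_div_iff₀ (by norm_num) (by positivity)]
    have := hβub j
    linarith
  by_cases hK : ‖K‖ = 0
  · -- degenerate case `K = 0`
    have hL0 : ∀ m : ℕ, L m = 0 := by
      intro m; rw [hL m, hK]; norm_num
    have hA : ∀ i : ℕ, f (x (i+1)) + Gf (β i) (K (x (i+1))) - Fs ≤ 0 := by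
      intro i; induction i with
      | zero =>
        have h := key0 0
        rw [hτ0, hL0 0] at h
        norm_num at h
        linarith [h]
      | succ i ih =>
        have h := key0 (i+1)
        rw [hL0 (i+1)] at h
        norm_num at h
        have hnn : (0:ℝ) ≤ 1 - τ (i+1) := by linarith [hτle (i+1)]
        have h2 := mul_le_mul_of_nonneg_left ih hnn
        rw [mul_zero] at h2
        linarith [h, h2]
    have hgb := hgG (β j) (hβpos j).le (K (x (j+1)))
    have hT := hA j
    have hz : ‖K‖^2/(2*β 0*((j+1:ℕ):ℝ))*‖x 0 - xs‖^2 = 0 := by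
      rw [hK]; norm_num
    rw [hz]  -- might fail if goal shape differs; fallback below
    push_cast
    linarith [hgb, hT, hβb]
  · -- main case `‖K‖ ≠ 0`
    have hKpos : 0 < ‖K‖ := lt_of_le_of_ne (norm_nonneg _) (Ne.symm hK)
    -- momentum sequence z
    let zseq : ℕ → EuclideanSpace ℝ (Fin p) :=
      fun m => Nat.rec (x 0) (fun i zi => zi + (τ i)⁻¹ • (x (i+1) - xhat i)) m
    have hz0 : zseq 0 = x 0 := rfl
    have hzs : ∀ i, zseq (i+1) = zseq i + (τ i)⁻¹ • (x (i+1) - xhat i) := fun i => rfl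
    have hη' : ∀ i, η (i+1) = τ (i+1)*(1 - τ i)/τ i := by
      intro i
      rw [hη i, hL (i+1), hL i]
      have hβi := hβpos i
      have hβi1 := hβpos (i+1)
      have hm : ‖K‖^2/β (i+1) / (‖K‖^2/β i) = 1 + τ (i+1) := by
        rw [hβ i]
        have h1 : (0:ℝ) < 1 + τ (i+1) := by linarith [hτpos (i+1)]
        field_simp
      rw [hm]
      have hτi := hτpos i
      have hτi1 := hτpos (i+1)
      have hden : 0 < τ i^2 + (1+τ (i+1))*τ (i+1) := by positivity
      have hcb := hcub i
      rw [div_eq_div_iff (ne_of_gt hden) (ne_of_gt hτi)]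
      linear_combination (τ i - 1) * hcb
    have hid : ∀ i, xhat i = (1-τ i)•(x i) + τ i•(zseq i) := by
      intro i; induction i with
      | zero =>
        rw [hxhat0, hτ0, hz0]
        module
      | succ i ih =>
        have hτne : τ i ≠ 0 := ne_of_gt (hτpos i)
        have hsm : τ i•(zseq (i+1)) = τ i•(zseq i) + (x (i+1) - xhat i) := by
          rw [hzs i, smul_add, smul_inv_smul₀ hτne]
        have hzj : τ i • (zseq (i+1) - x (i+1)) = (1-τ i) • (x (i+1) - x i) := by
          rw [smul_sub, hsm, ih]
          module
        have hkey : η (i+1)•(x (i+1) - x i) = τ (i+1)•(zseq (i+1) - x (i+1)) := by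
          rw [hη' i]
          calc (τ (i+1)*(1-τ i)/τ i)•(x (i+1) - x i)
              = (τ (i+1)/τ i)•((1-τ i)•(x (i+1) - x i)) := by
                rw [smul_smul]; congr 1; ring
          _ = (τ (i+1)/τ i)•(τ i•(zseq (i+1) - x (i+1))) := by rw [hzj]
          _ = τ (i+1)•(zseq (i+1) - x (i+1)) := by
                rw [smul_smul]; congr 1; field_simp
        rw [hxhat i, hkey]
        module
    have hns : ∀ (t : ℝ) (w : EuclideanSpace ℝ (Fin p)), ‖t•w‖^2 = t^2*‖w‖^2 := by
      intro t w
      rw [norm_smul, Real.norm_eq_abs, mul_pow, sq_abs]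
    have hquad : ∀ i, L i/2*(‖((1-τ i)•(x i) + τ i•xs) - xhat i‖^2
        - ‖((1-τ i)•(x i) + τ i•xs) - x (i+1)‖^2)
        = τ i^2*L i/2*(‖xs - zseq i‖^2 - ‖xs - zseq (i+1)‖^2) := by
      intro i
      have hτne : τ i ≠ 0 := ne_of_gt (hτpos i)
      have hsm : τ i•(zseq (i+1)) = τ i•(zseq i) + (x (i+1) - xhat i) := by
        rw [hzs i, smul_add, smul_inv_smul₀ hτne]
      have e0 : ((1-τ i)•(x i) + τ i•xs) - xhat i = τ i•(xs - zseq i) := by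
        rw [hid i]
        module
      have e1 : ((1-τ i)•(x i) + τ i•xs) - x (i+1) = τ i•(xs - zseq (i+1)) := by
        have h1 : τ i•(xs - zseq (i+1)) = τ i•xs - (τ i•(zseq i) + (x (i+1) - xhat i)) := by
          rw [smul_sub, hsm]
        rw [h1, hid i]
        module
      rw [e0, e1, hns, hns]
      ring
    have htel : ∀ i : ℕ, f (x (i+1)) + Gf (β i) (K (x (i+1))) - Fs
        ≤ τ i^2*L i/2*(‖xs - zseq 0‖^2 - ‖xs - zseq (i+1)‖^2) := by
      intro i; induction i with
      | zero =>
        have h := key0 0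
        have e1 : zseq (0+1) = x (0+1) := by
          rw [hzs 0, hz0, hxhat0, hτ0, inv_one, one_smul]
          module
        have e2 : (1 - (1:ℝ))•(x 0) + (1:ℝ)•xs = xs := by module
        rw [hτ0, e2, hxhat0] at h
        rw [hτ0, hz0, e1]
        linarith [h]
      | succ i ih =>
        have h := key0 (i+1)
        have hq := hquad (i+1)
        have hw : (1-τ (i+1))*(τ i^2*L i) = τ (i+1)^2*L (i+1) := by
          rw [hL i, hL (i+1), hβ i]
          have hβi := (hβpos i).ne'
          have h1 : (1:ℝ) + τ (i+1) ≠ 0 := by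
            have := hτpos (i+1); intro hcon; linarith
          field_simp
          linear_combination (-1) * (hτ i).2
        have hnn : (0:ℝ) ≤ 1 - τ (i+1) := by linarith [hτle (i+1)]
        have h2 := mul_le_mul_of_nonneg_left ih hnn
        have h3 : (1-τ (i+1))*(τ i^2*L i/2*(‖xs - zseq 0‖^2 - ‖xs - zseq (i+1)‖^2))
            = τ (i+1)^2*L (i+1)/2*(‖xs - zseq 0‖^2 - ‖xs - zseq (i+1)‖^2) := by
          rw [← hw]; ring
        simp only [Nat.add_sub_cancel] at h
        linarith [h, hq, h2, h3]
    have hT := htel j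
    have hgb := hgG (β j) (hβpos j).le (K (x (j+1)))
    have hΔ : ‖xs - zseq 0‖^2 = ‖x 0 - xs‖^2 := by rw [hz0, norm_sub_rev]
    rw [hΔ] at hT
    have hw0 : (0:ℝ) ≤ τ j^2*L j/2 := by
      have := hLnn j
      positivity
    have hdropΔ : τ j^2*L j/2*(‖x 0 - xs‖^2 - ‖xs - zseq (j+1)‖^2)
        ≤ τ j^2*L j/2*‖x 0 - xs‖^2 := by
      nlinarith [mul_nonneg hw0 (sq_nonneg ‖xs - zseq (j+1)‖)]
    have hco : τ j^2*L j/2*‖x 0 - xs‖^2 ≤ ‖K‖^2/(2*β 0*((j:ℝ)+1))*‖x 0 - xs‖^2 := by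
      refine mul_le_mul_of_nonneg_right ?_ (sq_nonneg _)
      rw [hL j]
      have h1 : τ j^2*(‖K‖^2/β j)/2 = (τ j^2*‖K‖^2)/(2*β j) := by ring
      rw [h1, div_le_div_iff₀ (by linarith [hβpos j] : (0:ℝ) < 2*β j) (by positivity)]
      nlinarith [mul_le_mul_of_nonneg_left (hcge j) (by positivity : (0:ℝ) ≤ 2*‖K‖^2)]
    push_cast
    linarith [hT, hgb, hβb, hdropΔ, hco]
end

section
/- Assume f and g* are merely convex (μ_f = μ_{g*} = 0), a saddle point (x⋆, y⋆) of L exists, and f* is M_{f*}-Lipschitz continuous on dom f*. Run ASGARD+ with τ₀ := 1, and for k ≥ 0 let τ_{k+1} be the unique root in (0,1) of τ³ + τ² + τ_k² τ − τ_k² = 0, β_{k+1} := β_k/(1+τ_{k+1}), L_k := ‖K‖²/β_k, m_{k+1} := L_{k+1}/L_k, η_{k+1} := (1−τ_k)τ_k/(τ_k² + m_{k+1}τ_{k+1}). Then for all k ≥ 1, D(ỹ^k) − D⋆ ≤ (‖K‖²/(2β₀k))(‖x⁰‖ + M_{f*})² + (β₀/(k+1))‖ẏ − y⋆‖². -/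
open RealInnerProductSpace Set


lemma strongMin {E : Type*} [NormedAddCommGroup E] [InnerProductSpace ℝ E]
    {s : Set E} {f : E → ℝ} (hf : ConvexOn ℝ s f) {b a xm : E} {c : ℝ} (hc : 0 ≤ c)
    (hxm : xm ∈ s)
    (hmin : IsMinOn (fun z => f z + ⟪b, z⟫ + c / 2 * ‖z - a‖ ^ 2) s xm) :
    ∀ z ∈ s, f xm + ⟪b, xm⟫ + c / 2 * ‖xm - a‖ ^ 2 + c / 2 * ‖z - xm‖ ^ 2 ≤
      f z + ⟪b, z⟫ + c / 2 * ‖z - a‖ ^ 2 := by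
  intro z hz
  set G : ℝ := (f z - f xm) + (⟪b, z⟫ - ⟪b, xm⟫) + c * ⟪z - xm, xm - a⟫ with hG
  set H : ℝ := c / 2 * ‖z - xm‖ ^ 2 with hH
  have hHnn : 0 ≤ H := by rw [hH]; positivity
  have key : ∀ t : ℝ, 0 < t → t ≤ 1 → 0 ≤ G + t * H := by
    intro t ht0 ht1
    have hxt : (1 - t) • xm + t • z ∈ s :=
      hf.1 hxm hz (show (0:ℝ) ≤ 1 - t by linarith) ht0.le (by ring)
    have hmin' := isMinOn_iff.mp hmin _ hxt
    have hconv : f ((1 - t) • xm + t • z) ≤ (1 - t) * f xm + t * f z := by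
      have := hf.2 hxm hz (show (0:ℝ) ≤ 1 - t by linarith) ht0.le (by ring)
      simpa [smul_eq_mul] using this
    have e1 : ((1 - t) • xm + t • z) - a = (xm - a) + t • (z - xm) := by
      rw [smul_sub, sub_smul]; module
    have e2 : ‖(xm - a) + t • (z - xm)‖ ^ 2
        = ‖xm - a‖ ^ 2 + 2 * t * ⟪z - xm, xm - a⟫ + t ^ 2 * ‖z - xm‖ ^ 2 := by
      rw [norm_add_sq_real, real_inner_smul_right, norm_smul, real_inner_comm]
      rw [mul_pow, Real.norm_eq_abs, sq_abs]
      ring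
    have e3 : ⟪b, (1 - t) • xm + t • z⟫ = (1 - t) * ⟪b, xm⟫ + t * ⟪b, z⟫ := by
      rw [inner_add_right, real_inner_smul_right, real_inner_smul_right]
    have h6 : f xm + ⟪b, xm⟫ + c / 2 * ‖xm - a‖ ^ 2 ≤
        ((1 - t) * f xm + t * f z) + ((1 - t) * ⟪b, xm⟫ + t * ⟪b, z⟫)
        + c / 2 * (‖xm - a‖ ^ 2 + 2 * t * ⟪z - xm, xm - a⟫ + t ^ 2 * ‖z - xm‖ ^ 2) := by
      calc f xm + ⟪b, xm⟫ + c / 2 * ‖xm - a‖ ^ 2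
          ≤ f ((1 - t) • xm + t • z) + ⟪b, (1 - t) • xm + t • z⟫
            + c / 2 * ‖((1 - t) • xm + t • z) - a‖ ^ 2 := hmin'
        _ ≤ _ := by rw [e3, e1, e2]; linarith
    have h7 : 0 ≤ t * (G + t * H) := by
      rw [hG, hH]; nlinarith [h6]
    exact nonneg_of_mul_nonneg_right h7 ht0
  have egoal : f z + ⟪b, z⟫ + c / 2 * ‖z - a‖ ^ 2
      - (f xm + ⟪b, xm⟫ + c / 2 * ‖xm - a‖ ^ 2 + c / 2 * ‖z - xm‖ ^ 2) = G := by
    have e5 : ‖z - a‖ ^ 2 = ‖z - xm‖ ^ 2 + 2 * ⟪z - xm, xm - a⟫ + ‖xm - a‖ ^ 2 := by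
      have h : z - a = (z - xm) + (xm - a) := by abel
      rw [h, norm_add_sq_real]; try ring
    rw [hG, e5]; ring
  have hGnn : 0 ≤ G := by
    by_contra hcon
    push_neg at hcon
    set t : ℝ := min 1 (-G / (2 * (H + 1))) with htdef
    have ht0 : 0 < t := lt_min one_pos (div_pos (by linarith) (by positivity))
    have ht1 : t ≤ 1 := min_le_left _ _
    have h5 : (-G / (2 * (H + 1))) * H ≤ -G / 2 := by
      rw [div_mul_eq_mul_div, div_le_div_iff₀ (by positivity) (by norm_num)]
      nlinarith
    have h8 : t * H ≤ (-G / (2 * (H + 1))) * H :=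
      mul_le_mul_of_nonneg_right (min_le_right _ _) hHnn
    have := key t ht0 ht1
    linarith
  linarith

private lemma tauAux (r s t : ℝ) (hr : 0 ≤ r) (h0 : 0 < t) (h1 : t < 1) (hs0 : 0 < s)
    (ih : 1 ≤ (r + 1) * s)
    (hc : t^2 * (1 + t) = s^2 * (1 - t))
    (hcon : (r + 1 + 1) * t < 1) : False := by
  have hr1 : (0:ℝ) < r + 1 := by linarith
  have hr2 : (0:ℝ) < r + 2 := by linarith
  have b2 : 0 < t * (r + 2) := mul_pos h0 hr2
  have b1 : t * (r + 2) < 1 := by nlinarith [hcon]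
  have a2 : 0 < 1 - t := by linarith
  have a1 : 1 ≤ (r + 1)^2 * s^2 := by nlinarith [ih]
  have a4 : (r+1)^2 * (s^2 * (1 - t)) = (r+1)^2 * (t^2 + t^3) := by
    have h : s^2 * (1 - t) = t^2 + t^3 := by linear_combination -hc
    rw [h]
  have a3 : 1 - t ≤ (r + 1)^2 * (t^2 + t^3) := by
    nlinarith [mul_le_mul_of_nonneg_right a1 a2.le, a4]
  have c1 : (t * (r+2))^2 < 1 := pow_lt_one₀ b2.le b1 two_ne_zero
  have c2 : (t * (r+2))^3 < 1 := pow_lt_one₀ b2.le b1 three_ne_zero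
  have c1' : t^2 * (r+2)^3 < r + 2 := by
    have h := mul_lt_mul_of_pos_right c1 hr2
    nlinarith [h]
  have c2' : t^3 * (r+2)^3 < 1 := by nlinarith [c2]
  have e : t^2 * (r+2)^3 + t^3 * (r+2)^3 < (r+2) + 1 := by linarith
  have d1 : (1-t) * (r+2)^3 ≤ (r + 1)^2 * (t^2 + t^3) * (r+2)^3 :=
    mul_le_mul_of_nonneg_right a3 (by positivity)
  have d2 : (r + 1)^2 * (t^2 + t^3) * (r+2)^3 < (r+1)^2 * ((r+2)+1) := by
    have h := mul_lt_mul_of_pos_left e (mul_pos hr1 hr1)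
    nlinarith [h]
  have d3 : (r+2)^3 - (r+2)^2 ≤ (1-t) * (r+2)^3 := by
    have h := mul_lt_mul_of_pos_right b1 (mul_pos hr2 hr2)
    nlinarith [h]
  nlinarith [d1, d2, d3, hr1]

set_option maxHeartbeats 4000000 in
/-- Theorem 1(c): dual objective residual bound of ASGARD+ in the
general convex case `μ_f = μ_{g*} = 0`, with `f*` being `M_{f*}`-Lipschitz continuous.
For all `k ≥ 1`, `D(ỹ^k) - D⋆ ≤ (‖K‖²/(2β₀k))(‖x⁰‖+M_{f*})² + (β₀/(k+1))‖ẏ-y⋆‖²`,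
where `D(y) = f*(-Kᵀy) + g*(y)` and `D⋆ = D(y⋆)`. -/
theorem stmt6 {p n : ℕ}
    (f : EuclideanSpace ℝ (Fin p) → ℝ) (Sf : Set (EuclideanSpace ℝ (Fin p)))
    (gstar : EuclideanSpace ℝ (Fin n) → ℝ) (Sg : Set (EuclideanSpace ℝ (Fin n)))
    (K : EuclideanSpace ℝ (Fin p) →L[ℝ] EuclideanSpace ℝ (Fin n))
    (hSf : Convex ℝ Sf) (hSg : Convex ℝ Sg)
    (hSfc : IsClosed Sf) (hSgc : IsClosed Sg)
    (hf : ConvexOn ℝ Sf f) (hgstar : ConvexOn ℝ Sg gstar)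
    -- `f*` is the Fenchel conjugate of `f`; it is `M_{f*}`-Lipschitz (hence finite-valued)
    (fstar : EuclideanSpace ℝ (Fin p) → ℝ)
    (hfstar : ∀ w, IsLUB {r : ℝ | ∃ x' ∈ Sf, r = ⟪w, x'⟫ - f x'} (fstar w))
    (Mf : ℝ) (hMf : 0 ≤ Mf)
    (hfLip : ∀ w w' : EuclideanSpace ℝ (Fin p), |fstar w - fstar w'| ≤ Mf * ‖w - w'‖)
    -- a saddle point of the Lagrangian exists
    (xs : EuclideanSpace ℝ (Fin p)) (ys : EuclideanSpace ℝ (Fin n))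
    (hxs : xs ∈ Sf) (hys : ys ∈ Sg)
    (hsaddle : ∀ x ∈ Sf, ∀ y ∈ Sg,
      f xs + ⟪K xs, y⟫ - gstar y ≤ f xs + ⟪K xs, ys⟫ - gstar ys ∧
      f xs + ⟪K xs, ys⟫ - gstar ys ≤ f x + ⟪K x, ys⟫ - gstar ys)
    -- parameters of ASGARD+
    (τ β L η : ℕ → ℝ)
    (hτ0 : τ 0 = 1)
    (hτ : ∀ k, τ (k + 1) ∈ Ioo (0 : ℝ) 1 ∧
      (τ (k + 1)) ^ 3 + (τ (k + 1)) ^ 2 + (τ k) ^ 2 * τ (k + 1) - (τ k) ^ 2 = 0)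
    (hβ0 : 0 < β 0)
    (hβ : ∀ k, β (k + 1) = β k / (1 + τ (k + 1)))
    (hL : ∀ k, L k = ‖K‖ ^ 2 / β k)
    (hη : ∀ k, η (k + 1) = (1 - τ k) * τ k / ((τ k) ^ 2 + (L (k + 1) / L k) * τ (k + 1)))
    -- the iterates of ASGARD+
    (ydot : EuclideanSpace ℝ (Fin n))
    (x xhat : ℕ → EuclideanSpace ℝ (Fin p)) (yseq ytil : ℕ → EuclideanSpace ℝ (Fin n))
    (hx0 : x 0 ∈ Sf) (hxhat0 : xhat 0 = x 0) (hytil0 : ytil 0 ∈ Sg)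
    (hyup : ∀ k, yseq (k + 1) ∈ Sg ∧
      IsMaxOn (fun z => ⟪K (xhat k), z⟫ - gstar z - β k / 2 * ‖z - ydot‖ ^ 2) Sg
        (yseq (k + 1)))
    (hxup : ∀ k, x (k + 1) ∈ Sf ∧
      IsMinOn (fun z => f z + ⟪(ContinuousLinearMap.adjoint K) (yseq (k + 1)), z⟫ +
        L k / 2 * ‖z - xhat k‖ ^ 2) Sf (x (k + 1)))
    (hxhat : ∀ k, xhat (k + 1) = x (k + 1) + η (k + 1) • (x (k + 1) - x k))
    (hytil : ∀ k, ytil (k + 1) = (1 - τ k) • ytil k + τ k • yseq (k + 1)) :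
    ∀ k : ℕ, 1 ≤ k →
      (fstar (-((ContinuousLinearMap.adjoint K) (ytil k))) + gstar (ytil k)) -
        (fstar (-((ContinuousLinearMap.adjoint K) ys)) + gstar ys) ≤
        ‖K‖ ^ 2 / (2 * β 0 * (k : ℝ)) * (‖x 0‖ + Mf) ^ 2 +
        β 0 / ((k : ℝ) + 1) * ‖ydot - ys‖ ^ 2 := by
    -- basic facts about τ
  have hτpos : ∀ k, 0 < τ k := by
    intro k
    cases k with
    | zero => rw [hτ0]; norm_num
    | succ k => exact (hτ k).1.1
  have hτle : ∀ k, τ k ≤ 1 := by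
    intro k
    cases k with
    | zero => rw [hτ0]
    | succ k => exact (hτ k).1.2.le
  have h1τpos : ∀ j, 0 < 1 - τ (j + 1) := by
    intro j; have := (hτ j).1.2; linarith
  have hcube : ∀ k, (τ (k+1))^2 * (1 + τ (k+1)) = (τ k)^2 * (1 - τ (k+1)) := by
    intro k; linear_combination (hτ k).2
  have hτlb : ∀ k : ℕ, 1 ≤ ((k:ℝ) + 1) * τ k := by
    intro k
    induction k with
    | zero => simp [hτ0]
    | succ k ih =>
      by_contra hcon
      push_neg at hcon
      push_cast at hcon
      exact tauAux (k:ℝ) (τ k) (τ (k+1)) (Nat.cast_nonneg k) (hτ k).1.1 (hτ k).1.2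
        (hτpos k) ih (hcube k) hcon
  -- basic facts about β and L
  have hβpos : ∀ k, 0 < β k := by
    intro k
    induction k with
    | zero => exact hβ0
    | succ k ih => rw [hβ k]; exact div_pos ih (by have := (hτ k).1.1; linarith)
  have hβrec : ∀ k, β (k+1) * (1 + τ (k+1)) = β k := by
    intro k
    have h1 : (0:ℝ) < 1 + τ (k+1) := by have := (hτ k).1.1; linarith
    rw [hβ k]; field_simp
  have hβub : ∀ k, β k * ((k:ℝ) + 2) ≤ 2 * β 0 := by
    intro k
    induction k with
    | zero => push_cast; linarith [hβ0]
    | succ k ih =>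
      have h1 := hβrec k
      have h2 := hτlb (k+1)
      push_cast at h2 ⊢
      have h3 := hβpos (k+1)
      have h4 := (hτ k).1.1
      have h5 : β (k+1) * (1 + τ (k+1)) * ((k:ℝ)+2) = β k * ((k:ℝ)+2) := by rw [h1]
      have h6 : 0 ≤ β (k+1) * (((k:ℝ)+2) * τ (k+1) - 1) :=
        mul_nonneg h3.le (by linarith)
      nlinarith [h5, h6, ih]
  have hβstep : ∀ m : ℕ, (1 - τ m) * β (m - 1) ≤ β m := by
    intro m
    cases m with
    | zero => rw [hτ0]; simp [hβpos 0, le_of_lt (hβpos 0)]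
    | succ m =>
      have h1 := hβrec m
      have h2 := hβpos m
      have h3 := (hτ m).1.1
      have h4 := (hτ m).1.2
      simp only [Nat.add_sub_cancel]
      have h5 : (1 - τ (m+1)) * β m = (1 - τ (m+1)^2) * β (m+1) := by
        linear_combination (τ (m+1) - 1) * h1
      nlinarith [h5, mul_nonneg (hβpos (m+1)).le (sq_nonneg (τ (m+1)))]
  have hLnn : ∀ k, 0 ≤ L k := by
    intro k; rw [hL k]; exact div_nonneg (sq_nonneg _) (hβpos k).le
  have hLτ : ∀ k, L (k+1) * τ (k+1)^2 = L k * τ k^2 * (1 - τ (k+1)) := by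
    intro k
    have hβk' : β k ≠ 0 := (hβpos k).ne'
    have h1 : (0:ℝ) < 1 + τ (k+1) := by have := (hτ k).1.1; linarith
    rw [hL, hL, hβ k]
    have h2 : ‖K‖ ^ 2 / (β k / (1 + τ (k + 1))) = ‖K‖^2 * (1 + τ (k+1)) / β k := by
      rw [div_div_eq_mul_div]
    rw [h2, div_mul_eq_mul_div, div_mul_eq_mul_div, div_mul_eq_mul_div,
      div_eq_div_iff hβk' hβk']
    linear_combination ((β k) * ‖K‖^2) * hcube k
  -- the weights w
  set w : ℕ → ℝ := fun m => ∏ j ∈ Finset.range m, (1 - τ (j+1))⁻¹ with hwdef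
  have hw0 : w 0 = 1 := by simp [hwdef]
  have hwsucc : ∀ m, w (m+1) = w m * (1 - τ (m+1))⁻¹ := by
    intro m; simp only [hwdef]; rw [Finset.prod_range_succ]
  have hwpos : ∀ m, 0 < w m := by
    intro m
    simp only [hwdef]
    exact Finset.prod_pos fun j _ => inv_pos.mpr (h1τpos j)
  have hwτ : ∀ m, w (m+1) * (1 - τ (m+1)) = w m := by
    intro m; rw [hwsucc m, mul_assoc, inv_mul_cancel₀ (h1τpos m).ne', mul_one]
  have hwlb : ∀ m : ℕ, ((m:ℝ) + 1) ≤ w m := by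
    intro m
    induction m with
    | zero => rw [hw0]; norm_num
    | succ m ih =>
      have h2 := hτlb (m+1)
      have h4 := hwpos (m+1)
      push_cast at h2 ⊢
      have h1' : w (m+1) * (1 - τ (m+1)) * ((m:ℝ)+2) = w m * ((m:ℝ)+2) := by
        rw [hwτ m]
      have hA : 0 ≤ w (m+1) * (((m:ℝ)+2) * τ (m+1) - 1) :=
        mul_nonneg h4.le (by linarith)
      have hB : ((m:ℝ)+1) * ((m:ℝ)+2) ≤ w m * ((m:ℝ)+2) :=
        mul_le_mul_of_nonneg_right ih (by positivity)
      have hm1 : (0:ℝ) < (m:ℝ) + 1 := by positivity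
      nlinarith [h1', hA, hB, hm1]
  have hwL : ∀ m, w m * (L m * τ m ^ 2) = L 0 := by
    intro m
    induction m with
    | zero => rw [hw0, hτ0]; ring
    | succ m ih =>
      rw [hLτ m]
      calc w (m+1) * (L m * τ m ^ 2 * (1 - τ (m+1)))
          = (w (m+1) * (1 - τ (m+1))) * (L m * τ m ^ 2) := by ring
        _ = w m * (L m * τ m ^ 2) := by rw [hwτ m]
        _ = L 0 := ih
  -- iterate memberships
  have hxSf : ∀ m, x m ∈ Sf := by
    intro m; cases m with
    | zero => exact hx0
    | succ m => exact (hxup m).1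
  have hySg : ∀ m, yseq (m+1) ∈ Sg := fun m => (hyup m).1
  have hytilSg : ∀ m, ytil m ∈ Sg := by
    intro m; induction m with
    | zero => exact hytil0
    | succ m ih =>
      rw [hytil m]
      exact hSg ih (hySg m) (show (0:ℝ) ≤ 1 - τ m by linarith [hτle m]) (hτpos m).le (by ring)
  -- the auxiliary points v
  set v : ℕ → EuclideanSpace ℝ (Fin p) := fun m => (τ m)⁻¹ • (xhat m - (1 - τ m) • x m)
    with hvdef
  have hv0 : v 0 = x 0 := by
    simp only [hvdef, hτ0, hxhat0]
    norm_num
  have hvsucc : ‖K‖ ≠ 0 → ∀ m, v (m+1) = (τ m)⁻¹ • (x (m+1) - (1 - τ m) • x m) := by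
    intro hK m
    have hK0 : 0 < ‖K‖ := lt_of_le_of_ne (norm_nonneg K) (Ne.symm hK)
    have hτm := hτpos m
    have hτm1 := hτpos (m+1)
    have hm : L (m+1) / L m = 1 + τ (m+1) := by
      rw [hL, hL, hβ m]
      have h1 : (0:ℝ) < 1 + τ (m+1) := by linarith
      have h2 : β m ≠ 0 := (hβpos m).ne'
      field_simp
    have hden : τ m^2 + (1 + τ (m+1)) * τ (m+1) = τ m^2 / τ (m+1) := by
      rw [eq_div_iff hτm1.ne']
      linear_combination (hτ m).2
    have hηm : η (m+1) = (1 - τ m) * τ (m+1) / τ m := by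
      rw [hη m, hm, hden, div_div_eq_mul_div]
      rw [div_eq_div_iff (by positivity) hτm.ne']
      ring
    simp only [hvdef]
    rw [hxhat m, hηm]
    match_scalars
    all_goals field_simp
    all_goals try ring
    all_goals try (left; ring)
  have hQ : ∀ (xx : EuclideanSpace ℝ (Fin p)) (m : ℕ),
      L 0 * ‖xx - v (m+1)‖^2 = L 0 * ‖xx - (τ m)⁻¹ • (x (m+1) - (1 - τ m) • x m)‖^2 := by
    intro xx m
    rcases eq_or_ne ‖K‖ 0 with h | h
    · have hL0 : L 0 = 0 := by rw [hL 0, h]; simp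
      rw [hL0]; ring
    · rw [hvsucc h m]
  -- Sf is bounded by Mf
  have hSfb : ∀ x' ∈ Sf, ‖x'‖ ≤ Mf := by
    intro x' hx'
    have hub : ∀ t : ℝ, 0 < t → t * (‖x'‖^2 - Mf * ‖x'‖) ≤ fstar 0 + f x' := by
      intro t ht
      have h1 : ⟪t • x', x'⟫ - f x' ≤ fstar (t • x') :=
        (hfstar (t • x')).1 ⟨x', hx', rfl⟩
      have h2 : fstar (t • x') - fstar 0 ≤ Mf * ‖t • x' - 0‖ :=
        le_trans (le_abs_self _) (hfLip (t • x') 0)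
      have h3 : ⟪t • x', x'⟫ = t * ‖x'‖^2 := by
        rw [real_inner_smul_left, real_inner_self_eq_norm_sq]
      have h4 : ‖t • x' - 0‖ = t * ‖x'‖ := by
        rw [sub_zero, norm_smul, Real.norm_eq_abs, abs_of_pos ht]
      rw [h3] at h1
      rw [h4] at h2
      nlinarith [h1, h2]
    have h5 : ‖x'‖^2 - Mf * ‖x'‖ ≤ 0 := by
      by_contra hcon
      push_neg at hcon
      have h6 := hub ((|fstar 0 + f x'| + 1) / (‖x'‖^2 - Mf * ‖x'‖)) (by positivity)
      rw [div_mul_cancel₀ _ hcon.ne'] at h6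
      linarith [le_abs_self (fstar 0 + f x')]
    rcases eq_or_lt_of_le (norm_nonneg x') with h | h
    · linarith [hMf, h]
    · nlinarith [h5, h]
  -- one-iteration master inequality
  have M : ∀ xx ∈ Sf, ∀ m : ℕ, ∀ y' ∈ Sg,
      f (x (m+1)) + ⟪K (x (m+1)), y'⟫ - gstar y' - β m / 2 * ‖y' - ydot‖^2 ≤
        (1 - τ m) * (f (x m) + ⟪K (x m), yseq (m+1)⟫ - gstar (yseq (m+1))
          - β (m-1) / 2 * ‖yseq (m+1) - ydot‖^2)
        + τ m * (f xx + ⟪K xx, yseq (m+1)⟫ - gstar (yseq (m+1)))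
        + L m * τ m^2 / 2 * ‖xx - v m‖^2
        - L m * τ m^2 / 2 * ‖xx - (τ m)⁻¹ • (x (m+1) - (1 - τ m) • x m)‖^2 := by
    intro xx hxx m y' hy'
    have hτm := hτpos m
    have hτmle : τ m ≤ 1 := hτle m
    -- y-step strong convexity
    have hymin : IsMinOn (fun z => gstar z + ⟪-(K (xhat m)), z⟫ + β m / 2 * ‖z - ydot‖^2)
        Sg (yseq (m+1)) := by
      rw [isMinOn_iff]
      intro z hz
      have h := isMaxOn_iff.mp (hyup m).2 z hz
      simp only [inner_neg_left] at h ⊢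
      linarith [h]
    have Y := strongMin hgstar (hβpos m).le (hySg m) hymin y' hy'
    simp only [inner_neg_left] at Y
    -- x-step strong convexity at the point z
    obtain ⟨z, hzdef⟩ : ∃ z : EuclideanSpace ℝ (Fin p), z = (1 - τ m) • x m + τ m • xx :=
      ⟨_, rfl⟩
    have hzSf : z ∈ Sf := by
      rw [hzdef]; exact hSf (hxSf m) hxx (show (0:ℝ) ≤ 1 - τ m by linarith) hτm.le (by ring)
    have X := strongMin hf (hLnn m) (hxSf (m+1)) (hxup m).2 z hzSf
    -- Cauchy-Schwarz and Young
    have hLmβ : L m * β m = ‖K‖^2 := by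
      rw [hL m]; exact div_mul_cancel₀ _ (hβpos m).ne'
    have CS : ⟪K (x (m+1) - xhat m), y' - yseq (m+1)⟫ ≤
        β m / 2 * ‖y' - yseq (m+1)‖^2 + L m / 2 * ‖x (m+1) - xhat m‖^2 := by
      have h1 : ⟪K (x (m+1) - xhat m), y' - yseq (m+1)⟫ ≤
          ‖K‖ * ‖x (m+1) - xhat m‖ * ‖y' - yseq (m+1)‖ := by
        calc ⟪K (x (m+1) - xhat m), y' - yseq (m+1)⟫
            ≤ ‖K (x (m+1) - xhat m)‖ * ‖y' - yseq (m+1)‖ := real_inner_le_norm _ _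
          _ ≤ ‖K‖ * ‖x (m+1) - xhat m‖ * ‖y' - yseq (m+1)‖ :=
              mul_le_mul_of_nonneg_right (K.le_opNorm _) (norm_nonneg _)
      have h3 : 2 * β m * (β m / 2 * ‖y' - yseq (m+1)‖^2 + L m / 2 * ‖x (m+1) - xhat m‖^2
          - ‖K‖ * ‖x (m+1) - xhat m‖ * ‖y' - yseq (m+1)‖)
          = (β m * ‖y' - yseq (m+1)‖ - ‖K‖ * ‖x (m+1) - xhat m‖)^2
            + (L m * β m - ‖K‖^2) * ‖x (m+1) - xhat m‖^2 := by ring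
      have h4 : 0 ≤ 2 * β m * (β m / 2 * ‖y' - yseq (m+1)‖^2 + L m / 2 * ‖x (m+1) - xhat m‖^2
          - ‖K‖ * ‖x (m+1) - xhat m‖ * ‖y' - yseq (m+1)‖) := by
        rw [h3, hLmβ, sub_self, zero_mul, add_zero]
        exact sq_nonneg _
      have h5 := nonneg_of_mul_nonneg_right h4 (by linarith [hβpos m] : (0:ℝ) < 2 * β m)
      linarith [h1, h5]
    -- inner product expansions
    have hCSexp : ⟪K (x (m+1) - xhat m), y' - yseq (m+1)⟫
        = ⟪K (x (m+1)), y'⟫ - ⟪K (x (m+1)), yseq (m+1)⟫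
          - ⟪K (xhat m), y'⟫ + ⟪K (xhat m), yseq (m+1)⟫ := by
      rw [map_sub, inner_sub_left, inner_sub_right, inner_sub_right]; ring
    have hadj : ⟪(ContinuousLinearMap.adjoint K) (yseq (m+1)), x (m+1)⟫
        = ⟪K (x (m+1)), yseq (m+1)⟫ := by
      rw [ContinuousLinearMap.adjoint_inner_left]
      exact real_inner_comm _ _
    have hadjz : ⟪(ContinuousLinearMap.adjoint K) (yseq (m+1)), z⟫
        = (1 - τ m) * ⟪K (x m), yseq (m+1)⟫ + τ m * ⟪K xx, yseq (m+1)⟫ := by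
      rw [ContinuousLinearMap.adjoint_inner_left, hzdef, map_add, map_smul, map_smul,
        inner_add_right, real_inner_smul_right, real_inner_smul_right,
        real_inner_comm (yseq (m+1)) (K (x m)), real_inner_comm (yseq (m+1)) (K xx)]
    have hconvz : f z ≤ (1 - τ m) * f (x m) + τ m * f xx := by
      have h := hf.2 (hxSf m) hxx (show (0:ℝ) ≤ 1 - τ m by linarith) hτm.le (by ring)
      simpa [smul_eq_mul, ← hzdef] using h
    have hn1 : ‖z - xhat m‖^2 = τ m^2 * ‖xx - v m‖^2 := by
      have hvec : z - xhat m = τ m • (xx - v m) := by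
        simp only [hvdef, hzdef]
        rw [smul_sub, smul_smul, mul_inv_cancel₀ hτm.ne', one_smul]
        module
      rw [hvec, norm_smul, Real.norm_eq_abs, abs_of_pos hτm, mul_pow]
    have hn2 : ‖z - x (m+1)‖^2
        = τ m^2 * ‖xx - (τ m)⁻¹ • (x (m+1) - (1 - τ m) • x m)‖^2 := by
      have hvec : z - x (m+1) = τ m • (xx - (τ m)⁻¹ • (x (m+1) - (1 - τ m) • x m)) := by
        simp only [hzdef]
        rw [smul_sub, smul_smul, mul_inv_cancel₀ hτm.ne', one_smul]
        module
      rw [hvec, norm_smul, Real.norm_eq_abs, abs_of_pos hτm, mul_pow]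
    rw [hn1, hn2, hadj, hadjz] at X
    have hβmul : (1 - τ m) * β (m-1) * ‖yseq (m+1) - ydot‖^2 ≤ β m * ‖yseq (m+1) - ydot‖^2 :=
      mul_le_mul_of_nonneg_right (hβstep m) (sq_nonneg _)
    linarith [Y, X, CS, hconvz, hβmul, hCSexp]
  -- telescoped inequality T
  have T : ∀ xx ∈ Sf, ∀ m : ℕ, ∀ y' ∈ Sg,
      w m * (f (x (m+1)) + ⟪K (x (m+1)), y'⟫ - gstar y' - β m / 2 * ‖y' - ydot‖^2)
        + L 0 / 2 * ‖xx - v (m+1)‖^2 ≤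
      (∑ j ∈ Finset.range (m+1), w j * τ j *
        (f xx + ⟪K xx, yseq (j+1)⟫ - gstar (yseq (j+1))))
        + L 0 / 2 * ‖xx - x 0‖^2 := by
    intro xx hxx m
    induction m with
    | zero =>
      intro y' hy'
      have hM := M xx hxx 0 y' hy'
      have hq := hQ xx 0
      have h10 : 1 - τ 0 = 0 := by rw [hτ0]; ring
      rw [h10, zero_mul, hv0] at hM
      rw [h10] at hq
      rw [hτ0] at hM hq
      simp only [inv_one, one_smul, zero_smul, sub_zero, one_pow, mul_one, zero_add,
        Nat.zero_sub] at hM hq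
      rw [Finset.sum_range_one, hw0, hτ0]
      linarith [hM, hq]
    | succ m ih =>
      intro y' hy'
      have hM := M xx hxx (m+1) y' hy'
      rw [Nat.add_sub_cancel] at hM
      have hq := hQ xx (m+1)
      have hMw := mul_le_mul_of_nonneg_left hM (hwpos (m+1)).le
      have hkey : w (m+1) * ((1 - τ (m+1)) * (f (x (m+1)) + ⟪K (x (m+1)), yseq (m+1+1)⟫
          - gstar (yseq (m+1+1)) - β m / 2 * ‖yseq (m+1+1) - ydot‖^2)
          + τ (m+1) * (f xx + ⟪K xx, yseq (m+1+1)⟫ - gstar (yseq (m+1+1)))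
          + L (m+1) * τ (m+1)^2 / 2 * ‖xx - v (m+1)‖^2
          - L (m+1) * τ (m+1)^2 / 2 *
              ‖xx - (τ (m+1))⁻¹ • (x (m+1+1) - (1 - τ (m+1)) • x (m+1))‖^2)
          = w m * (f (x (m+1)) + ⟪K (x (m+1)), yseq (m+1+1)⟫ - gstar (yseq (m+1+1))
              - β m / 2 * ‖yseq (m+1+1) - ydot‖^2)
            + w (m+1) * τ (m+1) * (f xx + ⟪K xx, yseq (m+1+1)⟫ - gstar (yseq (m+1+1)))
            + L 0 / 2 * ‖xx - v (m+1)‖^2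
            - L 0 / 2 * ‖xx - (τ (m+1))⁻¹ • (x (m+1+1) - (1 - τ (m+1)) • x (m+1))‖^2 := by
        rw [← hwτ m, ← hwL (m+1)]
        ring
      have hih := ih (yseq (m+1+1)) (hySg (m+1))
      rw [Finset.sum_range_succ]
      linarith [hMw, hkey, hih, hq]
  -- sum of the weights
  have hSw : ∀ m : ℕ, ∑ j ∈ Finset.range (m+1), w j * τ j = w m := by
    intro m
    induction m with
    | zero => rw [Finset.sum_range_one, hw0, hτ0]; ring
    | succ m ih =>
      rw [Finset.sum_range_succ, ih]
      linarith [hwτ m]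
  -- Jensen-type inequality P
  have P : ∀ (xx : EuclideanSpace ℝ (Fin p)), ∀ m : ℕ,
      w m * (gstar (ytil (m+1)) - ⟪K xx, ytil (m+1)⟫) ≤
      ∑ j ∈ Finset.range (m+1), w j * τ j * (gstar (yseq (j+1)) - ⟪K xx, yseq (j+1)⟫) := by
    intro xx m
    induction m with
    | zero =>
      have h1 : ytil 1 = yseq 1 := by
        rw [hytil 0, hτ0]
        simp
      rw [h1, Finset.sum_range_one, hw0, hτ0]
      linarith
    | succ m ih =>
      have hcv : gstar (ytil (m+1+1)) - ⟪K xx, ytil (m+1+1)⟫ ≤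
          (1 - τ (m+1)) * (gstar (ytil (m+1)) - ⟪K xx, ytil (m+1)⟫)
          + τ (m+1) * (gstar (yseq (m+1+1)) - ⟪K xx, yseq (m+1+1)⟫) := by
        have hg := hgstar.2 (hytilSg (m+1)) (hySg (m+1))
          (show (0:ℝ) ≤ 1 - τ (m+1) by linarith [(hτ m).1.2]) (hτpos (m+1)).le (by ring)
        simp only [smul_eq_mul] at hg
        rw [hytil (m+1)]
        rw [inner_add_right, real_inner_smul_right, real_inner_smul_right]
        linarith [hg]
      have hMw := mul_le_mul_of_nonneg_left hcv (hwpos (m+1)).le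
      have hkey : w (m+1) * ((1 - τ (m+1)) * (gstar (ytil (m+1)) - ⟪K xx, ytil (m+1)⟫)
          + τ (m+1) * (gstar (yseq (m+1+1)) - ⟪K xx, yseq (m+1+1)⟫))
          = w m * (gstar (ytil (m+1)) - ⟪K xx, ytil (m+1)⟫)
          + w (m+1) * τ (m+1) * (gstar (yseq (m+1+1)) - ⟪K xx, yseq (m+1+1)⟫) := by
        rw [← hwτ m]; ring
      rw [Finset.sum_range_succ]
      linarith [hMw, hkey, ih]
  -- final assembly
  intro k hk
  obtain ⟨m, rfl⟩ : ∃ m, k = m + 1 := ⟨k - 1, (Nat.succ_pred_eq_of_pos hk).symm⟩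
  have key : ∀ xx ∈ Sf,
      gstar (ytil (m+1)) - ⟪K xx, ytil (m+1)⟫ - f xx ≤
        (fstar (-((ContinuousLinearMap.adjoint K) ys)) + gstar ys)
        + β 0 / ((m:ℝ) + 2) * ‖ydot - ys‖^2
        + ‖K‖^2 / (2 * β 0 * ((m:ℝ) + 1)) * (‖x 0‖ + Mf)^2 := by
    intro xx hxx
    have hT := T xx hxx m ys hys
    have hP := P xx m
    have hsplit : ∑ j ∈ Finset.range (m+1), w j * τ j *
        (f xx + ⟪K xx, yseq (j+1)⟫ - gstar (yseq (j+1)))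
        = w m * f xx - ∑ j ∈ Finset.range (m+1), w j * τ j *
          (gstar (yseq (j+1)) - ⟪K xx, yseq (j+1)⟫) := by
      rw [← hSw m, Finset.sum_mul, ← Finset.sum_sub_distrib]
      apply Finset.sum_congr rfl
      intro j _
      ring
    have hsad := (hsaddle (x (m+1)) (hxSf (m+1)) ys hys).2
    have hfs : -(f xs + ⟪K xs, ys⟫) ≤ fstar (-((ContinuousLinearMap.adjoint K) ys)) := by
      have h1 : ⟪-((ContinuousLinearMap.adjoint K) ys), xs⟫ - f xs ≤
          fstar (-((ContinuousLinearMap.adjoint K) ys)) :=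
        (hfstar _).1 ⟨xs, hxs, rfl⟩
      have h2 : ⟪-((ContinuousLinearMap.adjoint K) ys), xs⟫ = -⟪K xs, ys⟫ := by
        rw [inner_neg_left, ContinuousLinearMap.adjoint_inner_left, real_inner_comm]
      rw [h2] at h1
      linarith
    have hβb : β m / 2 * ‖ys - ydot‖^2 ≤ β 0 / ((m:ℝ)+2) * ‖ydot - ys‖^2 := by
      rw [norm_sub_rev ys ydot]
      apply mul_le_mul_of_nonneg_right _ (sq_nonneg _)
      rw [div_le_div_iff₀ (by norm_num) (by positivity)]
      nlinarith [hβub m]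
    have hxxb : ‖xx - x 0‖^2 ≤ (‖x 0‖ + Mf)^2 := by
      have h1 : ‖xx - x 0‖ ≤ ‖x 0‖ + Mf := by
        calc ‖xx - x 0‖ ≤ ‖xx‖ + ‖x 0‖ := norm_sub_le _ _
          _ ≤ Mf + ‖x 0‖ := by linarith [hSfb xx hxx]
          _ = ‖x 0‖ + Mf := by ring
      exact pow_le_pow_left₀ (norm_nonneg _) h1 2
    have hwb : L 0 / 2 * ‖xx - x 0‖^2 ≤
        w m * (‖K‖^2 / (2 * β 0 * ((m:ℝ)+1)) * (‖x 0‖ + Mf)^2) := by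
      have hL0 : L 0 = ‖K‖^2 / β 0 := hL 0
      have h1 : L 0 / 2 * ‖xx - x 0‖^2 ≤ L 0 / 2 * (‖x 0‖ + Mf)^2 :=
        mul_le_mul_of_nonneg_left hxxb (div_nonneg (hLnn 0) (by norm_num))
      have h3 : ((m:ℝ)+1) * (‖K‖^2 / (2 * β 0 * ((m:ℝ)+1))) = ‖K‖^2 / β 0 / 2 := by
        have hm1 : ((m:ℝ)+1) ≠ 0 := by positivity
        field_simp
      have h2 : L 0 / 2 ≤ w m * (‖K‖^2 / (2 * β 0 * ((m:ℝ)+1))) := by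
        rw [hL0]
        calc ‖K‖^2 / β 0 / 2 = ((m:ℝ)+1) * (‖K‖^2 / (2 * β 0 * ((m:ℝ)+1))) := h3.symm
          _ ≤ w m * (‖K‖^2 / (2 * β 0 * ((m:ℝ)+1))) :=
              mul_le_mul_of_nonneg_right (hwlb m) (by positivity)
      calc L 0 / 2 * ‖xx - x 0‖^2 ≤ L 0 / 2 * (‖x 0‖ + Mf)^2 := h1
        _ ≤ (w m * (‖K‖^2 / (2 * β 0 * ((m:ℝ)+1)))) * (‖x 0‖ + Mf)^2 :=
            mul_le_mul_of_nonneg_right h2 (by positivity)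
        _ = w m * (‖K‖^2 / (2 * β 0 * ((m:ℝ)+1)) * (‖x 0‖ + Mf)^2) := by ring
    have hvnn : 0 ≤ L 0 / 2 * ‖xx - v (m+1)‖^2 :=
      mul_nonneg (div_nonneg (hLnn 0) (by norm_num)) (sq_nonneg _)
    have hsadw := mul_le_mul_of_nonneg_left hsad (hwpos m).le
    have hfsw := mul_le_mul_of_nonneg_left hfs (hwpos m).le
    have hβbw := mul_le_mul_of_nonneg_left hβb (hwpos m).le
    have hbig : w m * (gstar (ytil (m+1)) - ⟪K xx, ytil (m+1)⟫ - f xx) ≤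
        w m * ((fstar (-((ContinuousLinearMap.adjoint K) ys)) + gstar ys)
          + β 0 / ((m:ℝ)+2) * ‖ydot - ys‖^2
          + ‖K‖^2 / (2 * β 0 * ((m:ℝ)+1)) * (‖x 0‖ + Mf)^2) := by
      nlinarith [hT, hP, hsplit, hsadw, hfsw, hβbw, hwb, hvnn]
    exact le_of_mul_le_mul_left hbig (hwpos m)
  have hub : fstar (-((ContinuousLinearMap.adjoint K) (ytil (m+1)))) ≤
      (fstar (-((ContinuousLinearMap.adjoint K) ys)) + gstar ys) - gstar (ytil (m+1))
      + β 0 / ((m:ℝ)+2) * ‖ydot - ys‖^2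
      + ‖K‖^2 / (2 * β 0 * ((m:ℝ)+1)) * (‖x 0‖ + Mf)^2 := by
    apply (hfstar _).2
    rintro r ⟨x', hx', rfl⟩
    have h2 : ⟪-((ContinuousLinearMap.adjoint K) (ytil (m+1))), x'⟫
        = -⟪K x', ytil (m+1)⟫ := by
      rw [inner_neg_left, ContinuousLinearMap.adjoint_inner_left, real_inner_comm]
    rw [h2]
    linarith [key x' hx']
  have hc1 : ((m+1 : ℕ):ℝ) = (m:ℝ) + 1 := by push_cast; ring
  rw [hc1]
  have hc2 : (m:ℝ) + 1 + 1 = (m:ℝ) + 2 := by ring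
  rw [hc2]
  linarith [hub]
end

section
/- Assume f is μ_f-strongly convex with μ_f > 0, g* is merely convex (μ_{g*} = 0), and a saddle point of L exists. Run ASGARD+ with τ₀ := 1, β₀ ≥ 0.382‖K‖²/μ_f, τ_{k+1} := (τ_k/2)(√(τ_k² + 4) − τ_k), β_{k+1} := β_k/(1+τ_{k+1}), L_k := ‖K‖²/β_k, m_{k+1} := (L_{k+1}+μ_f)/(L_k+μ_f), η_{k+1} := (1−τ_k)τ_k/(τ_k² + m_{k+1}τ_{k+1}). Then for all k ≥ 1, the gap function satisfies G_{X×Y}(x^k, ỹ^k) ≤ (2‖K‖²/(β₀(k+1)²)) · sup_{x∈X}‖x⁰ − x‖² + (10β₀/(k+3)²) · sup_{y∈Y}‖ẏ − y‖². -/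
open RealInnerProductSpace Set

section helpers
variable {V : Type*} [NormedAddCommGroup V] [InnerProductSpace ℝ V]

lemma aux_norm_combo (t : ℝ) (a b c : V) :
    ‖((1-t)•a + t•b) - c‖^2 = (1-t)*‖a-c‖^2 + t*‖b-c‖^2 - t*(1-t)*‖b-a‖^2 := by
  have h : ((1-t)•a + t•b) - c = (1-t)•(a-c) + t•(b-c) := by module
  have hb : b - a = (b-c) - (a-c) := by module
  rw [h, hb]
  have e : ∀ v : V, ‖v‖^2 = ⟪v,v⟫ := fun v => (real_inner_self_eq_norm_sq v).symm
  rw [e, e, e, e]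
  simp only [inner_add_left, inner_add_right, inner_sub_left, inner_sub_right,
    real_inner_smul_left, real_inner_smul_right]
  rw [real_inner_comm c a, real_inner_comm c b, real_inner_comm b a]
  ring

lemma aux_sq_smul (t : ℝ) (u : V) : ‖t•u‖^2 = t^2*‖u‖^2 := by
  rw [norm_smul, mul_pow, Real.norm_eq_abs, sq_abs]

lemma aux_sq_convex (la lb : ℝ) (hab : la + lb = 1) (ha : 0 ≤ la) (hb : 0 ≤ lb) (a b : V) :
    ‖la•a + lb•b‖^2 ≤ la*‖a‖^2 + lb*‖b‖^2 := by
  have hla : la = 1 - lb := by linarith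
  have h := aux_norm_combo lb a b 0
  simp only [sub_zero] at h
  rw [hla, h]
  nlinarith [sq_nonneg ‖b-a‖, mul_nonneg hb (show (0:ℝ) ≤ 1 - lb by linarith)]

lemma aux_strong (S : Set V) (h : V → ℝ) (σ : ℝ)
    (hconv : ConvexOn ℝ S (fun z => h z - σ/2*‖z‖^2)) {a b : V} (ha : a ∈ S) (hb : b ∈ S)
    {t : ℝ} (ht0 : 0 ≤ t) (ht1 : t ≤ 1) :
    h ((1-t)•a + t•b) ≤ (1-t)*h a + t*h b - σ/2*(t*(1-t)*‖b-a‖^2) := by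
  have h2 := hconv.2 ha hb (by linarith : (0:ℝ) ≤ 1-t) ht0 (by ring)
  simp only [smul_eq_mul] at h2
  have h3 := aux_norm_combo t a b 0
  simp only [sub_zero] at h3
  rw [h3] at h2
  nlinarith [h2]

lemma aux_limit (r B A : ℝ) (hr : 0 ≤ r) (hB : 0 ≤ B)
    (hA : ∀ t : ℝ, 0 < t → t ≤ 1 → r*((1-t)*B) ≤ A) : r*B ≤ A := by
  by_contra hc
  push_neg at hc
  have hA0 : 0 ≤ A := by simpa using hA 1 one_pos le_rfl
  have hrB : 0 < r*B := lt_of_le_of_lt hA0 hc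
  set t0 := min 1 ((r*B - A)/(2*(r*B))) with ht0
  have h01 : 0 < t0 := lt_min one_pos (div_pos (by linarith) (by linarith))
  have h1 := hA t0 h01 (min_le_left _ _)
  have h2 : t0 ≤ (r*B-A)/(2*(r*B)) := min_le_right _ _
  have h3 : r*B*t0 ≤ (r*B-A)/2 := by
    calc r*B*t0 ≤ r*B*((r*B-A)/(2*(r*B))) := mul_le_mul_of_nonneg_left h2 (le_of_lt hrB)
    _ = (r*B-A)/2 := by
      rw [eq_div_iff two_ne_zero, mul_div_assoc', div_mul_eq_mul_div, div_eq_iff (mul_pos two_pos hrB).ne']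
      ring
  nlinarith [h1, h3, hc]

lemma aux_prox (S : Set V) (hS : Convex ℝ S) (h : V → ℝ) (σ ρ : ℝ) (hσ : 0 ≤ σ) (hρ : 0 ≤ ρ)
    (hconv : ConvexOn ℝ S (fun z => h z - σ/2*‖z‖^2)) (c : V) {xstar : V} (hx : xstar ∈ S)
    (hmin : IsMinOn (fun z => h z + ρ/2*‖z-c‖^2) S xstar) :
    ∀ z ∈ S, h xstar + ρ/2*‖xstar-c‖^2 + (ρ+σ)/2*‖z-xstar‖^2 ≤ h z + ρ/2*‖z-c‖^2 := by
  intro z hz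
  have key : ∀ t : ℝ, 0 < t → t ≤ 1 → (ρ+σ)/2*((1-t)*‖z-xstar‖^2) ≤
      (h z + ρ/2*‖z-c‖^2) - (h xstar + ρ/2*‖xstar-c‖^2) := by
    intro t ht0 ht1
    have hmem : (1-t)•xstar + t•z ∈ S := hS hx hz (by linarith) (le_of_lt ht0) (by ring)
    have hm := hmin hmem
    simp only [Set.mem_setOf_eq] at hm
    have hnc := aux_norm_combo t xstar z c
    rw [hnc] at hm
    have hsc := aux_strong S h σ hconv hx hz (le_of_lt ht0) ht1
    have H2 : t * ((ρ+σ)/2*((1-t)*‖z-xstar‖^2)) ≤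
        t * ((h z + ρ/2*‖z-c‖^2) - (h xstar + ρ/2*‖xstar-c‖^2)) := by nlinarith [hm, hsc]
    exact le_of_mul_le_mul_left H2 ht0
  have := aux_limit ((ρ+σ)/2) (‖z-xstar‖^2) _ (by positivity) (sq_nonneg _) key
  linarith

lemma quad_step (μf P s t η : ℝ) (hP : 0 ≤ P) (hμ : 0 < μf) (hs : 0 < s) (hs1 : s < 1)
    (ht : 0 < t) (ht1 : t ≤ 1) (hst : s^2 = (1-s)*t^2) (hkey : P*s^2 ≤ μf)
    (hη : η = (1-t)*t/(t^2 + ((P*(1+s)+μf)/(P+μf))*s)) (u d : V) :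
    P*(1+s)*s^2*‖u - (η/s)•d‖^2 ≤
      μf*s*(1-s)*‖u‖^2 + (1-s)*(P+μf)*t^2*‖u - ((1-t)/t)•d‖^2 := by
  have hM : (0:ℝ) < P + μf := by linarith
  set N := t^2*(P+μf) + s*(P*(1+s)+μf) with hN
  have hNpos : 0 < N := by
    have h1 : 0 < P*(1+s)+μf := by nlinarith
    have h2 : 0 ≤ t^2*(P+μf) := by positivity
    nlinarith
  have hsN : s*N = t^2*(P+μf) + P*s^3 := by
    rw [hN]; linear_combination (P+μf)*hst
  have hPP : 0 < P*(1+s)+μf := by nlinarith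
  have hD2 : 0 < t^2 + (P*(1+s)+μf)/(P+μf)*s :=
    add_pos_of_nonneg_of_pos (sq_nonneg t) (mul_pos (div_pos hPP hM) hs)
  have hη' : η = (1-t)*t*(P+μf)/N := by
    rw [hη, hN]
    rw [div_eq_div_iff hD2.ne' (by rw [← hN]; exact hNpos.ne')]
    field_simp
  have hsNpos : 0 < s*N := mul_pos hs hNpos
  set lam := P*s^2/N with hlam
  have hlam0 : 0 ≤ lam := by
    rw [hlam]; exact div_nonneg (mul_nonneg hP (sq_nonneg s)) hNpos.le
  have h9 : N - P*s^2 = t^2*(P+μf)/s := by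
    rw [eq_div_iff hs.ne']; linear_combination hsN
  have honeminus : 1 - lam = t^2*(P+μf)/(s*N) := by
    have h8 : (1 : ℝ) - P*s^2/N = (N - P*s^2)/N := by field_simp
    rw [hlam, h8, h9, div_div]
  have hlam1 : lam ≤ 1 := by
    have : 0 ≤ t^2*(P+μf)/(s*N) := by positivity
    linarith [honeminus]
  have hsc : η/s = (1-lam)*((1-t)/t) := by
    rw [honeminus, hη']
    field_simp
  have hdecomp : u - (η/s)•d = lam•u + (1-lam)•(u - ((1-t)/t)•d) := by
    rw [hsc]; module
  have hsq : ‖u - (η/s)•d‖^2 ≤ lam*‖u‖^2 + (1-lam)*‖u - ((1-t)/t)•d‖^2 := by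
    rw [hdecomp]
    exact aux_sq_convex lam (1-lam) (by ring) hlam0 (by linarith) _ _
  have G1 : P*(1+s)*s^2*(P*s^2) ≤ μf*s*(1-s)*N := by
    have e1 : μf*s*(1-s)*N - P*(1+s)*s^2*(P*s^2) =
        s^2*(P*(1+s)*(μf-P*s^2) + μf*(μf-P*s^2)) + μf*s*(P+μf)*((1-s)*t^2-s^2) := by
      rw [hN]; ring
    have hδ : (1-s)*t^2 - s^2 = 0 := by linarith [hst]
    rw [hδ, mul_zero, add_zero] at e1
    have hk2 : (0:ℝ) ≤ μf - P*s^2 := by linarith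
    have hT : 0 ≤ s^2*(P*(1+s)*(μf-P*s^2) + μf*(μf-P*s^2)) :=
      mul_nonneg (sq_nonneg s) (add_nonneg
        (mul_nonneg (mul_nonneg hP (by linarith)) hk2) (mul_nonneg hμ.le hk2))
    linarith [e1, hT]
  have G2 : P*(1+s)*s^2*(t^2*(P+μf)) ≤ (1-s)*(P+μf)*t^2*(s*N) := by
    rw [hsN]
    have e2 : (1-s)*(P+μf)*t^2*(t^2*(P+μf)+P*s^3) - P*(1+s)*s^2*(t^2*(P+μf)) =
        (P+μf)*t^2*s^2*(μf-P*s^2) + (P+μf)^2*t^2*((1-s)*t^2-s^2) := by ring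
    have hδ : (1-s)*t^2 - s^2 = 0 := by linarith [hst]
    rw [hδ, mul_zero, add_zero] at e2
    have hk2 : (0:ℝ) ≤ μf - P*s^2 := by linarith
    have hT : 0 ≤ (P+μf)*t^2*s^2*(μf-P*s^2) :=
      mul_nonneg (mul_nonneg (mul_nonneg hM.le (sq_nonneg t)) (sq_nonneg s)) hk2
    linarith [e2, hT]
  have hA1 : P*(1+s)*s^2*lam ≤ μf*s*(1-s) := by
    rw [hlam, ← mul_div_assoc, div_le_iff₀ hNpos]
    exact G1
  have hA2 : P*(1+s)*s^2*(1-lam) ≤ (1-s)*(P+μf)*t^2 := by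
    rw [honeminus, ← mul_div_assoc, div_le_iff₀ hsNpos]
    exact G2
  calc P*(1+s)*s^2*‖u - (η/s)•d‖^2
      ≤ P*(1+s)*s^2*(lam*‖u‖^2 + (1-lam)*‖u - ((1-t)/t)•d‖^2) :=
        mul_le_mul_of_nonneg_left hsq
          (mul_nonneg (mul_nonneg hP (by linarith)) (sq_nonneg s))
    _ = (P*(1+s)*s^2*lam)*‖u‖^2 + (P*(1+s)*s^2*(1-lam))*‖u - ((1-t)/t)•d‖^2 := by ring
    _ ≤ μf*s*(1-s)*‖u‖^2 + (1-s)*(P+μf)*t^2*‖u - ((1-t)/t)•d‖^2 :=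
        add_le_add (mul_le_mul_of_nonneg_right hA1 (sq_nonneg _))
          (mul_le_mul_of_nonneg_right hA2 (sq_nonneg _))

end helpers

lemma poly_ineq (a r : ℝ) (ha2 : a^2 = 5) (halb : 2.236 ≤ a) (haub : a ≤ 2.25) (hr : 0 ≤ r) :
    4*(a+1)*(a+2)*(r+a-1)*(r+4)^2 ≤ 20*(a-1)*a*(r+a)*(r+a+1)*(r+a+2) := by
  have h5 : a^2 - 5 = 0 := by rw [ha2]; ring
  have key : 20*(a-1)*a*(r+a)*(r+a+1)*(r+a+2) - 4*(a+1)*(a+2)*(r+a-1)*(r+4)^2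
      = (72-32*a)*r^3 + 128*(a-2)*r^2 + (396-60*a)*r + (288+144*a)
        + (16*r^3+56*a*r^2-40*r^2+60*a^2*r+28*a*r+92*r+20*a^3+40*a^2+16*a+32)*(a^2-5) := by
    ring
  rw [h5, mul_zero, add_zero] at key
  nlinarith [key,
    mul_nonneg (mul_nonneg (show (0:ℝ) ≤ 72-32*a by linarith) hr) (mul_nonneg hr hr),
    mul_nonneg (mul_nonneg (show (0:ℝ) ≤ 128*(a-2) by linarith) hr) hr,
    mul_nonneg (show (0:ℝ) ≤ 396-60*a by linarith) hr]

lemma tau_pos_id (τ : ℕ → ℝ) (hτ0 : τ 0 = 1)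
    (hτr : ∀ k, τ (k + 1) = τ k / 2 * (Real.sqrt ((τ k) ^ 2 + 4) - τ k)) :
    ∀ k, 0 < τ k ∧ ((τ (k+1))^2 = (1 - τ (k+1))*(τ k)^2) := by
  have step : ∀ k, 0 < τ k → (0 < τ (k+1) ∧ (τ (k+1))^2 = (1 - τ (k+1))*(τ k)^2) := by
    intro k hk
    have h4 : (0:ℝ) ≤ (τ k)^2 + 4 := by positivity
    have hr := Real.sq_sqrt h4
    set r := Real.sqrt ((τ k)^2 + 4) with hrdef
    have hrt : τ k < r := by nlinarith [Real.sqrt_nonneg ((τ k)^2 + 4)]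
    constructor
    · rw [hτr k]; exact mul_pos (by linarith) (by linarith)
    · rw [hτr k]; linear_combination ((τ k)^2/4) * hr
  intro k
  induction k with
  | zero =>
    have h0 : 0 < τ 0 := by rw [hτ0]; norm_num
    exact ⟨h0, (step 0 h0).2⟩
  | succ n ih =>
    have h1 := step n ih.1
    exact ⟨h1.1, (step (n+1) h1.1).2⟩

lemma tau_lt1 (τ : ℕ → ℝ) (hτ0 : τ 0 = 1)
    (hτr : ∀ k, τ (k + 1) = τ k / 2 * (Real.sqrt ((τ k) ^ 2 + 4) - τ k)) :
    ∀ k, τ (k+1) < 1 := by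
  intro k
  have h1 := (tau_pos_id τ hτ0 hτr k).2
  have h2 := (tau_pos_id τ hτ0 hτr k).1
  have h3 := (tau_pos_id τ hτ0 hτr (k+1)).1
  nlinarith [pow_pos h2 2, pow_pos h3 2]

lemma tau_le1 (τ : ℕ → ℝ) (hτ0 : τ 0 = 1)
    (hτr : ∀ k, τ (k + 1) = τ k / 2 * (Real.sqrt ((τ k) ^ 2 + 4) - τ k)) :
    ∀ k, τ k ≤ 1 := by
  intro k
  cases k with
  | zero => rw [hτ0]
  | succ n => exact le_of_lt (tau_lt1 τ hτ0 hτr n)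

lemma tau_ub (τ : ℕ → ℝ) (hτ0 : τ 0 = 1)
    (hτr : ∀ k, τ (k + 1) = τ k / 2 * (Real.sqrt ((τ k) ^ 2 + 4) - τ k)) :
    ∀ k : ℕ, τ (k+1) ≤ 2/((k+1:ℝ) + Real.sqrt 5) := by
  have ha2 : (Real.sqrt 5)^2 = 5 := Real.sq_sqrt (by norm_num)
  have ha0 : (0:ℝ) ≤ Real.sqrt 5 := Real.sqrt_nonneg 5
  have halb : (2:ℝ) ≤ Real.sqrt 5 := by nlinarith
  set a := Real.sqrt 5 with hadef
  intro k
  induction k with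
  | zero =>
    have h1 : τ 1 = (a - 1)/2 := by
      have h5 : ((1:ℝ))^2 + 4 = 5 := by norm_num
      rw [hτr 0, hτ0, h5, ← hadef]; ring
    rw [h1]
    rw [div_le_div_iff₀ (by norm_num) (by push_cast; linarith)]
    push_cast
    nlinarith
  | succ n ih =>
    by_contra hcon
    push_neg at hcon
    push_cast at hcon ih
    have hid : (τ (n+1+1))^2 = (1 - τ (n+1+1))*(τ (n+1))^2 := (tau_pos_id τ hτ0 hτr (n+1)).2
    have hspos : 0 < τ (n+1+1) := (tau_pos_id τ hτ0 hτr (n+2)).1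
    have htpos : 0 < τ (n+1) := (tau_pos_id τ hτ0 hτr (n+1)).1
    have hs1 : τ (n+1+1) < 1 := tau_lt1 τ hτ0 hτr (n+1)
    set s := τ (n+1+1)
    set t := τ (n+1)
    set A := (n:ℝ) + 1 + a with hAdef
    have hA : (0:ℝ) < A := by positivity
    have hB : (0:ℝ) < A + 1 := by linarith
    have ht2 : t * A ≤ 2 := by
      have := (le_div_iff₀ hA).mp ih
      linarith
    have hs2 : 2 < s * (A + 1) := by
      have h := (div_lt_iff₀ (by linarith : (0:ℝ) < (n:ℝ)+1+1+a)).mp hcon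
      nlinarith [h]
    have h1 : 4 < s^2*(A+1)^2 := by nlinarith [hs2, hspos, hB]
    have h2 : t^2*A^2 ≤ 4 := by
      nlinarith [mul_le_mul ht2 ht2 (le_of_lt (mul_pos htpos hA)) (by norm_num : (0:ℝ) ≤ 2)]
    have h6 : s^2*(A+1)^2 = ((1-s)*(A+1))*(t^2*(A+1)) := by rw [hid]; ring
    have h4 : (1-s)*(A+1) < A - 1 := by nlinarith [hs2]
    have h5 : 0 < t^2*(A+1) := by positivity
    have h7 : ((1-s)*(A+1))*(t^2*(A+1)) < (A-1)*(t^2*(A+1)) :=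
      mul_lt_mul_of_pos_right h4 h5
    have h8 : (A-1)*(t^2*(A+1)) = t^2*A^2 - t^2 := by ring
    nlinarith [h1, h6, h7, h8, h2, sq_nonneg t, pow_pos htpos 2]

lemma beta_pos (τ bet : ℕ → ℝ) (hτ0 : τ 0 = 1)
    (hτr : ∀ k, τ (k + 1) = τ k / 2 * (Real.sqrt ((τ k) ^ 2 + 4) - τ k))
    (hβ0 : 0 < bet 0) (hβr : ∀ k, bet (k + 1) = bet k / (1 + τ (k + 1))) :
    ∀ k, 0 < bet k := by
  intro k
  induction k with
  | zero => exact hβ0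
  | succ n ih =>
    rw [hβr n]
    exact div_pos ih (by linarith [(tau_pos_id τ hτ0 hτr (n+1)).1])

lemma L_rec (τ bet L : ℕ → ℝ) (Knorm : ℝ) (hτ0 : τ 0 = 1)
    (hτr : ∀ k, τ (k + 1) = τ k / 2 * (Real.sqrt ((τ k) ^ 2 + 4) - τ k))
    (hβ0 : 0 < bet 0) (hβr : ∀ k, bet (k + 1) = bet k / (1 + τ (k + 1)))
    (hL : ∀ k, L k = Knorm ^ 2 / bet k) :
    ∀ k, L (k+1) = L k * (1 + τ (k+1)) := by
  intro k
  have hb := beta_pos τ bet hτ0 hτr hβ0 hβr k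
  have ht := (tau_pos_id τ hτ0 hτr k).1
  have ht1 : 0 < 1 + τ (k+1) := by linarith [(tau_pos_id τ hτ0 hτr (k+1)).1]
  rw [hL, hL, hβr]
  rw [div_div_eq_mul_div]
  field_simp

lemma tau_key (τ bet L : ℕ → ℝ) (μf : ℝ) (Knorm : ℝ) (hμf : 0 < μf) (hK : 0 ≤ Knorm)
    (hτ0 : τ 0 = 1)
    (hτr : ∀ k, τ (k + 1) = τ k / 2 * (Real.sqrt ((τ k) ^ 2 + 4) - τ k))
    (hβ0 : 0 < bet 0) (hβ0' : bet 0 ≥ 0.382 * Knorm ^ 2 / μf)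
    (hβr : ∀ k, bet (k + 1) = bet k / (1 + τ (k + 1)))
    (hL : ∀ k, L k = Knorm ^ 2 / bet k) :
    ∀ k, (τ (k+1))^2 * L k ≤ μf := by
  have ha2 : (Real.sqrt 5)^2 = 5 := Real.sq_sqrt (by norm_num)
  have ha0 : (0:ℝ) ≤ Real.sqrt 5 := Real.sqrt_nonneg 5
  have halb : (2.236:ℝ) ≤ Real.sqrt 5 := by nlinarith
  intro k
  induction k with
  | zero =>
    have h1 : τ 1 = (Real.sqrt 5 - 1)/2 := by
      have h5 : ((1:ℝ))^2 + 4 = 5 := by norm_num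
      rw [hτr 0, hτ0, h5]; ring
    have hb' : 0.382 * Knorm^2 ≤ bet 0 * μf := by
      rw [ge_iff_le, div_le_iff₀ hμf] at hβ0'
      linarith
    rw [h1, hL 0]
    rw [mul_div_assoc' _ _ (bet 0), div_le_iff₀ hβ0]
    have h2 : ((Real.sqrt 5 - 1)/2)^2 ≤ 0.382 := by nlinarith
    have h3 : ((Real.sqrt 5 - 1)/2)^2 * Knorm^2 ≤ 0.382 * Knorm^2 :=
      mul_le_mul_of_nonneg_right h2 (by positivity)
    nlinarith [h3, hb']
  | succ n ih =>
    have hid : (τ (n+2))^2 = (1 - τ (n+2))*(τ (n+1))^2 := (tau_pos_id τ hτ0 hτr (n+1)).2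
    have hspos : 0 < τ (n+2) := (tau_pos_id τ hτ0 hτr (n+2)).1
    have htpos : 0 < τ (n+1) := (tau_pos_id τ hτ0 hτr (n+1)).1
    have hs1 : τ (n+2) < 1 := tau_lt1 τ hτ0 hτr (n+1)
    have ht1 : τ (n+1) < 1 := tau_lt1 τ hτ0 hτr n
    have hLr := L_rec τ bet L Knorm hτ0 hτr hβ0 hβr hL n
    have hLn : 0 ≤ L n := by
      rw [hL n]
      exact div_nonneg (by positivity) (beta_pos τ bet hτ0 hτr hβ0 hβr n).le
    set s := τ (n+2) with hsdef
    set t := τ (n+1) with htdef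
    have hmono : (1-s)*(1+t) ≤ 1 := by
      nlinarith [hid, mul_pos hspos htpos, sq_nonneg (s*(1+t)-t), sq_nonneg (s*(1+t)+t),
        mul_pos (mul_pos hspos hspos) htpos]
    have e1 : s^2 * L (n+1) = ((1-s)*(1+t)) * (t^2 * L n) := by
      rw [hLr, hid]; ring
    have e2 : ((1-s)*(1+t)) * (t^2 * L n) ≤ 1 * (t^2 * L n) :=
      mul_le_mul_of_nonneg_right hmono (mul_nonneg (sq_nonneg t) hLn)
    calc (τ (n+1+1))^2 * L (n+1) = s^2 * L (n+1) := by rw [hsdef]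
    _ = ((1-s)*(1+t)) * (t^2 * L n) := e1
    _ ≤ 1 * (t^2 * L n) := e2
    _ = t^2 * L n := by ring
    _ ≤ μf := ih

lemma beta_J (τ bet : ℕ → ℝ) (hτ0 : τ 0 = 1)
    (hτr : ∀ k, τ (k + 1) = τ k / 2 * (Real.sqrt ((τ k) ^ 2 + 4) - τ k))
    (hβ0 : 0 < bet 0) (hβr : ∀ k, bet (k + 1) = bet k / (1 + τ (k + 1))) :
    ∀ k, bet k * ((Real.sqrt 5-1)*(Real.sqrt 5)*((k:ℝ)+Real.sqrt 5+1)*((k:ℝ)+Real.sqrt 5+2)) ≤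
      bet 0 * (τ k)^2 * ((Real.sqrt 5+1)*(Real.sqrt 5+2)*((k:ℝ)+Real.sqrt 5-1)*((k:ℝ)+Real.sqrt 5)) := by
  have ha2 : (Real.sqrt 5)^2 = 5 := Real.sq_sqrt (by norm_num)
  have ha0 : (0:ℝ) ≤ Real.sqrt 5 := Real.sqrt_nonneg 5
  have halb : (2.236:ℝ) ≤ Real.sqrt 5 := by nlinarith
  set a := Real.sqrt 5 with hadef
  intro k
  induction k with
  | zero =>
    rw [hτ0]; push_cast; ring_nf; exact le_refl _
  | succ n ih =>
    have hu0 : 0 < τ (n+1) := (tau_pos_id τ hτ0 hτr (n+1)).1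
    have hu1 : τ (n+1) < 1 := tau_lt1 τ hτ0 hτr n
    have hid : (τ (n+1))^2 = (1 - τ (n+1))*(τ n)^2 := (tau_pos_id τ hτ0 hτr n).2
    have hub : τ (n+1) ≤ 2/((n:ℝ)+1+a) := tau_ub τ hτ0 hτr n
    have hbp : 0 < bet n := beta_pos τ bet hτ0 hτr hβ0 hβr n
    have hbp1 : 0 < bet (n+1) := beta_pos τ bet hτ0 hτr hβ0 hβr (n+1)
    set u := τ (n+1) with hudef
    set d1 : ℝ := (n:ℝ)+a+1 with hd1
    have hd1pos : (0:ℝ) < d1 := by rw [hd1]; positivity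
    have hd0pos : (0:ℝ) < (n:ℝ)+a := by positivity
    have hdmpos : (0:ℝ) < (n:ℝ)+a-1 := by nlinarith
    have hd3pos : (0:ℝ) < (n:ℝ)+a+3 := by positivity
    have hbA : bet (n+1) * (1+u) = bet n := by
      rw [hβr n, ← hudef]
      field_simp
    have e1 : u^2*d1^2 ≤ 4 := by
      have hub' : u ≤ 2/d1 := by
        have hrw : (n:ℝ)+1+a = d1 := by rw [hd1]; ring
        rw [← hrw]; exact hub
      have h1 : u*d1 ≤ 2 := (le_div_iff₀ hd1pos).mp hub'
      nlinarith [mul_le_mul h1 h1 (le_of_lt (mul_pos hu0 hd1pos)) (by norm_num : (0:ℝ) ≤ 2)]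
    have hdm3 : ((n:ℝ)+a-1)*((n:ℝ)+a+3) = d1^2 - 4 := by rw [hd1]; ring
    have S : u^2*(((n:ℝ)+a-1)*((n:ℝ)+a+3)) ≤ u^2*(1-u^2)*d1^2 := by
      rw [hdm3]
      nlinarith [mul_le_mul_of_nonneg_left e1 (sq_nonneg u)]
    have R : (τ n)^2*(((n:ℝ)+a-1)*((n:ℝ)+a+3)) ≤ u^2*(1+u)*d1^2 := by
      have h1u : (0:ℝ) < 1-u := by linarith
      apply le_of_mul_le_mul_left _ h1u
      calc (1-u)*((τ n)^2*(((n:ℝ)+a-1)*((n:ℝ)+a+3)))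
          = u^2*(((n:ℝ)+a-1)*((n:ℝ)+a+3)) := by
            linear_combination (((n:ℝ)+a-1)*((n:ℝ)+a+3)) * hid.symm
        _ ≤ u^2*(1-u^2)*d1^2 := S
        _ = (1-u)*(u^2*(1+u)*d1^2) := by ring
    have hpos : (0:ℝ) < (1+u)*d1 := mul_pos (by linarith) hd1pos
    apply le_of_mul_le_mul_right _ hpos
    push_cast
    calc bet (n+1) * ((a-1)*a*((n:ℝ)+1+a+1)*((n:ℝ)+1+a+2)) * ((1+u)*d1)
        = (bet (n+1)*(1+u)) * ((a-1)*a*d1*((n:ℝ)+a+2)) * ((n:ℝ)+a+3) := by rw [hd1]; ring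
      _ = bet n * ((a-1)*a*d1*((n:ℝ)+a+2)) * ((n:ℝ)+a+3) := by rw [hbA]
      _ ≤ (bet 0 * (τ n)^2 * ((a+1)*(a+2)*((n:ℝ)+a-1)*((n:ℝ)+a))) * ((n:ℝ)+a+3) :=
          mul_le_mul_of_nonneg_right ih hd3pos.le
      _ = (bet 0 * ((a+1)*(a+2)*((n:ℝ)+a))) * ((τ n)^2 * (((n:ℝ)+a-1)*((n:ℝ)+a+3))) := by ring
      _ ≤ (bet 0 * ((a+1)*(a+2)*((n:ℝ)+a))) * (u^2*(1+u)*d1^2) := by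
          apply mul_le_mul_of_nonneg_left R
          exact mul_nonneg hβ0.le (by positivity)
      _ = bet 0 * u^2 * ((a+1)*(a+2)*((n:ℝ)+1+a-1)*((n:ℝ)+1+a)) * ((1+u)*d1) := by
          rw [hd1]; ring


set_option maxHeartbeats 4000000 in
/-- Theorem 2(a): gap-function bound of ASGARD+ when `f` is
`μ_f`-strongly convex with `μ_f > 0` and `g*` is merely convex, `μ_{g*} = 0`.
For all `k ≥ 1`,
`G_{X×Y}(x^k, ỹ^k) ≤ (2‖K‖²/(β₀(k+1)²)) sup_{x∈X}‖x⁰-x‖² + (10β₀/(k+3)²) sup_{y∈Y}‖ẏ-y‖²`,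
stated equivalently as the bound on `L(x^k, ỹ) - L(x̃, ỹ^k)` for all `x̃ ∈ X, ỹ ∈ Y`. -/
theorem stmt7 {p n : ℕ}
    (f : EuclideanSpace ℝ (Fin p) → ℝ) (Sf : Set (EuclideanSpace ℝ (Fin p)))
    (gstar : EuclideanSpace ℝ (Fin n) → ℝ) (Sg : Set (EuclideanSpace ℝ (Fin n)))
    (K : EuclideanSpace ℝ (Fin p) →L[ℝ] EuclideanSpace ℝ (Fin n))
    (hSf : Convex ℝ Sf) (hSg : Convex ℝ Sg)
    (hSfc : IsClosed Sf) (hSgc : IsClosed Sg)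
    (μf : ℝ) (hμf : 0 < μf)
    -- `f` is `μ_f`-strongly convex, `g*` is merely convex
    (hf : ConvexOn ℝ Sf (fun x => f x - μf / 2 * ‖x‖ ^ 2))
    (hgstar : ConvexOn ℝ Sg gstar)
    -- a saddle point of the Lagrangian exists
    (xs : EuclideanSpace ℝ (Fin p)) (ys : EuclideanSpace ℝ (Fin n))
    (hxs : xs ∈ Sf) (hys : ys ∈ Sg)
    (hsaddle : ∀ x ∈ Sf, ∀ y ∈ Sg,
      f xs + ⟪K xs, y⟫ - gstar y ≤ f xs + ⟪K xs, ys⟫ - gstar ys ∧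
      f xs + ⟪K xs, ys⟫ - gstar ys ≤ f x + ⟪K x, ys⟫ - gstar ys)
    -- the sets defining the gap function, containing the saddle point
    (X : Set (EuclideanSpace ℝ (Fin p))) (Y : Set (EuclideanSpace ℝ (Fin n)))
    (hXSf : X ⊆ Sf) (hYSg : Y ⊆ Sg)
    (hXc : Convex ℝ X) (hYc : Convex ℝ Y) (hXcl : IsClosed X) (hYcl : IsClosed Y)
    (hxsX : xs ∈ X) (hysY : ys ∈ Y)
    -- parameters of ASGARD+
    (τ β L η : ℕ → ℝ)
    (hτ0 : τ 0 = 1)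
    (hτ : ∀ k, τ (k + 1) = τ k / 2 * (Real.sqrt ((τ k) ^ 2 + 4) - τ k))
    (hβ0 : 0 < β 0) (hβ0' : β 0 ≥ 0.382 * ‖K‖ ^ 2 / μf)
    (hβ : ∀ k, β (k + 1) = β k / (1 + τ (k + 1)))
    (hL : ∀ k, L k = ‖K‖ ^ 2 / β k)
    (hη : ∀ k, η (k + 1) =
      (1 - τ k) * τ k / ((τ k) ^ 2 + ((L (k + 1) + μf) / (L k + μf)) * τ (k + 1)))
    -- the iterates of ASGARD+
    (ydot : EuclideanSpace ℝ (Fin n))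
    (x xhat : ℕ → EuclideanSpace ℝ (Fin p)) (yseq ytil : ℕ → EuclideanSpace ℝ (Fin n))
    (hx0 : x 0 ∈ Sf) (hxhat0 : xhat 0 = x 0) (hytil0 : ytil 0 ∈ Sg)
    (hyup : ∀ k, yseq (k + 1) ∈ Sg ∧
      IsMaxOn (fun z => ⟪K (xhat k), z⟫ - gstar z - β k / 2 * ‖z - ydot‖ ^ 2) Sg
        (yseq (k + 1)))
    (hxup : ∀ k, x (k + 1) ∈ Sf ∧
      IsMinOn (fun z => f z + ⟪(ContinuousLinearMap.adjoint K) (yseq (k + 1)), z⟫ +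
        L k / 2 * ‖z - xhat k‖ ^ 2) Sf (x (k + 1)))
    (hxhat : ∀ k, xhat (k + 1) = x (k + 1) + η (k + 1) • (x (k + 1) - x k))
    (hytil : ∀ k, ytil (k + 1) = (1 - τ k) • ytil k + τ k • yseq (k + 1))
    -- the suprema appearing in the bound are finite
    (hXb : BddAbove ((fun x' => ‖x 0 - x'‖ ^ 2) '' X))
    (hYb : BddAbove ((fun y' => ‖ydot - y'‖ ^ 2) '' Y)) :
    ∀ k : ℕ, 1 ≤ k → ∀ xt ∈ X, ∀ yt ∈ Y,
      (f (x k) + ⟪K (x k), yt⟫ - gstar yt) - (f xt + ⟪K xt, ytil k⟫ - gstar (ytil k)) ≤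
        2 * ‖K‖ ^ 2 / (β 0 * ((k : ℝ) + 1) ^ 2) * sSup ((fun x' => ‖x 0 - x'‖ ^ 2) '' X) +
        10 * β 0 / (((k : ℝ) + 3) ^ 2) * sSup ((fun y' => ‖ydot - y'‖ ^ 2) '' Y) := by
  -- basic facts about √5
  have ha2 : (Real.sqrt 5)^2 = 5 := Real.sq_sqrt (by norm_num)
  have ha0 : (0:ℝ) ≤ Real.sqrt 5 := Real.sqrt_nonneg 5
  have halb : (2.236:ℝ) ≤ Real.sqrt 5 := by nlinarith
  have haub : Real.sqrt 5 ≤ (2.25:ℝ) := by nlinarith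
  -- sequence facts
  have hτpos : ∀ m, 0 < τ m := fun m => (tau_pos_id τ hτ0 hτ m).1
  have hτid : ∀ m, (τ (m+1))^2 = (1-τ (m+1))*(τ m)^2 := fun m => (tau_pos_id τ hτ0 hτ m).2
  have hτle1 := tau_le1 τ hτ0 hτ
  have hτlt1 := tau_lt1 τ hτ0 hτ
  have hτub := tau_ub τ hτ0 hτ
  have hβpos := beta_pos τ β hτ0 hτ hβ0 hβ
  have hLrec := L_rec τ β L ‖K‖ hτ0 hτ hβ0 hβ hL
  have hKey := tau_key τ β L μf ‖K‖ hμf (norm_nonneg (K : _ →L[ℝ] _)) hτ0 hτ hβ0 hβ0' hβ hL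
  have hLnn : ∀ m, 0 ≤ L m := fun m => by
    rw [hL m]; exact div_nonneg (by positivity) (hβpos m).le
  have hJ := beta_J τ β hτ0 hτ hβ0 hβ
  -- membership facts
  have hxmem : ∀ m, x m ∈ Sf := by
    intro m; cases m with
    | zero => exact hx0
    | succ i => exact (hxup i).1
  have hymem : ∀ m, yseq (m+1) ∈ Sg := fun m => (hyup m).1
  have hytmem : ∀ m, ytil m ∈ Sg := by
    intro m; induction m with
    | zero => exact hytil0
    | succ i ih =>
      rw [hytil i]
      exact hSg ih (hymem i) (by linarith [hτle1 i]) (hτpos i).le (by ring)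
  -- dual prox inequality
  have Hy : ∀ m, ∀ yy ∈ Sg,
      (gstar (yseq (m+1)) - ⟪K (xhat m), yseq (m+1)⟫) + β m/2*‖yseq (m+1)-ydot‖^2
        + (β m + 0)/2*‖yy - yseq (m+1)‖^2
      ≤ (gstar yy - ⟪K (xhat m), yy⟫) + β m/2*‖yy-ydot‖^2 := by
    intro m
    have hconv : ConvexOn ℝ Sg (fun z => (gstar z - ⟪K (xhat m), z⟫) - 0/2*‖z‖^2) := by
      constructor
      · exact hSg
      · intro z1 h1 z2 h2 c1 c2 hc1 hc2 hsum
        have hgg := hgstar.2 h1 h2 hc1 hc2 hsum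
        simp only [smul_eq_mul] at hgg ⊢
        have hlin : ⟪K (xhat m), c1•z1+c2•z2⟫ =
            c1*⟪K (xhat m), z1⟫ + c2*⟪K (xhat m), z2⟫ := by
          rw [inner_add_right, real_inner_smul_right, real_inner_smul_right]
        rw [hlin]
        linarith [hgg]
    have hminOn : IsMinOn (fun z => (gstar z - ⟪K (xhat m), z⟫) + β m/2*‖z-ydot‖^2) Sg
        (yseq (m+1)) := by
      apply isMinOn_iff.mpr
      intro z hz
      have := isMaxOn_iff.mp (hyup m).2 z hz
      linarith
    exact aux_prox Sg hSg (fun z => gstar z - ⟪K (xhat m), z⟫) 0 (β m) le_rfl (hβpos m).le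
      hconv ydot (hymem m) hminOn
  -- primal prox inequality
  have Hx : ∀ m, ∀ z ∈ Sf,
      (f (x (m+1)) + ⟪yseq (m+1), K (x (m+1))⟫) + L m/2*‖x (m+1)-xhat m‖^2
        + (L m + μf)/2*‖z-x (m+1)‖^2
      ≤ (f z + ⟪yseq (m+1), K z⟫) + L m/2*‖z-xhat m‖^2 := by
    intro m
    have hconv : ConvexOn ℝ Sf (fun z => (f z + ⟪yseq (m+1), K z⟫) - μf/2*‖z‖^2) := by
      constructor
      · exact hSf
      · intro z1 h1 z2 h2 c1 c2 hc1 hc2 hsum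
        have hff := hf.2 h1 h2 hc1 hc2 hsum
        simp only [smul_eq_mul] at hff ⊢
        have hlin : ⟪yseq (m+1), K (c1•z1+c2•z2)⟫ =
            c1*⟪yseq (m+1), K z1⟫ + c2*⟪yseq (m+1), K z2⟫ := by
          rw [map_add, map_smul, map_smul, inner_add_right,
            real_inner_smul_right, real_inner_smul_right]
        rw [hlin]
        linarith [hff]
    have hminOn : IsMinOn (fun z => (f z + ⟪yseq (m+1), K z⟫) + L m/2*‖z-xhat m‖^2) Sf
        (x (m+1)) := by
      apply isMinOn_iff.mpr
      intro z hz
      have h1 := isMinOn_iff.mp (hxup m).2 z hz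
      simp only [ContinuousLinearMap.adjoint_inner_left] at h1
      linarith
    have h := aux_prox Sf hSf (fun z => f z + ⟪yseq (m+1), K z⟫) μf (L m) hμf.le (hLnn m)
      hconv (xhat m) ((hxup m).1) hminOn
    intro z hz
    have h2 := h z hz
    linarith
  -- one-iteration master inequality
  have Sstep : ∀ m, ∀ z ∈ Sf, ∀ yh ∈ Sg,
      f (x (m+1)) + ⟪K (x (m+1)), yh⟫ - gstar yh - β m/2*‖yh-ydot‖^2 ≤
        f z + ⟪K z, yseq (m+1)⟫ - gstar (yseq (m+1)) - β m/2*‖yseq (m+1)-ydot‖^2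
        + L m/2*‖z-xhat m‖^2 - (L m+μf)/2*‖z-x (m+1)‖^2 := by
    intro m z hz yh hyh
    have hy1 := Hy m yh hyh
    have hx1 := Hx m z hz
    have e2 : ⟪yseq (m+1), K (x (m+1))⟫ = ⟪K (x (m+1)), yseq (m+1)⟫ := real_inner_comm _ _
    have e3 : ⟪yseq (m+1), K z⟫ = ⟪K z, yseq (m+1)⟫ := real_inner_comm _ _
    rw [e2, e3] at hx1
    have hYoung : ⟪K (x (m+1)) - K (xhat m), yh - yseq (m+1)⟫ ≤
        β m/2*‖yh-yseq (m+1)‖^2 + L m/2*‖x (m+1)-xhat m‖^2 := by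
      have hKd : ‖K (x (m+1)) - K (xhat m)‖ ≤ ‖K‖*‖x (m+1)-xhat m‖ := by
        rw [← map_sub]; exact K.le_opNorm _
      have hC : ⟪K (x (m+1)) - K (xhat m), yh - yseq (m+1)⟫ ≤
          ‖K (x (m+1)) - K (xhat m)‖ * ‖yh - yseq (m+1)‖ := real_inner_le_norm _ _
      have hb := hβpos m
      rw [hL m]
      set nv := ‖K (x (m+1)) - K (xhat m)‖ with hnv
      set nw := ‖yh - yseq (m+1)‖ with hnw
      set nd := ‖x (m+1)-xhat m‖ with hnd
      have h1 : nv*nw ≤ nv^2/(2*β m) + β m/2*nw^2 := by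
        have h2 : nv^2/(2*β m) + β m/2*nw^2 - nv*nw = (nv - β m*nw)^2/(2*β m) := by
          field_simp; ring
        nlinarith [div_nonneg (sq_nonneg (nv - β m*nw)) (by linarith : (0:ℝ) ≤ 2*β m), h2]
      have h3 : nv^2 ≤ ‖K‖^2*nd^2 := by
        nlinarith [mul_le_mul hKd hKd (norm_nonneg _) (by positivity)]
      have h4 : nv^2/(2*β m) ≤ ‖K‖^2*nd^2/(2*β m) :=
        (div_le_div_iff_of_pos_right (by linarith)).mpr h3
      have h5 : ‖K‖^2*nd^2/(2*β m) = ‖K‖^2/β m/2*nd^2 := by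
        field_simp
      linarith [hC, h1, h4, h5]
    have e1 : ⟪K (x (m+1)), yh⟫ - ⟪K (xhat m), yh⟫
        - ⟪K (x (m+1)), yseq (m+1)⟫ + ⟪K (xhat m), yseq (m+1)⟫
        = ⟪K (x (m+1)) - K (xhat m), yh - yseq (m+1)⟫ := by
      simp only [inner_sub_left, inner_sub_right]
      ring
    linarith [hy1, hx1, hYoung, e1]
  -- main part
  intro k hk xt hxt yt hyt
  obtain ⟨j, rfl⟩ : ∃ j, k = j+1 := ⟨k-1, (Nat.succ_pred_eq_of_pos hk).symm⟩
  have hxtSf : xt ∈ Sf := hXSf hxt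
  set w : ℕ → EuclideanSpace ℝ (Fin p) :=
    fun m => (τ m)⁻¹ • (x (m+1) - (1-τ m) • x m) with hwdef
  -- the invariant
  have INV : ∀ m : ℕ, ∀ yh ∈ Sg,
      f (x (m+1)) + ⟪K (x (m+1)), yh⟫ - gstar yh - β m/2*‖yh - ydot‖^2
        + (L m + μf)*(τ m)^2/2*‖xt - w m‖^2
      ≤ (f xt + ⟪K xt, ytil (m+1)⟫ - gstar (ytil (m+1)))
        + (τ m)^2*(L 0/2)*‖xt - x 0‖^2 := by
    intro m
    induction m with
    | zero =>
      intro yh hyh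
      have hS := Sstep 0 xt hxtSf yh hyh
      rw [hxhat0] at hS
      have hw0 : w 0 = x 1 := by
        rw [hwdef]; simp [hτ0]
      have hyt1 : ytil 1 = yseq 1 := by
        rw [hytil 0, hτ0]; simp
      rw [hw0, hyt1, hτ0]
      have hd : 0 ≤ β 0/2*‖yseq 1 - ydot‖^2 := by positivity
      norm_num at hS ⊢
      linarith [hS, hd]
    | succ m ih =>
      intro yh hyh
      have hs0 : 0 < τ (m+1) := hτpos (m+1)
      have hs1 : τ (m+1) < 1 := hτlt1 m
      have hsne : τ (m+1) ≠ 0 := ne_of_gt hs0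
      have htne : τ m ≠ 0 := ne_of_gt (hτpos m)
      set z : EuclideanSpace ℝ (Fin p) := (1-τ (m+1))•(x (m+1)) + τ (m+1)•xt with hzdef
      have hzSf : z ∈ Sf :=
        hSf (hxmem (m+1)) hxtSf (by linarith) hs0.le (by ring)
      have hS := Sstep (m+1) z hzSf yh hyh
      have hfz : f z ≤ (1-τ (m+1))*f (x (m+1)) + τ (m+1)*f xt
          - μf/2*(τ (m+1)*(1-τ (m+1))*‖xt - x (m+1)‖^2) := by
        rw [hzdef]
        exact aux_strong Sf f μf hf (hxmem (m+1)) hxtSf hs0.le (hτle1 (m+1))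
      have hKz : ⟪K z, yseq (m+1+1)⟫ = (1-τ (m+1))*⟪K (x (m+1)), yseq (m+1+1)⟫
          + τ (m+1)*⟪K xt, yseq (m+1+1)⟫ := by
        rw [hzdef]
        rw [map_add, map_smul, map_smul, inner_add_left,
          real_inner_smul_left, real_inner_smul_left]
      have hgc : gstar (ytil (m+1+1)) ≤ (1-τ (m+1))*gstar (ytil (m+1))
          + τ (m+1)*gstar (yseq (m+1+1)) := by
        rw [hytil (m+1)]
        have := hgstar.2 (hytmem (m+1)) (hymem (m+1)) (by linarith : (0:ℝ) ≤ 1-τ (m+1))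
          hs0.le (by ring)
        simpa [smul_eq_mul] using this
      have hity : ⟪K xt, ytil (m+1+1)⟫ = (1-τ (m+1))*⟪K xt, ytil (m+1)⟫
          + τ (m+1)*⟪K xt, yseq (m+1+1)⟫ := by
        rw [hytil (m+1), inner_add_right, real_inner_smul_right, real_inner_smul_right]
      have hIH := ih (yseq (m+1+1)) (hymem (m+1))
      have hIH' := mul_le_mul_of_nonneg_left hIH (show (0:ℝ) ≤ 1-τ (m+1) by linarith)
      have hβc : (1-τ (m+1))*(β m) ≤ β (m+1) := by
        rw [hβ m, le_div_iff₀ (by linarith : (0:ℝ) < 1 + τ (m+1))]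
        nlinarith [mul_nonneg (hβpos m).le (sq_nonneg (τ (m+1)))]
      have hβc' : (1-τ (m+1))*(β m)*‖yseq (m+1+1)-ydot‖^2 ≤ β (m+1)*‖yseq (m+1+1)-ydot‖^2 :=
        mul_le_mul_of_nonneg_right hβc (sq_nonneg _)
      have hηrw : η (m+1) = (1-τ m)*(τ m)/((τ m)^2
          + ((L m*(1+τ (m+1))+μf)/(L m+μf))*τ (m+1)) := by
        rw [hη m, hLrec m]
      have hquad := quad_step μf (L m) (τ (m+1)) (τ m) (η (m+1)) (hLnn m) hμf hs0 hs1
        (hτpos m) (hτle1 m) (hτid m)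
        (by linarith [hKey m] : L m*(τ (m+1))^2 ≤ μf) hηrw
        (xt - x (m+1)) (x (m+1) - x m)
      have hv1 : z - xhat (m+1) =
          (τ (m+1)) • ((xt - x (m+1)) - ((η (m+1))/(τ (m+1)))•(x (m+1) - x m)) := by
        rw [hzdef, hxhat m]
        match_scalars <;> field_simp <;> try ring
      have hv2 : z - x (m+1+1) = (τ (m+1)) • (xt - w (m+1)) := by
        rw [hzdef]
        simp only [hwdef]
        match_scalars <;> field_simp <;> try ring
      have hv3 : xt - w m = (xt - x (m+1)) - ((1-τ m)/(τ m))•(x (m+1) - x m) := by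
        simp only [hwdef]
        match_scalars <;> field_simp <;> try ring
      rw [← hv3] at hquad
      have hn2 : ‖z - x (m+1+1)‖^2 = (τ (m+1))^2*‖xt - w (m+1)‖^2 := by
        rw [hv2, aux_sq_smul]
      have hn2' : (L (m+1)+μf)/2*‖z - x (m+1+1)‖^2
          = (L (m+1)+μf)*(τ (m+1))^2/2*‖xt - w (m+1)‖^2 := by
        rw [hn2]; ring
      have hLV : L (m+1)/2*‖z - xhat (m+1)‖^2 =
          (L m*(1+τ (m+1)))*(τ (m+1))^2/2
            *‖(xt - x (m+1)) - ((η (m+1))/(τ (m+1)))•(x (m+1) - x m)‖^2 := by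
        rw [hLrec m, hv1, aux_sq_smul]
        ring
      have hid' : (1-τ (m+1))*((τ m)^2*((L 0/2)*‖xt - x 0‖^2))
          = (τ (m+1))^2*((L 0/2)*‖xt - x 0‖^2) := by
        linear_combination (-((L 0/2)*‖xt - x 0‖^2)) * hτid m
      linarith [hS, hfz, hKz, hgc, hity, hIH', hβc', hquad, hn2', hLV, hid']
  -- conclusion
  have hINV := INV j yt (hYSg hyt)
  have hττ : ∀ i:ℕ, (τ i)^2*((i:ℝ)+2)^2 ≤ 4 := by
    intro i
    cases i with
    | zero => rw [hτ0]; norm_num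
    | succ i0 =>
      have h := hτub i0
      have hd : (0:ℝ) < (i0:ℝ)+1+Real.sqrt 5 := by positivity
      have h3 : τ (i0+1)*((i0:ℝ)+1+Real.sqrt 5) ≤ 2 := (le_div_iff₀ hd).mp h
      have h2 : τ (i0+1)*((i0:ℝ)+1+2) ≤ 2 := by nlinarith [hτpos (i0+1), halb]
      have h4 : 0 ≤ τ (i0+1)*((i0:ℝ)+1+2) :=
        mul_nonneg (hτpos (i0+1)).le (by positivity)
      push_cast
      nlinarith [mul_le_mul h2 h2 h4 (by norm_num : (0:ℝ) ≤ 2)]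
  have hββ : ∀ i:ℕ, β i*((i:ℝ)+4)^2 ≤ 20*β 0 := by
    intro i
    cases i with
    | zero => norm_num; nlinarith [hβ0]
    | succ i0 =>
      have hJj := hJ (i0+1)
      have hub := hτub i0
      push_cast at hJj ⊢
      set r : ℝ := (i0:ℝ)+1 with hrdef
      have hr0 : (0:ℝ) ≤ r := by rw [hrdef]; positivity
      have hda : (0:ℝ) < r + Real.sqrt 5 := by positivity
      have hdm : (0:ℝ) < r + Real.sqrt 5 - 1 := by nlinarith
      have hd1 : (0:ℝ) < r + Real.sqrt 5 + 1 := by positivity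
      have hd2 : (0:ℝ) < r + Real.sqrt 5 + 2 := by positivity
      have hc1p : (0:ℝ) < (Real.sqrt 5 - 1)*Real.sqrt 5 := by nlinarith
      have hc2p : (0:ℝ) < (Real.sqrt 5 + 1)*(Real.sqrt 5 + 2) := by nlinarith
      have hτj2 : (τ (i0+1))^2*(r+Real.sqrt 5)^2 ≤ 4 := by
        have h3 : τ (i0+1)*(r+Real.sqrt 5) ≤ 2 := (le_div_iff₀ hda).mp hub
        have h4 : 0 ≤ τ (i0+1)*(r+Real.sqrt 5) := mul_nonneg (hτpos (i0+1)).le hda.le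
        nlinarith [mul_le_mul h3 h3 h4 (by norm_num : (0:ℝ) ≤ 2)]
      have hpoly := poly_ineq (Real.sqrt 5) r ha2 halb haub hr0
      have hposall : (0:ℝ) < (Real.sqrt 5-1)*Real.sqrt 5*(r+Real.sqrt 5+1)*(r+Real.sqrt 5+2)*(r+Real.sqrt 5) :=
        mul_pos (mul_pos (mul_pos hc1p hd1) hd2) hda
      have haux : (0:ℝ) ≤ β 0*((Real.sqrt 5+1)*(Real.sqrt 5+2)*(r+Real.sqrt 5-1)*(r+4)^2) :=
        mul_nonneg hβ0.le (mul_nonneg (mul_nonneg hc2p.le hdm.le) (sq_nonneg _))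
      apply le_of_mul_le_mul_right _ hposall
      calc β (i0+1)*(r+4)^2*((Real.sqrt 5-1)*Real.sqrt 5*(r+Real.sqrt 5+1)*(r+Real.sqrt 5+2)*(r+Real.sqrt 5))
          = (β (i0+1)*((Real.sqrt 5-1)*Real.sqrt 5*(r+Real.sqrt 5+1)*(r+Real.sqrt 5+2)))
            *((r+4)^2*(r+Real.sqrt 5)) := by ring
        _ ≤ (β 0*(τ (i0+1))^2*((Real.sqrt 5+1)*(Real.sqrt 5+2)*(r+Real.sqrt 5-1)*(r+Real.sqrt 5)))
            *((r+4)^2*(r+Real.sqrt 5)) := by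
            apply mul_le_mul_of_nonneg_right hJj
            positivity
        _ = (β 0*((Real.sqrt 5+1)*(Real.sqrt 5+2)*(r+Real.sqrt 5-1)*(r+4)^2))
            *((τ (i0+1))^2*(r+Real.sqrt 5)^2) := by ring
        _ ≤ (β 0*((Real.sqrt 5+1)*(Real.sqrt 5+2)*(r+Real.sqrt 5-1)*(r+4)^2))*4 :=
            mul_le_mul_of_nonneg_left hτj2 haux
        _ = β 0*(4*(Real.sqrt 5+1)*(Real.sqrt 5+2)*(r+Real.sqrt 5-1)*(r+4)^2) := by ring
        _ ≤ β 0*(20*(Real.sqrt 5-1)*Real.sqrt 5*(r+Real.sqrt 5)*(r+Real.sqrt 5+1)*(r+Real.sqrt 5+2)) :=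
            mul_le_mul_of_nonneg_left hpoly hβ0.le
        _ = 20*β 0*((Real.sqrt 5-1)*Real.sqrt 5*(r+Real.sqrt 5+1)*(r+Real.sqrt 5+2)*(r+Real.sqrt 5)) := by
            ring
  -- final assembly
  have hSx : ‖x 0 - xt‖^2 ≤ sSup ((fun x' => ‖x 0 - x'‖^2) '' X) :=
    le_csSup hXb ⟨xt, hxt, rfl⟩
  have hSy : ‖ydot - yt‖^2 ≤ sSup ((fun y' => ‖ydot - y'‖^2) '' Y) :=
    le_csSup hYb ⟨yt, hyt, rfl⟩
  have hSx0 : (0:ℝ) ≤ sSup ((fun x' => ‖x 0 - x'‖^2) '' X) := le_trans (sq_nonneg _) hSx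
  have hSy0 : (0:ℝ) ≤ sSup ((fun y' => ‖ydot - y'‖^2) '' Y) := le_trans (sq_nonneg _) hSy
  have hflip : ‖xt - x 0‖^2 = ‖x 0 - xt‖^2 := by rw [norm_sub_rev]
  have hflip2 : ‖yt - ydot‖^2 = ‖ydot - yt‖^2 := by rw [norm_sub_rev]
  have hcoef1 : (τ j)^2*(L 0/2) ≤ 2*‖K‖^2/(β 0*((j:ℝ)+2)^2) := by
    rw [hL 0, le_div_iff₀ (by positivity : (0:ℝ) < β 0*((j:ℝ)+2)^2)]
    have e : (τ j)^2*(‖K‖^2/β 0/2)*(β 0*((j:ℝ)+2)^2) = ((τ j)^2*((j:ℝ)+2)^2)*(‖K‖^2/2) := by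
      field_simp
    rw [e]
    calc ((τ j)^2*((j:ℝ)+2)^2)*(‖K‖^2/2) ≤ 4*(‖K‖^2/2) :=
          mul_le_mul_of_nonneg_right (hττ j) (by positivity)
      _ = 2*‖K‖^2 := by ring
  have hcoef2 : β j/2 ≤ 10*β 0/(((j:ℝ)+4)^2) := by
    rw [div_le_div_iff₀ (by norm_num : (0:ℝ) < 2) (by positivity : (0:ℝ) < ((j:ℝ)+4)^2)]
    nlinarith [hββ j]
  have hdrop : 0 ≤ (L j+μf)*(τ j)^2/2*‖xt - w j‖^2 :=
    mul_nonneg (div_nonneg (mul_nonneg (by linarith [hLnn j] : (0:ℝ) ≤ L j+μf)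
      (sq_nonneg _)) (by norm_num)) (sq_nonneg _)
  have hc1 : (τ j)^2*(L 0/2)*‖xt - x 0‖^2 ≤
      2*‖K‖^2/(β 0*((j:ℝ)+2)^2)*sSup ((fun x' => ‖x 0 - x'‖^2) '' X) := by
    have hn0 : 0 ≤ (τ j)^2*(L 0/2) := mul_nonneg (sq_nonneg _) (by linarith [hLnn 0])
    calc (τ j)^2*(L 0/2)*‖xt - x 0‖^2 ≤ (τ j)^2*(L 0/2)*sSup ((fun x' => ‖x 0 - x'‖^2) '' X) := by
          apply mul_le_mul_of_nonneg_left _ hn0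
          rw [hflip]; exact hSx
      _ ≤ 2*‖K‖^2/(β 0*((j:ℝ)+2)^2)*sSup ((fun x' => ‖x 0 - x'‖^2) '' X) :=
          mul_le_mul_of_nonneg_right hcoef1 hSx0
  have hc2 : β j/2*‖yt - ydot‖^2 ≤
      10*β 0/(((j:ℝ)+4)^2)*sSup ((fun y' => ‖ydot - y'‖^2) '' Y) := by
    calc β j/2*‖yt - ydot‖^2 ≤ β j/2*sSup ((fun y' => ‖ydot - y'‖^2) '' Y) := by
          apply mul_le_mul_of_nonneg_left _ (by linarith [hβpos j] : (0:ℝ) ≤ β j/2)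
          rw [hflip2]; exact hSy
      _ ≤ 10*β 0/(((j:ℝ)+4)^2)*sSup ((fun y' => ‖ydot - y'‖^2) '' Y) :=
          mul_le_mul_of_nonneg_right hcoef2 hSy0
  have e21 : (((j+1):ℕ):ℝ)+1 = (j:ℝ)+2 := by push_cast; ring
  have e43 : (((j+1):ℕ):ℝ)+3 = (j:ℝ)+4 := by push_cast; ring
  rw [e21, e43]
  linarith [hINV, hdrop, hc1, hc2]
end
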